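/- arXiv:2303.03618 — 4 statements merged into one kernel-verified Lean document; each statement's English description precedes it below -/
import Mathlib

section
/- Let W be a Coxeter group. For any w, u ∈ W, the Bruhat lower interval of the Demazure product satisfies [e, w ⋆ u] = { a·b : a ∈ [e, w], b ∈ [e, u] }, where [e, x] denotes the set of elements ≤ x in Bruhat order and a·b is the ordinary group product. -/
/-!
STATEMENT 1: Let `W` be a Coxeter group.  For any `w, u ∈ W`, the Bruhat lower
interval of the Demazure product satisfies
`[e, w ⋆ u] = { a * b : a ∈ [e, w], b ∈ [e, u] }`.

The Demazure product is encoded as an arbitrary associative product `star` with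
unit `1` satisfying the defining rule on simple generators, and the Bruhat
order is the reflexive-transitive closure of the relation `a → a * t` for
reflections `t` with `ℓ(a) < ℓ(a * t)`.
-/

/-- The Bruhat order on a Coxeter group. -/
def CoxeterSystem.bruhatLE {B : Type*} {W : Type*} [Group W] {M : CoxeterMatrix B}
    (cs : CoxeterSystem M W) (u w : W) : Prop :=
  Relation.ReflTransGen
    (fun a b => ∃ t : W, cs.IsReflection t ∧ b = a * t ∧ cs.length a < cs.length b) u w

open CoxeterSystem List

namespace DemazureAux

variable {B : Type*} {W : Type*} [Group W] {M : CoxeterMatrix B}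

abbrev Sgn : Type := Multiplicative (ZMod 2)

def sg : Sgn := Multiplicative.ofAdd 1

lemma sg_ne_one : sg ≠ 1 := by decide

lemma sgn_sq (y : Sgn) : y * y = 1 := by revert y; decide

lemma sgn_cases (y : Sgn) : y = 1 ∨ y = sg := by revert y; decide

def conjAct (w : W) : (W → Sgn) ≃* (W → Sgn) where
  toFun f := fun t => f (w⁻¹ * t * w)
  invFun f := fun t => f (w * t * w⁻¹)
  left_inv f := by funext t; group
  right_inv f := by funext t; group
  map_mul' f g := rfl

def phi : W →* MulAut (W → Sgn) where
  toFun := conjAct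
  map_one' := by
    ext f t
    simp [conjAct]
  map_mul' w₁ w₂ := by
    ext f t
    simp [conjAct, mul_assoc]

lemma phi_apply (w : W) (f : W → Sgn) (t : W) : phi w f t = f (w⁻¹ * t * w) := rfl

lemma sdp_pow {N G : Type*} [CommGroup N] [Group G] (φ : G →* MulAut N)
    (a : N ⋊[φ] G) (m : ℕ) :
    a ^ m = ⟨∏ k ∈ Finset.range m, φ (a.right ^ k) a.left, a.right ^ m⟩ := by
  induction m with
  | zero => ext <;> simp
  | succ m ih =>
    rw [pow_succ, ih]
    ext
    · rw [SemidirectProduct.mul_left, Finset.prod_range_succ]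
    · rw [SemidirectProduct.mul_right, pow_succ]

lemma prod_pair (G : ℕ → Sgn) (m : ℕ) :
    ∏ k ∈ Finset.range m, (G (2 * k) * G (2 * k + 1)) = ∏ r ∈ Finset.range (2 * m), G r := by
  induction m with
  | zero => simp
  | succ m ih =>
    rw [Finset.prod_range_succ, ih, Nat.mul_succ, Finset.prod_range_succ,
      Finset.prod_range_succ, mul_assoc]

variable (cs : CoxeterSystem M W)

local prefix:100 "s" => cs.simple
local prefix:100 "π" => cs.wordProd
local prefix:100 "ℓ" => cs.length

open scoped Classical in
noncomputable def delta (i : B) : W → Sgn := fun t => if t = cs.simple i then sg else 1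

lemma simple_mul_rho_inv_pow (i j : B) (k : ℕ) :
    s i * ((s i * s j)⁻¹) ^ k = (s i * s j) ^ k * s i := by
  induction k with
  | zero => simp
  | succ k ih =>
    have key : s i * (s i * s j)⁻¹ = (s i * s j) * s i := by
      rw [mul_inv_rev, cs.inv_simple, cs.inv_simple, mul_assoc]
    rw [pow_succ, ← mul_assoc, ih, mul_assoc, key, pow_succ]
    group

lemma rho_pow_simple (i j : B) (k : ℕ) :
    (s i * s j) ^ k * s i * ((s i * s j) ^ k)⁻¹ = (s i * s j) ^ (2 * k) * s i := by
  rw [mul_assoc, ← inv_pow, simple_mul_rho_inv_pow, two_mul, pow_add, mul_assoc]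

lemma conj_aux {G : Type*} [Group G] (a x : G) (k : ℕ) :
    a ^ k * (a * x) * (a ^ k)⁻¹ = a * (a ^ k * x * (a ^ k)⁻¹) := by
  rw [← mul_assoc, ← mul_assoc, ← mul_assoc, ← pow_succ, ← pow_succ']

lemma rho_pow_simple' (i j : B) (k : ℕ) :
    (s i * s j) ^ k * (s i * s j * s i) * ((s i * s j) ^ k)⁻¹
      = (s i * s j) ^ (2 * k + 1) * s i := by
  have h0 : (s i * s j) ^ k * (s i * s j * s i) * ((s i * s j) ^ k)⁻¹
      = (s i * s j) ^ k * ((s i * s j) * s i) * ((s i * s j) ^ k)⁻¹ := by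
    rw [mul_assoc (s i)]
  rw [h0, conj_aux, rho_pow_simple, ← mul_assoc, ← pow_succ']

end DemazureAux

namespace Part3

variable {B : Type*} {W : Type*} [Group W] {M : CoxeterMatrix B}
variable (cs : CoxeterSystem M W)

local prefix:100 "s" => cs.simple
local prefix:100 "π" => cs.wordProd
local prefix:100 "ℓ" => cs.length

lemma conj_eq_iff {G : Type*} [Group G] (g a b : G) : g⁻¹ * a * g = b ↔ a = g * b * g⁻¹ := by
  constructor <;> intro h
  · rw [← h]; group
  · rw [h]; group

open scoped Classical in
lemma isLiftable :
    M.IsLiftable (fun i : B => (⟨DemazureAux.delta cs i, cs.simple i⟩ :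
      (W → DemazureAux.Sgn) ⋊[DemazureAux.phi] W)) := by
  intro i j
  rw [DemazureAux.sdp_pow]
  have hR : ((⟨DemazureAux.delta cs i, s i⟩ : (W → DemazureAux.Sgn) ⋊[DemazureAux.phi] W)
      * ⟨DemazureAux.delta cs j, s j⟩).right = s i * s j := rfl
  have hL : ((⟨DemazureAux.delta cs i, s i⟩ : (W → DemazureAux.Sgn) ⋊[DemazureAux.phi] W)
      * ⟨DemazureAux.delta cs j, s j⟩).left
      = DemazureAux.delta cs i * DemazureAux.phi (s i) (DemazureAux.delta cs j) := rfl
  rw [hR, hL]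
  have hrho : (s i * s j) ^ (M i j) = 1 := cs.simple_mul_simple_pow i j
  have hP : (∏ k ∈ Finset.range (M i j),
      DemazureAux.phi ((s i * s j) ^ k)
        (DemazureAux.delta cs i * DemazureAux.phi (s i) (DemazureAux.delta cs j)))
      = (1 : W → DemazureAux.Sgn) := by
    funext t
    rw [Finset.prod_apply]
    have hterm : ∀ k, (DemazureAux.phi ((s i * s j) ^ k)
        (DemazureAux.delta cs i * DemazureAux.phi (s i) (DemazureAux.delta cs j))) t
        = (if t = (s i * s j) ^ (2*k) * s i then DemazureAux.sg else 1)
          * (if t = (s i * s j) ^ (2*k+1) * s i then DemazureAux.sg else 1) := by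
      intro k
      rw [DemazureAux.phi_apply, Pi.mul_apply, DemazureAux.phi_apply]
      unfold DemazureAux.delta
      congr 1
      · simp only [conj_eq_iff, DemazureAux.rho_pow_simple cs]
      · simp only [conj_eq_iff]
        simp only [cs.inv_simple]
        simp only [DemazureAux.rho_pow_simple' cs]
    rw [Finset.prod_congr rfl (fun k _ => hterm k)]
    rw [DemazureAux.prod_pair (fun r => if t = (s i * s j) ^ r * s i then DemazureAux.sg else 1)]
    rw [two_mul, Finset.prod_range_add]
    have hper : ∀ r : ℕ, (if t = (s i * s j) ^ (M i j + r) * s i then DemazureAux.sg else 1)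
        = (if t = (s i * s j) ^ r * s i then DemazureAux.sg else 1) := by
      intro r
      rw [pow_add, hrho, one_mul]
    rw [Finset.prod_congr rfl (fun r _ => hper r)]
    exact DemazureAux.sgn_sq _
  rw [hP, hrho]
  rfl

noncomputable def nuHom : W →* (W → DemazureAux.Sgn) ⋊[DemazureAux.phi] W :=
  cs.lift ⟨fun i => ⟨DemazureAux.delta cs i, cs.simple i⟩, isLiftable cs⟩

noncomputable def nu (w : W) : W → DemazureAux.Sgn := (nuHom cs w).left

lemma nuHom_simple (i : B) : nuHom cs (s i) = ⟨DemazureAux.delta cs i, s i⟩ :=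
  cs.lift_apply_simple _ i

lemma nuHom_right (w : W) : (nuHom cs w).right = w := by
  have h : SemidirectProduct.rightHom.comp (nuHom cs) = MonoidHom.id W := by
    apply cs.ext_simple
    intro i
    rw [MonoidHom.comp_apply, nuHom_simple]
    rfl
  exact DFunLike.congr_fun h w

lemma nu_mul (a b t : W) : nu cs (a * b) t = nu cs a t * nu cs b (a⁻¹ * t * a) := by
  unfold nu
  rw [map_mul, SemidirectProduct.mul_left, Pi.mul_apply, nuHom_right, DemazureAux.phi_apply]

lemma nu_one (t : W) : nu cs 1 t = 1 := by
  unfold nu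
  rw [map_one]
  rfl

lemma nu_simple (i : B) (t : W) : nu cs (s i) t = DemazureAux.delta cs i t := by
  unfold nu
  rw [nuHom_simple]

end Part3

namespace Part4

open DemazureAux Part3

variable {B : Type*} {W : Type*} [Group W] {M : CoxeterMatrix B}
variable (cs : CoxeterSystem M W)

local prefix:100 "s" => cs.simple
local prefix:100 "π" => cs.wordProd
local prefix:100 "ℓ" => cs.length

open scoped Classical in
lemma nu_wordProd (ω : List B) (t : W) :
    nu cs (π ω) t = sg ^ (List.count t (cs.leftInvSeq ω)) := by
  induction ω generalizing t with
  | nil =>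
    rw [cs.wordProd_nil]
    simp [nu_one]
  | cons i ω ih =>
    rw [cs.wordProd_cons, nu_mul, nu_simple, cs.inv_simple]
    have hlis : cs.leftInvSeq (i :: ω) = s i :: List.map (⇑(MulAut.conj (s i))) (cs.leftInvSeq ω) := rfl
    rw [hlis, ih, List.count_cons]
    have hconj : (MulAut.conj (s i)) (s i * t * s i) = t := by
      rw [MulAut.conj_apply, cs.inv_simple]
      simp [mul_assoc, cs.simple_mul_simple_cancel_left, cs.simple_mul_simple_self]
    have hmap : List.count t (List.map (⇑(MulAut.conj (s i))) (cs.leftInvSeq ω))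
        = List.count (s i * t * s i) (cs.leftInvSeq ω) := by
      conv_lhs => rw [← hconj]
      rw [List.count_map_of_injective _ _ (MulAut.conj (s i)).injective]
    rw [hmap, pow_add]
    unfold delta
    rw [mul_comm]
    congr 1
    by_cases h : t = s i
    · rw [if_pos h, if_pos (by simp [h]), pow_one]
    · rw [if_neg h, if_neg (by simp only [beq_iff_eq]; exact fun hh => h hh.symm), pow_zero]

end Part4

namespace Part4

variable {B : Type*} {W : Type*} [Group W] {M : CoxeterMatrix B}
variable (cs : CoxeterSystem M W)

local prefix:100 "s" => cs.simple
local prefix:100 "π" => cs.wordProd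
local prefix:100 "ℓ" => cs.length

open DemazureAux Part3

lemma mem_leftInvSeq_of_nu {ω : List B} {t : W} (h : nu cs (π ω) t = sg) :
    t ∈ cs.leftInvSeq ω := by
  classical
  by_contra hmem
  rw [nu_wordProd, List.count_eq_zero_of_not_mem hmem, pow_zero] at h
  exact sg_ne_one h.symm

lemma nu_reflection_self {t : W} (ht : cs.IsReflection t) : nu cs t t = sg := by
  obtain ⟨w, i, rfl⟩ := ht
  set t := w * s i * w⁻¹ with hts
  have hconj : w⁻¹ * t * w = s i := by rw [hts]; group
  have hinv : nu cs w t * nu cs w⁻¹ (w⁻¹ * t * w) = 1 := by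
    rw [← nu_mul, mul_inv_cancel, nu_one]
  have hteq : t = w * (s i * w⁻¹) := by rw [hts]; group
  have hsplit := nu_mul cs w (s i * w⁻¹) t
  rw [← hteq] at hsplit
  rw [hsplit, hconj, nu_mul, nu_simple, cs.inv_simple]
  unfold delta
  rw [if_pos rfl]
  have : s i * s i * s i = s i := by
    rw [cs.simple_mul_simple_self, one_mul]
  rw [this]
  rw [hconj] at hinv
  calc nu cs w t * (sg * nu cs w⁻¹ (s i))
      = sg * (nu cs w t * nu cs w⁻¹ (s i)) := by
        rw [← mul_assoc, mul_comm (nu cs w t) sg, mul_assoc]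
    _ = sg := by rw [hinv, mul_one]

lemma nu_of_inversion {t w : W} (ht : cs.IsReflection t) (h : ℓ (t * w) < ℓ w) :
    nu cs w t = sg := by
  rcases sgn_cases (nu cs w t) with h1 | h1
  · exfalso
    have hw : w = t * (t * w) := by rw [← mul_assoc, ht.mul_self, one_mul]
    have h2 : nu cs (t * (t * w)) t = nu cs t t * nu cs (t * w) (t⁻¹ * t * t) := nu_mul ..
    rw [← hw, h1, nu_reflection_self cs ht] at h2
    have h3 : t⁻¹ * t * t = t := by group
    rw [h3] at h2
    have h4 : nu cs (t * w) t = sg := by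
      rcases sgn_cases (nu cs (t * w) t) with h5 | h5
      · rw [h5, mul_one] at h2; exact absurd h2.symm sg_ne_one
      · exact h5
    -- now t is a left inversion of t * w, contradiction
    obtain ⟨σ, hσred, hσprod⟩ := cs.exists_reduced_word' (t * w)
    rw [hσprod] at h4
    have hmem := mem_leftInvSeq_of_nu cs h4
    have := (cs.isLeftInversion_of_mem_leftInvSeq hσred hmem).2
    rw [← hσprod, ← mul_assoc, ht.mul_self, one_mul] at this
    omega
  · exact h1

lemma exchange_left {ω : List B} (hred : cs.IsReduced ω) {t : W} (ht : cs.IsReflection t)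
    (h : ℓ (t * π ω) < ℓ (π ω)) :
    ∃ j < ω.length, t * π ω = π (ω.eraseIdx j) := by
  have hmem : t ∈ cs.leftInvSeq ω := mem_leftInvSeq_of_nu cs (nu_of_inversion cs ht h)
  obtain ⟨j, hj, hjt⟩ := List.mem_iff_getElem.mp hmem
  have hj' : j < ω.length := by rwa [cs.length_leftInvSeq] at hj
  refine ⟨j, hj', ?_⟩
  have := cs.getD_leftInvSeq_mul_wordProd ω j
  rwa [List.getD_eq_getElem _ _ hj, hjt] at this

lemma deletion : ∀ (n : ℕ) (ω : List B), ω.length ≤ n →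
    ∃ τ, τ <+ ω ∧ cs.IsReduced τ ∧ π τ = π ω := by
  intro n
  induction n with
  | zero =>
    intro ω hω
    rw [Nat.le_zero, List.length_eq_zero_iff] at hω
    exact ⟨ω, List.Sublist.refl ω, by simp [hω, CoxeterSystem.IsReduced], rfl⟩
  | succ n ih =>
    intro ω hω
    match ω with
    | [] => exact ⟨[], List.Sublist.refl [], by simp [CoxeterSystem.IsReduced], rfl⟩
    | i :: σ =>
      have hσ : σ.length ≤ n := by simpa using hω
      obtain ⟨τ, hsub, hred, hprod⟩ := ih σ hσ
      rcases cs.length_simple_mul (π σ) i with hup | hdown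
      · refine ⟨i :: τ, hsub.cons₂ i, ?_, ?_⟩
        · have hlen : τ.length = ℓ (π σ) := by rw [← hred, hprod]
          unfold CoxeterSystem.IsReduced
          rw [cs.wordProd_cons, hprod, hup, List.length_cons, hlen]
        · rw [cs.wordProd_cons, cs.wordProd_cons, hprod]
      · have hlt : ℓ (s i * π τ) < ℓ (π τ) := by
          rw [hprod]
          omega
        obtain ⟨j, hjlt, hje⟩ := exchange_left cs hred (cs.isReflection_simple i) hlt
        have hlen2 : (τ.eraseIdx j).length ≤ n :=
          le_trans (List.Sublist.length_le (List.eraseIdx_sublist τ j)) (le_trans (List.Sublist.length_le hsub) hσ)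
        obtain ⟨τ', hsub', hred', hprod'⟩ := ih (τ.eraseIdx j) hlen2
        refine ⟨τ', ?_, hred', ?_⟩
        · exact hsub'.trans ((List.eraseIdx_sublist τ j).trans (hsub.trans (List.sublist_cons_self i σ)))
        · rw [hprod', ← hje, hprod, cs.wordProd_cons]

end Part4


namespace Part5

variable {B : Type*} {W : Type*} [Group W] {M : CoxeterMatrix B}
variable (cs : CoxeterSystem M W)

local prefix:100 "s" => cs.simple
local prefix:100 "π" => cs.wordProd
local prefix:100 "ℓ" => cs.length

open DemazureAux Part3 Part4

lemma bruhat_refl (w : W) : cs.bruhatLE w w := Relation.ReflTransGen.refl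

lemma bruhat_trans {u v w : W} (h1 : cs.bruhatLE u v) (h2 : cs.bruhatLE v w) :
    cs.bruhatLE u w := Relation.ReflTransGen.trans h1 h2

lemma bruhat_step_right {w t : W} (ht : cs.IsReflection t) (h : ℓ w < ℓ (w * t)) :
    cs.bruhatLE w (w * t) :=
  Relation.ReflTransGen.single ⟨t, ht, rfl, h⟩

lemma bruhat_step_left {w t : W} (ht : cs.IsReflection t) (h : ℓ w < ℓ (t * w)) :
    cs.bruhatLE w (t * w) := by
  have h2 : t * w = w * (w⁻¹ * t * w) := by group
  have hr : cs.IsReflection (w⁻¹ * t * w) := by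
    have := ht.conj w⁻¹
    rwa [inv_inv] at this
  rw [h2]
  exact bruhat_step_right cs hr (by rw [← h2]; exact h)

lemma bruhat_le_of_left_descent {w t : W} (ht : cs.IsReflection t) (h : ℓ (t * w) < ℓ w) :
    cs.bruhatLE (t * w) w := by
  have hw : w = t * (t * w) := by rw [← mul_assoc, ht.mul_self, one_mul]
  have := bruhat_step_left cs (w := t * w) ht (by rw [← hw]; exact h)
  rwa [← hw] at this

lemma bruhat_length_le {u w : W} (h : cs.bruhatLE u w) : ℓ u ≤ ℓ w := by
  induction h with
  | refl => exact le_rfl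
  | tail hbc h ih =>
    obtain ⟨t, _, rfl, hlen⟩ := h
    exact le_trans ih (le_of_lt hlen)

lemma bruhat_eq_one {u : W} (h : cs.bruhatLE u 1) : u = 1 := by
  have := bruhat_length_le cs h
  rw [cs.length_one, Nat.le_zero, cs.length_eq_zero_iff] at this
  exact this

lemma le_subword {ω : List B} (hω : cs.IsReduced ω) {x : W} (h : cs.bruhatLE x (π ω)) :
    ∃ τ, τ <+ ω ∧ cs.IsReduced τ ∧ π τ = x := by
  induction h using Relation.ReflTransGen.head_induction_on with
  | refl => exact ⟨ω, List.Sublist.refl ω, hω, rfl⟩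
  | head hstep _ ih =>
    obtain ⟨τb, hsub, hred, hπ⟩ := ih
    obtain ⟨t, ht, hb, hlen⟩ := hstep
    rename_i a b _
    have hab : a = (b * t * b⁻¹) * b := by
      have : a = b * t := by rw [hb, mul_assoc, ht.mul_self, mul_one]
      rw [this]; group
    have ht' : cs.IsReflection (b * t * b⁻¹) := ht.conj b
    have hlt : ℓ ((b * t * b⁻¹) * π τb) < ℓ (π τb) := by
      rw [hπ, ← hab]
      rw [hb] at hlen ⊢
      exact hlen
    obtain ⟨j, hjlt, hje⟩ := exchange_left cs hred ht' hlt
    obtain ⟨τ, hsub', hred', hprod'⟩ := deletion cs (τb.eraseIdx j).length (τb.eraseIdx j) le_rfl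
    refine ⟨τ, hsub'.trans ((List.eraseIdx_sublist τb j).trans hsub), hred', ?_⟩
    rw [hprod', ← hje, hπ, ← hab]

/-- The "Demazure step" on the left. -/
noncomputable def dL (i : B) (v : W) : W :=
  if cs.length v < cs.length (cs.simple i * v) then cs.simple i * v else v

lemma bruhat_le_dL (i : B) (v : W) : cs.bruhatLE v (dL cs i v) := by
  unfold dL
  split_ifs with h
  · exact bruhat_step_left cs (cs.isReflection_simple i) h
  · exact bruhat_refl cs v

end Part5

namespace Part6

variable {B : Type*} {W : Type*} [Group W] {M : CoxeterMatrix B}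
variable (cs : CoxeterSystem M W)

local prefix:100 "s" => cs.simple
local prefix:100 "π" => cs.wordProd
local prefix:100 "ℓ" => cs.length

open DemazureAux Part3 Part4 Part5

lemma mutual_induction : ∀ n : ℕ,
    (∀ ω : List B, cs.IsReduced ω → ω.length ≤ n →
      ∀ ω', ω' <+ ω → cs.bruhatLE (π ω') (π ω)) ∧
    (∀ z : W, ℓ z ≤ n → ∀ y : W, cs.bruhatLE y z →
      ∀ i : B, cs.bruhatLE (s i * y) (dL cs i z)) := by
  intro n
  induction n with
  | zero =>
    constructor
    · intro ω _ hlen ω' hsub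
      rw [Nat.le_zero, List.length_eq_zero_iff] at hlen
      subst hlen
      rw [List.sublist_nil] at hsub
      subst hsub
      exact bruhat_refl cs _
    · intro z hz y hy i
      rw [Nat.le_zero, cs.length_eq_zero_iff] at hz
      subst hz
      have hy1 := bruhat_eq_one cs hy
      subst hy1
      rw [mul_one]
      have : ℓ (1 : W) < ℓ (s i * 1) := by
        rw [mul_one, cs.length_one, cs.length_simple]
        omega
      unfold dL
      rw [if_pos this, mul_one]
      exact bruhat_refl cs _
  | succ n ih =>
    obtain ⟨ih1, ih2⟩ := ih
    have A2 : ∀ z : W, ℓ z ≤ n + 1 → ∀ y : W, cs.bruhatLE y z →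
        ∀ i : B, cs.bruhatLE (s i * y) (dL cs i z) := by
      intro z hz y hy i
      rcases Relation.ReflTransGen.cases_tail hy with heq | ⟨z', hyz', hstep⟩
      · -- z = y
        subst heq
        unfold dL
        split_ifs with hasc
        · exact bruhat_refl cs _
        · have hne := cs.length_simple_mul_ne z i
          have hdesc : ℓ (s i * z) < ℓ z := by omega
          exact bruhat_le_of_left_descent cs (cs.isReflection_simple i) hdesc
      · obtain ⟨t, ht, hzz, hlen⟩ := hstep
        have hz' : ℓ z' ≤ n := by omega
        have h1 := ih2 z' hz' y hyz' i
        refine bruhat_trans cs h1 ?_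
        by_cases hA : ℓ z' < ℓ (s i * z')
        · by_cases hB : ℓ z < ℓ (s i * z)
          · -- both ascents : s i * z = (s i * z') * t
            have hdl1 : dL cs i z' = s i * z' := by unfold dL; rw [if_pos hA]
            have hdl2 : dL cs i z = s i * z := by unfold dL; rw [if_pos hB]
            have hup1 : ℓ (s i * z') ≤ ℓ z' + 1 := by
              have := cs.length_mul_le (s i) z'
              rwa [cs.length_simple, add_comm] at this
            have hre : s i * z' * t = s i * z := by rw [mul_assoc, ← hzz]
            have hlt2 : ℓ (s i * z') < ℓ (s i * z' * t) := by rw [hre]; omega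
            rw [hdl1, hdl2, ← hre]
            exact bruhat_step_right cs ht hlt2
          · -- hard case : ascent at z', descent at z
            have hne := cs.length_simple_mul_ne z i
            have hdesc : ℓ (s i * z) < ℓ z := by omega
            have hdl1 : dL cs i z' = s i * z' := by unfold dL; rw [if_pos hA]
            have hdl2 : dL cs i z = z := by unfold dL; rw [if_neg hB]
            rw [hdl1, hdl2]
            obtain ⟨σz, hσred, hσprod⟩ := cs.exists_reduced_word' (s i * z)
            have hπcons : π (i :: σz) = z := by
              rw [cs.wordProd_cons, ← hσprod, ← mul_assoc, cs.simple_mul_simple_self, one_mul]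
            have hdisj := cs.length_simple_mul z i
            have hlen_z : ℓ (s i * z) + 1 = ℓ z := by omega
            have hconsred : cs.IsReduced (i :: σz) := by
              unfold CoxeterSystem.IsReduced
              rw [hπcons, List.length_cons, ← hσred, ← hσprod]
              omega
            -- z' = t' * z with t' reflection
            have ht' : cs.IsReflection (z * t * z⁻¹) := ht.conj z
            have htz : (z * t * z⁻¹) * z = z' := by
              rw [mul_assoc, inv_mul_cancel, mul_one, hzz, mul_assoc, ht.mul_self, mul_one]
            obtain ⟨j, hjlt, hje⟩ := exchange_left cs hconsred ht'
              (by rw [hπcons, htz]; exact hlen)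
            have hje' : z' = π ((i :: σz).eraseIdx j) := by rw [← hje, hπcons, htz]
            match j with
            | 0 =>
              simp only [List.eraseIdx_cons_zero] at hje'
              have hfin : s i * z' = z := by
                rw [hje', ← hσprod, ← mul_assoc, cs.simple_mul_simple_self, one_mul]
              rw [hfin]
              exact bruhat_refl cs z
            | Nat.succ k =>
              simp only [List.eraseIdx_cons_succ] at hje'
              rw [cs.wordProd_cons] at hje'
              have hsz : s i * z' = π (σz.eraseIdx k) := by
                rw [hje', ← mul_assoc, cs.simple_mul_simple_self, one_mul]
              rw [hsz]
              have hσzlen : σz.length ≤ n := by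
                have h5 : ℓ (π σz) = σz.length := hσred
                rw [← hσprod] at h5
                omega
              refine bruhat_trans cs
                (ih1 σz hσred hσzlen _ (List.eraseIdx_sublist σz k)) ?_
              rw [← hσprod]
              exact bruhat_le_of_left_descent cs (cs.isReflection_simple i) hdesc
        · -- descent at z' : dL i z' = z'
          have hdl1 : dL cs i z' = z' := by unfold dL; rw [if_neg hA]
          rw [hdl1]
          refine bruhat_trans cs ?_ (bruhat_le_dL cs i z)
          rw [hzz]
          exact bruhat_step_right cs ht (by rw [← hzz]; exact hlen)
    constructor
    · intro ω hred hlen ω' hsub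
      match ω with
      | [] =>
        rw [List.sublist_nil] at hsub
        subst hsub
        exact bruhat_refl cs _
      | i :: σ =>
        have hσred : cs.IsReduced σ := by
          have := CoxeterSystem.IsReduced.drop hred 1
          simpa using this
        have hσlen : σ.length ≤ n := by simpa using hlen
        have hlenz : ℓ (π σ) = σ.length := hσred
        have hlencons : ℓ (π (i :: σ)) = σ.length + 1 := by
          rw [hred]; rfl
        have hasc : ℓ (π σ) < ℓ (s i * π σ) := by
          rw [← cs.wordProd_cons]
          omega
        rcases List.sublist_cons_iff.mp hsub with h | ⟨σ', rfl, hσ'⟩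
        · refine bruhat_trans cs (ih1 σ hσred hσlen ω' h) ?_
          rw [cs.wordProd_cons]
          exact bruhat_step_left cs (cs.isReflection_simple i) hasc
        · have hy := ih1 σ hσred hσlen σ' hσ'
          have := A2 (π σ) (by omega) (π σ') hy i
          have hdl : dL cs i (π σ) = s i * π σ := by unfold dL; rw [if_pos hasc]
          rw [hdl] at this
          rw [cs.wordProd_cons, cs.wordProd_cons]
          exact this
    · exact A2

end Part6

namespace Part7

variable {B : Type*} {W : Type*} [Group W] {M : CoxeterMatrix B}
variable (cs : CoxeterSystem M W)

local prefix:100 "s" => cs.simple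
local prefix:100 "π" => cs.wordProd
local prefix:100 "ℓ" => cs.length

open DemazureAux Part3 Part4 Part5 Part6

lemma subword_le {ω ω' : List B} (hred : cs.IsReduced ω) (hsub : ω' <+ ω) :
    cs.bruhatLE (π ω') (π ω) :=
  (mutual_induction cs ω.length).1 ω hred le_rfl ω' hsub

lemma dL_mono {y z : W} (h : cs.bruhatLE y z) (i : B) :
    cs.bruhatLE (s i * y) (dL cs i z) :=
  (mutual_induction cs (ℓ z)).2 z le_rfl y h i

lemma dL_le {y z : W} (h : cs.bruhatLE y z) (i : B) : cs.bruhatLE y (dL cs i z) :=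
  bruhat_trans cs h (bruhat_le_dL cs i z)

lemma le_dL_iff {x z : W} {i : B} :
    cs.bruhatLE x (dL cs i z) ↔
      (cs.bruhatLE x z ∨ ∃ b, cs.bruhatLE b z ∧ x = s i * b) := by
  constructor
  · intro h
    by_cases hasc : ℓ z < ℓ (s i * z)
    · unfold dL at h
      rw [if_pos hasc] at h
      obtain ⟨σ, hσred, hσprod⟩ := cs.exists_reduced_word' z
      have hπcons : π (i :: σ) = s i * z := by rw [cs.wordProd_cons, ← hσprod]
      have hconsred : cs.IsReduced (i :: σ) := by
        unfold CoxeterSystem.IsReduced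
        have hdisj := cs.length_simple_mul z i
        have h5 : ℓ (π σ) = σ.length := hσred
        rw [← hσprod] at h5
        rw [hπcons, List.length_cons]
        omega
      rw [← hπcons] at h
      obtain ⟨τ, hsub, hredτ, hπτ⟩ := le_subword cs hconsred h
      rcases List.sublist_cons_iff.mp hsub with h2 | ⟨τ', rfl, hτ'⟩
      · left
        have := subword_le cs hσred h2
        rwa [hπτ, ← hσprod] at this
      · right
        refine ⟨π τ', ?_, ?_⟩
        · have := subword_le cs hσred hτ'
          rwa [← hσprod] at this
        · rw [← hπτ, cs.wordProd_cons]
    · unfold dL at h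
      rw [if_neg hasc] at h
      exact Or.inl h
  · rintro (h | ⟨b, hb, rfl⟩)
    · exact dL_le cs h i
    · exact dL_mono cs hb i

end Part7

theorem bruhat_interval_of_demazure_product
    {B : Type*} {W : Type*} [Group W] {M : CoxeterMatrix B} (cs : CoxeterSystem M W)
    (star : W → W → W)
    (hassoc : ∀ a b c : W, star (star a b) c = star a (star b c))
    (hunit : ∀ a : W, star 1 a = a)
    (hgen : ∀ (i : B) (v : W),
      star (cs.simple i) v =
        if cs.length v < cs.length (cs.simple i * v) then cs.simple i * v else v)
    (w u : W) :
    {x : W | cs.bruhatLE x (star w u)} =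
      {x : W | ∃ a b : W, cs.bruhatLE a w ∧ cs.bruhatLE b u ∧ x = a * b} := by
  open Part5 Part6 Part7 in
  have key : ∀ (n : ℕ) (w : W), cs.length w ≤ n → ∀ x : W,
      (cs.bruhatLE x (star w u) ↔
        ∃ a b : W, cs.bruhatLE a w ∧ cs.bruhatLE b u ∧ x = a * b) := by
    intro n
    induction n with
    | zero =>
      intro w hw x
      rw [Nat.le_zero, cs.length_eq_zero_iff] at hw
      subst hw
      rw [hunit]
      constructor
      · intro h
        exact ⟨1, x, bruhat_refl cs 1, h, (one_mul x).symm⟩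
      · rintro ⟨a, b, ha, hb, rfl⟩
        rw [bruhat_eq_one cs ha, one_mul]
        exact hb
    | succ n ih =>
      intro w hw x
      by_cases hone : w = 1
      · subst hone
        rw [hunit]
        constructor
        · intro h
          exact ⟨1, x, bruhat_refl cs 1, h, (one_mul x).symm⟩
        · rintro ⟨a, b, ha, hb, rfl⟩
          rw [bruhat_eq_one cs ha, one_mul]
          exact hb
      · obtain ⟨i, hdesc0⟩ := cs.exists_leftDescent_of_ne_one hone
        have hdesc : cs.length (cs.simple i * w) < cs.length w := hdesc0
        set w' := cs.simple i * w with hw'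
        have hww : cs.simple i * w' = w := by
          rw [hw', ← mul_assoc, cs.simple_mul_simple_self, one_mul]
        have hlw' : cs.length w' ≤ n := by omega
        have hasc : cs.length w' < cs.length (cs.simple i * w') := by
          rw [hww]; exact hdesc
        have hstar1 : star (cs.simple i) w' = w := by rw [hgen, if_pos hasc, hww]
        have hsw : star w u = Part5.dL cs i (star w' u) := by
          rw [← hstar1, hassoc, hgen]
          rfl
        have hwdL : w = Part5.dL cs i w' := by
          unfold Part5.dL
          rw [if_pos hasc, hww]
        rw [hsw, le_dL_iff cs]
        constructor
        · rintro (h | ⟨b, hb, rfl⟩)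
          · obtain ⟨a, c, ha, hc, rfl⟩ := (ih w' hlw' x).mp h
            refine ⟨a, c, ?_, hc, rfl⟩
            rw [hwdL]
            exact dL_le cs ha i
          · obtain ⟨a, c, ha, hc, rfl⟩ := (ih w' hlw' b).mp hb
            refine ⟨cs.simple i * a, c, ?_, hc, by rw [mul_assoc]⟩
            have := dL_mono cs ha i
            rwa [← hwdL] at this
        · rintro ⟨a, c, ha, hc, rfl⟩
          rw [hwdL] at ha
          rcases (le_dL_iff cs).mp ha with ha' | ⟨a', ha', rfl⟩
          · exact Or.inl ((ih w' hlw' _).mpr ⟨a, c, ha', hc, rfl⟩)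
          · exact Or.inr ⟨a' * c, (ih w' hlw' _).mpr ⟨a', c, ha', hc, rfl⟩,
              by rw [mul_assoc]⟩
  apply Set.ext
  intro x
  simp only [Set.mem_setOf_eq]
  exact key (cs.length w) w le_rfl x
end

section
/- For any v ∈ S_n and indices 1 ≤ i ≤ j ≤ n−1, the Demazure product satisfies (s_i s_{i+1} ⋯ s_j) ⋆ v = h_{i, [i+1, i+2, …, j+1]}(s_i s_{i+1} ⋯ s_j · v), where the product inside the hopping operator is the ordinary product of permutations. -/
/-!
We model the symmetric group `S_n` as the permutations of `ℕ` that fix every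
point outside `[n] = {1, …, n}`; one-line notation records the values
`w 1, w 2, …, w n`, so `w⁻¹ q` is the position of the entry `q`.
-/

/-- `w` is an element of `S_n`: it fixes everything outside `{1, …, n}`. -/
def InSymm (n : ℕ) (w : Equiv.Perm ℕ) : Prop :=
  ∀ k : ℕ, k ∉ Finset.Icc 1 n → w k = k

/-- The simple transposition `s_i = (i, i+1)`. -/
def sA (i : ℕ) : Equiv.Perm ℕ := Equiv.swap i (i + 1)

/-- One step of the hopping algorithm: among the entries `q` of the ordered
list `L` with `q > t` lying strictly to the right of `t` in the one-line
notation of `w` (i.e. `w⁻¹ t < w⁻¹ q`), pick the one occurring furthest to the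
right in `L` (the last one in `L`), and swap it with `t`; if there is no such
entry, do nothing. -/
def hopStepA (t : ℕ) (L : List ℕ) (w : Equiv.Perm ℕ) : Equiv.Perm ℕ :=
  match (L.filter fun q => decide (t < q ∧ w⁻¹ t < w⁻¹ q)).getLast? with
  | none => w
  | some q => Equiv.swap t q * w

/-- The hopping operator `h_{t,L}`: iterate the hopping step until the process
stops, i.e. until no entry of `L` greater than `t` appears to the right of
`t`.  Each effective step moves an entry of `L` from the right of `t` to its
left, so `L.length` iterations always suffice, after which the step acts as
the identity. -/
def hopA (t : ℕ) (L : List ℕ) (w : Equiv.Perm ℕ) : Equiv.Perm ℕ :=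
  (hopStepA t L)^[L.length] w

/-- The Coxeter length of an element of `S_n`: the least length of a word in
the simple transpositions `s_1, …, s_{n-1}` expressing it. -/
noncomputable def lengthA (n : ℕ) (w : Equiv.Perm ℕ) : ℕ :=
  sInf {k | ∃ l : List ℕ, l.length = k ∧ (∀ i ∈ l, 1 ≤ i ∧ i + 1 ≤ n) ∧ (l.map sA).prod = w}

namespace DemHop

/-- the candidate list of the hopping step -/
def candA (t : ℕ) (L : List ℕ) (w : Equiv.Perm ℕ) : List ℕ :=
  L.filter fun q => decide (t < q ∧ w⁻¹ t < w⁻¹ q)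

lemma hopStepA_eq (t : ℕ) (L : List ℕ) (w : Equiv.Perm ℕ) :
    hopStepA t L w = match (candA t L w).getLast? with
      | none => w
      | some q => Equiv.swap t q * w := rfl

lemma hopStepA_of_nil {t : ℕ} {L : List ℕ} {w : Equiv.Perm ℕ}
    (h : candA t L w = []) : hopStepA t L w = w := by
  rw [hopStepA_eq, h]; rfl

lemma hopStepA_of_some {t : ℕ} {L : List ℕ} {w : Equiv.Perm ℕ} {q : ℕ}
    (h : (candA t L w).getLast? = some q) : hopStepA t L w = Equiv.swap t q * w := by
  rw [hopStepA_eq, h]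

lemma filter_ne_length_lt {l : List ℕ} {q : ℕ} (hq : q ∈ l) :
    (l.filter fun a => decide (a ≠ q)).length < l.length := by
  induction l with
  | nil => cases hq
  | cons a l ih =>
    by_cases haq : a = q
    · subst haq
      rw [List.filter_cons_of_neg (by simp)]
      exact Nat.lt_succ_of_le (List.length_filter_le _ _)
    · rcases List.mem_cons.1 hq with rfl | h
      · exact absurd rfl haq
      · rw [List.filter_cons_of_pos (by simpa using haq)]
        simpa using ih h

lemma mem_candA {t q : ℕ} {L : List ℕ} {w : Equiv.Perm ℕ} (h : q ∈ candA t L w) :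
    q ∈ L ∧ t < q ∧ w⁻¹ t < w⁻¹ q := by
  have h1 := List.mem_of_mem_filter h
  have h2 := List.of_mem_filter h
  simp only [decide_eq_true_eq] at h2
  exact ⟨h1, h2⟩

lemma inv_swap_mul (t q : ℕ) (w : Equiv.Perm ℕ) (z : ℕ) :
    (Equiv.swap t q * w)⁻¹ z = w⁻¹ (Equiv.swap t q z) := by
  simp [Equiv.Perm.mul_apply, Equiv.swap_inv]

lemma candA_step_lt {t : ℕ} {L : List ℕ} {w : Equiv.Perm ℕ} {q : ℕ}
    (h : (candA t L w).getLast? = some q) :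
    (candA t L (Equiv.swap t q * w)).length < (candA t L w).length := by
  have hqmem : q ∈ candA t L w :=
    List.mem_of_mem_getLast? (by rw [h]; rfl)
  obtain ⟨hqL, htq, hwq⟩ := mem_candA hqmem
  have hsub : (candA t L (Equiv.swap t q * w)).length
      ≤ ((candA t L w).filter fun a => decide (a ≠ q)).length := by
    simp only [candA, List.filter_filter]
    apply List.Sublist.length_le
    apply List.monotone_filter_right
    intro a ha
    simp only [decide_eq_true_eq] at ha
    obtain ⟨hta, hlt⟩ := ha
    rw [inv_swap_mul, inv_swap_mul, Equiv.swap_apply_left] at hlt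
    by_cases haq : a = q
    · subst haq
      rw [Equiv.swap_apply_right] at hlt
      exact absurd hwq (by omega)
    · rw [Equiv.swap_apply_of_ne_of_ne (by omega) haq] at hlt
      simp only [Bool.and_eq_true, decide_eq_true_eq]
      exact ⟨haq, hta, lt_trans hwq hlt⟩
  exact lt_of_le_of_lt hsub (filter_ne_length_lt hqmem)

lemma hop_fix (t : ℕ) (L : List ℕ) :
    ∀ (k : ℕ) (w : Equiv.Perm ℕ), (candA t L w).length ≤ k →
      hopStepA t L ((hopStepA t L)^[k] w) = (hopStepA t L)^[k] w := by
  intro k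
  induction k with
  | zero =>
    intro w hw
    have : candA t L w = [] := List.length_eq_zero_iff.1 (Nat.le_zero.1 hw)
    simpa using hopStepA_of_nil this
  | succ k ih =>
    intro w hw
    rcases hc : (candA t L w).getLast? with _ | q
    · have hnil : candA t L w = [] := List.getLast?_eq_none_iff.1 hc
      have hfix : hopStepA t L w = w := hopStepA_of_nil hnil
      rw [Function.iterate_fixed hfix]
      exact hfix
    · rw [Function.iterate_succ_apply, hopStepA_of_some hc]
      apply ih
      have := candA_step_lt hc
      omega

lemma hopA_step (t : ℕ) (L : List ℕ) (w : Equiv.Perm ℕ) :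
    hopA t L (hopStepA t L w) = hopA t L w := by
  unfold hopA
  rw [← Function.iterate_succ_apply, Function.iterate_succ_apply']
  exact hop_fix t L L.length w (List.length_filter_le _ _)

lemma hopA_of_nil {t : ℕ} {L : List ℕ} {w : Equiv.Perm ℕ}
    (h : candA t L w = []) : hopA t L w = w :=
  Function.iterate_fixed (hopStepA_of_nil h) _


/-- the list `[t+1, ..., m]` -/
def LL (t m : ℕ) : List ℕ := (List.range (m - t)).map fun k => t + 1 + k

/-- the Demazure action of a single generator -/
def DA (k : ℕ) (u : Equiv.Perm ℕ) : Equiv.Perm ℕ :=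
  if u⁻¹ k < u⁻¹ (k + 1) then sA k * u else u

lemma LL_cons {t m : ℕ} (h : t < m) : LL t m = (t + 1) :: LL (t + 1) m := by
  unfold LL
  rw [show m - t = (m - (t + 1)) + 1 by omega, List.range_succ_eq_map, List.map_cons,
    List.map_map]
  refine congrArg₂ _ rfl ?_
  apply List.map_congr_left
  intro k _
  simp [Function.comp]; omega

lemma mem_LL {t m q : ℕ} (h : q ∈ LL t m) : t < q ∧ q ≤ m := by
  obtain ⟨k, hk, rfl⟩ := List.mem_map.1 h
  rw [List.mem_range] at hk
  omega

lemma inv_sA_mul_left (i : ℕ) (x : Equiv.Perm ℕ) : (sA i * x)⁻¹ i = x⁻¹ (i + 1) := by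
  rw [sA, inv_swap_mul, Equiv.swap_apply_left]

lemma inv_sA_mul_right (i : ℕ) (x : Equiv.Perm ℕ) : (sA i * x)⁻¹ (i + 1) = x⁻¹ i := by
  rw [sA, inv_swap_mul, Equiv.swap_apply_right]

lemma inv_sA_mul_other {i q : ℕ} (x : Equiv.Perm ℕ) (h1 : q ≠ i) (h2 : q ≠ i + 1) :
    (sA i * x)⁻¹ q = x⁻¹ q := by
  rw [sA, inv_swap_mul, Equiv.swap_apply_of_ne_of_ne h1 h2]

lemma candA_top {i m : ℕ} (x : Equiv.Perm ℕ) (him : i < m) :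
    candA i (LL i m) (sA i * x) =
      (if x⁻¹ (i + 1) < x⁻¹ i then [i + 1] else []) ++ candA (i + 1) (LL (i + 1) m) x := by
  rw [candA, LL_cons him, List.filter_cons]
  have htail : List.filter (fun q => decide (i < q ∧ (sA i * x)⁻¹ i < (sA i * x)⁻¹ q))
      (LL (i + 1) m) = candA (i + 1) (LL (i + 1) m) x := by
    apply List.filter_congr
    intro q hq
    have hq' := mem_LL hq
    rw [inv_sA_mul_left, inv_sA_mul_other x (by omega) (by omega), decide_eq_decide]
    constructor
    · rintro ⟨-, h2⟩; exact ⟨by omega, h2⟩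
    · rintro ⟨-, h2⟩; exact ⟨by omega, h2⟩
  rw [htail]
  by_cases h : x⁻¹ (i + 1) < x⁻¹ i
  · rw [if_pos h, if_pos]
    · rfl
    · simp only [inv_sA_mul_left, inv_sA_mul_right, decide_eq_true_eq]
      exact ⟨Nat.lt_succ_self i, h⟩
  · rw [if_neg h, if_neg]
    · rfl
    · simp only [inv_sA_mul_left, inv_sA_mul_right, decide_eq_true_eq]
      rintro ⟨-, h2⟩
      exact h h2

lemma lemmaA_base {i m : ℕ} {x : Equiv.Perm ℕ} (him : i < m)
    (hc : candA (i + 1) (LL (i + 1) m) x = []) :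
    hopA i (LL i m) (sA i * x) = DA i x := by
  have hx : x⁻¹ i ≠ x⁻¹ (i + 1) := fun h => by simpa using x⁻¹.injective h
  by_cases hlt : x⁻¹ i < x⁻¹ (i + 1)
  · have hnil : candA i (LL i m) (sA i * x) = [] := by
      rw [candA_top x him, hc, if_neg (by omega)]; rfl
    rw [hopA_of_nil hnil, DA, if_pos hlt]
  · have hgt : x⁻¹ (i + 1) < x⁻¹ i := by omega
    have hc2 : candA i (LL i m) (sA i * x) = [i + 1] := by
      rw [candA_top x him, hc, if_pos hgt]; rfl
    have hstep : hopStepA i (LL i m) (sA i * x) = x := by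
      rw [hopStepA_of_some (show (candA i (LL i m) (sA i * x)).getLast? = some (i+1) by
        rw [hc2]; rfl)]
      rw [← mul_assoc, show Equiv.swap i (i+1) * sA i = 1 by rw [sA, Equiv.swap_mul_self],
        one_mul]
    have hfin : candA i (LL i m) x = [] := by
      rw [candA, LL_cons him, List.filter_cons,
        if_neg (by simp only [decide_eq_true_eq]; rintro ⟨-, h2⟩; exact hlt h2)]
      apply List.filter_eq_nil_iff.2
      intro q hq
      have hq' := mem_LL hq
      have h1 := List.filter_eq_nil_iff.1 hc q hq
      simp only [decide_eq_true_eq] at h1 ⊢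
      have h2 : ¬ (x⁻¹ (i + 1) < x⁻¹ q) := fun hh => h1 ⟨by omega, hh⟩
      have hne : x⁻¹ q ≠ x⁻¹ (i + 1) := fun h => by
        have := x⁻¹.injective h; omega
      rintro ⟨-, h3⟩
      omega
    rw [← hopA_step i (LL i m) (sA i * x), hstep, hopA_of_nil hfin, DA, if_neg hlt]

lemma lemmaA : ∀ (N : ℕ) (x : Equiv.Perm ℕ) (i m : ℕ), i < m →
    (candA (i + 1) (LL (i + 1) m) x).length ≤ N →
    hopA i (LL i m) (sA i * x) = DA i (hopA (i + 1) (LL (i + 1) m) x) := by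
  intro N
  induction N with
  | zero =>
    intro x i m him hlen
    have hnil : candA (i + 1) (LL (i + 1) m) x = [] :=
      List.length_eq_zero_iff.1 (Nat.le_zero.1 hlen)
    rw [hopA_of_nil hnil]
    exact lemmaA_base him hnil
  | succ N ih =>
    intro x i m him hlen
    rcases hlast : (candA (i + 1) (LL (i + 1) m) x).getLast? with _ | q
    · have hnil := List.getLast?_eq_none_iff.1 hlast
      rw [hopA_of_nil hnil]
      exact lemmaA_base him hnil
    · have hqmem : q ∈ candA (i + 1) (LL (i + 1) m) x :=
        List.mem_of_mem_getLast? (by rw [hlast]; rfl)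
      obtain ⟨hqL, hq1, hq2⟩ := mem_candA hqmem
      have hwlast : (candA i (LL i m) (sA i * x)).getLast? = some q := by
        rw [candA_top x him,
          List.getLast?_append_of_ne_nil _ (List.ne_nil_of_mem hqmem)]
        exact hlast
      have h1 : Equiv.swap i q = sA i * Equiv.swap (i + 1) q * (sA i)⁻¹ := by
        have h2 := Equiv.swap_apply_apply (sA i) (i + 1) q
        rw [show sA i (i + 1) = i by rw [sA, Equiv.swap_apply_right],
          show sA i q = q by rw [sA]; exact Equiv.swap_apply_of_ne_of_ne (by omega) (by omega)]
          at h2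
        exact h2
      have hswap : Equiv.swap i q * (sA i * x) = sA i * (Equiv.swap (i + 1) q * x) := by
        rw [h1]
        group
      rw [← hopA_step i (LL i m) (sA i * x), hopStepA_of_some hwlast, hswap,
        ← hopA_step (i + 1) (LL (i + 1) m) x, hopStepA_of_some hlast]
      exact ih _ _ _ him (by have := candA_step_lt hlast; omega)

/-! ### InSymm infrastructure -/

lemma InSymm.mul {n : ℕ} {a b : Equiv.Perm ℕ} (ha : InSymm n a) (hb : InSymm n b) :
    InSymm n (a * b) := fun k hk => by
  rw [Equiv.Perm.mul_apply, hb k hk, ha k hk]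

lemma InSymm_swap {n a b : ℕ} (ha1 : 1 ≤ a) (ha2 : a ≤ n) (hb1 : 1 ≤ b) (hb2 : b ≤ n) :
    InSymm n (Equiv.swap a b) := fun k hk => by
  rw [Finset.mem_Icc] at hk
  exact Equiv.swap_apply_of_ne_of_ne (by omega) (by omega)

lemma InSymm_sA {n k : ℕ} (h1 : 1 ≤ k) (h2 : k + 1 ≤ n) : InSymm n (sA k) :=
  InSymm_swap h1 (by omega) (by omega) h2

lemma InSymm_one {n : ℕ} : InSymm n 1 := fun k _ => rfl

lemma InSymm.inv {n : ℕ} {u : Equiv.Perm ℕ} (hu : InSymm n u) : InSymm n u⁻¹ := fun k hk => by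
  conv_lhs => rw [← hu k hk]
  simp

lemma insymm_inv_mem {n k : ℕ} {u : Equiv.Perm ℕ} (hu : InSymm n u)
    (hk : k ∈ Finset.Icc 1 n) : u⁻¹ k ∈ Finset.Icc 1 n := by
  by_contra h
  have h2 : u (u⁻¹ k) = u⁻¹ k := hu _ h
  rw [show u (u⁻¹ k) = k from u.apply_symm_apply k] at h2
  exact h (h2 ▸ hk)

lemma InSymm_hopStepA {n t : ℕ} {L : List ℕ} {w : Equiv.Perm ℕ}
    (hL : ∀ q ∈ L, 1 ≤ q ∧ q ≤ n) (ht1 : 1 ≤ t) (ht2 : t ≤ n) (hw : InSymm n w) :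
    InSymm n (hopStepA t L w) := by
  rcases hc : (candA t L w).getLast? with _ | q
  · rw [hopStepA_of_nil (List.getLast?_eq_none_iff.1 hc)]
    exact hw
  · rw [hopStepA_of_some hc]
    have hq := (mem_candA (List.mem_of_mem_getLast? (by rw [hc]; rfl))).1
    exact InSymm.mul (InSymm_swap ht1 ht2 (hL q hq).1 (hL q hq).2) hw

lemma InSymm_hopA {n t : ℕ} {L : List ℕ} {w : Equiv.Perm ℕ}
    (hL : ∀ q ∈ L, 1 ≤ q ∧ q ≤ n) (ht1 : 1 ≤ t) (ht2 : t ≤ n) (hw : InSymm n w) :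
    InSymm n (hopA t L w) := by
  rw [hopA]
  generalize L.length = k
  induction k with
  | zero => exact hw
  | succ k ih =>
    rw [Function.iterate_succ_apply']
    exact InSymm_hopStepA hL ht1 ht2 ih

/-! ### Inversions and length -/

/-- the inversion number of `u` as an element of `S_n` -/
def invA (n : ℕ) (u : Equiv.Perm ℕ) : ℕ :=
  ((Finset.Icc 1 n ×ˢ Finset.Icc 1 n).filter fun p => p.1 < p.2 ∧ u⁻¹ p.2 < u⁻¹ p.1).card

lemma invA_one (n : ℕ) : invA n 1 = 0 := by
  rw [invA, Finset.card_eq_zero, Finset.filter_eq_empty_iff]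
  rintro p -
  simp only [Equiv.Perm.one_apply, inv_one]
  omega

lemma sA_lt {k a b : ℕ} (hab : a < b) (hne : ¬(a = k ∧ b = k + 1)) :
    sA k a < sA k b := by
  simp only [sA, Equiv.swap_apply_def]
  split_ifs <;> omega

lemma sA_mem_Icc {n k a : ℕ} (h1 : 1 ≤ k) (h2 : k + 1 ≤ n) (ha : a ∈ Finset.Icc 1 n) :
    sA k a ∈ Finset.Icc 1 n := by
  rw [Finset.mem_Icc] at ha ⊢
  simp only [sA, Equiv.swap_apply_def]
  split_ifs <;> omega

lemma inv_sA_mul_apply (k : ℕ) (u : Equiv.Perm ℕ) (z : ℕ) :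
    (sA k * u)⁻¹ z = u⁻¹ (sA k z) := by
  simp [sA, Equiv.Perm.mul_apply, Equiv.swap_inv, inv_swap_mul]

lemma invA_toggle {n k : ℕ} (hk1 : 1 ≤ k) (hkn : k + 1 ≤ n) (u : Equiv.Perm ℕ)
    (hlt : u⁻¹ k < u⁻¹ (k + 1)) : invA n (sA k * u) = invA n u + 1 := by
  classical
  have hKG : ((k, k+1) : ℕ × ℕ) ∈ Finset.Icc 1 n ×ˢ Finset.Icc 1 n := by
    simp only [Finset.mem_product, Finset.mem_Icc]
    omega
  have split : ∀ v : Equiv.Perm ℕ,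
      ((Finset.Icc 1 n ×ˢ Finset.Icc 1 n).filter fun p => p.1 < p.2 ∧ v⁻¹ p.2 < v⁻¹ p.1).card =
      (((Finset.Icc 1 n ×ˢ Finset.Icc 1 n).erase (k, k+1)).filter
          fun p => p.1 < p.2 ∧ v⁻¹ p.2 < v⁻¹ p.1).card
        + (if v⁻¹ (k + 1) < v⁻¹ k then 1 else 0) := by
    intro v
    rw [Finset.filter_erase]
    by_cases h : v⁻¹ (k + 1) < v⁻¹ k
    · rw [if_pos h]
      have hKmem : ((k, k+1) : ℕ × ℕ) ∈ (Finset.Icc 1 n ×ˢ Finset.Icc 1 n).filter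
          fun p => p.1 < p.2 ∧ v⁻¹ p.2 < v⁻¹ p.1 := by
        rw [Finset.mem_filter]
        exact ⟨hKG, Nat.lt_succ_self k, h⟩
      rw [Finset.card_erase_add_one hKmem]
    · rw [if_neg h, Finset.erase_eq_of_notMem, Nat.add_zero]
      rw [Finset.mem_filter]
      rintro ⟨-, -, h2⟩
      exact h h2
  have hcard :
      (((Finset.Icc 1 n ×ˢ Finset.Icc 1 n).erase (k, k+1)).filter
          fun p => p.1 < p.2 ∧ (sA k * u)⁻¹ p.2 < (sA k * u)⁻¹ p.1).card =
      (((Finset.Icc 1 n ×ˢ Finset.Icc 1 n).erase (k, k+1)).filter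
          fun p => p.1 < p.2 ∧ u⁻¹ p.2 < u⁻¹ p.1).card := by
    apply Finset.card_bij' (fun p _ => ((sA k p.1, sA k p.2) : ℕ × ℕ))
      (fun p _ => ((sA k p.1, sA k p.2) : ℕ × ℕ))
    · intro p hp
      rw [Finset.mem_filter, Finset.mem_erase, Finset.mem_product] at hp ⊢
      obtain ⟨⟨hpK, hp1, hp2⟩, hab, hv⟩ := hp
      rw [Ne, Prod.ext_iff] at hpK
      push_neg at hpK
      have hnc : ¬(p.1 = k ∧ p.2 = k + 1) := by
        rintro ⟨e1, e2⟩
        exact (hpK e1) e2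
      rw [inv_sA_mul_apply, inv_sA_mul_apply] at hv
      refine ⟨⟨?_, sA_mem_Icc hk1 hkn hp1, sA_mem_Icc hk1 hkn hp2⟩, sA_lt hab hnc, hv⟩
      rw [Ne, Prod.ext_iff]
      rintro ⟨e1, e2⟩
      have f1 : p.1 = k + 1 := by
        have := congrArg (sA k) e1
        simpa [sA, Equiv.swap_apply_self, Equiv.swap_apply_left] using this
      have f2 : p.2 = k := by
        have := congrArg (sA k) e2
        simpa [sA, Equiv.swap_apply_self, Equiv.swap_apply_right] using this
      omega
    · intro p hp
      rw [Finset.mem_filter, Finset.mem_erase, Finset.mem_product] at hp ⊢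
      obtain ⟨⟨hpK, hp1, hp2⟩, hab, hv⟩ := hp
      rw [Ne, Prod.ext_iff] at hpK
      push_neg at hpK
      have hnc : ¬(p.1 = k ∧ p.2 = k + 1) := by
        rintro ⟨e1, e2⟩
        exact (hpK e1) e2
      refine ⟨⟨?_, sA_mem_Icc hk1 hkn hp1, sA_mem_Icc hk1 hkn hp2⟩, sA_lt hab hnc, ?_⟩
      · rw [Ne, Prod.ext_iff]
        rintro ⟨e1, e2⟩
        have f1 : p.1 = k + 1 := by
          have := congrArg (sA k) e1
          simpa [sA, Equiv.swap_apply_self, Equiv.swap_apply_left] using this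
        have f2 : p.2 = k := by
          have := congrArg (sA k) e2
          simpa [sA, Equiv.swap_apply_self, Equiv.swap_apply_right] using this
        omega
      · rw [inv_sA_mul_apply, inv_sA_mul_apply]
        simpa [sA, Equiv.swap_apply_self] using hv
    · intro p _
      simp [sA, Equiv.swap_apply_self]
    · intro p _
      simp [sA, Equiv.swap_apply_self]
  have e1 : (sA k * u)⁻¹ (k + 1) = u⁻¹ k := by
    rw [inv_sA_mul_apply, sA, Equiv.swap_apply_right]
  have e2 : (sA k * u)⁻¹ k = u⁻¹ (k + 1) := by
    rw [inv_sA_mul_apply, sA, Equiv.swap_apply_left]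
  rw [invA, invA, split, split, hcard, e1, e2, if_pos hlt, if_neg (by omega)]

lemma sA_mul_sA (k : ℕ) (u : Equiv.Perm ℕ) : sA k * (sA k * u) = u := by
  rw [← mul_assoc, sA, Equiv.swap_mul_self, one_mul]

lemma invA_toggle' {n k : ℕ} (hk1 : 1 ≤ k) (hkn : k + 1 ≤ n) (u : Equiv.Perm ℕ)
    (hlt : u⁻¹ (k + 1) < u⁻¹ k) : invA n u = invA n (sA k * u) + 1 := by
  have h1 : (sA k * u)⁻¹ k < (sA k * u)⁻¹ (k + 1) := by
    rw [inv_sA_mul_apply, inv_sA_mul_apply, sA, Equiv.swap_apply_left, Equiv.swap_apply_right]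
    exact hlt
  have := invA_toggle hk1 hkn (sA k * u) h1
  rwa [sA_mul_sA] at this

lemma invA_le_length {n : ℕ} : ∀ l : List ℕ, (∀ i ∈ l, 1 ≤ i ∧ i + 1 ≤ n) →
    invA n ((l.map sA).prod) ≤ l.length := by
  intro l
  induction l with
  | nil => intro _; simp [invA_one]
  | cons k l ih =>
    intro hb
    have hk := hb k List.mem_cons_self
    have hrest := ih fun i hi => hb i (List.mem_cons_of_mem k hi)
    rw [List.map_cons, List.prod_cons]
    set r := (l.map sA).prod with hr
    rcases lt_trichotomy (r⁻¹ k) (r⁻¹ (k + 1)) with h | h | h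
    · rw [invA_toggle hk.1 hk.2 r h]
      simpa using hrest
    · exact absurd (r⁻¹.injective h) (by omega)
    · have := invA_toggle' hk.1 hk.2 r h
      simp only [List.length_cons]
      omega

lemma eq_one_of_no_descent {n : ℕ} {u : Equiv.Perm ℕ} (hu : InSymm n u)
    (h : ∀ k, 1 ≤ k → k + 1 ≤ n → u⁻¹ k < u⁻¹ (k + 1)) : u = 1 := by
  have claimA : ∀ k, 1 ≤ k → k ≤ n → k ≤ u⁻¹ k := by
    intro k
    induction k with
    | zero => omega
    | succ k ih =>
      intro _ hkn
      rcases Nat.eq_zero_or_pos k with rfl | hk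
      · have := insymm_inv_mem hu (Finset.mem_Icc.2 ⟨le_refl 1, hkn⟩)
        rw [Finset.mem_Icc] at this
        simpa using this.1
      · have h1 := ih hk (by omega)
        have h2 := h k hk (by omega)
        omega
  have hsum : ∑ x ∈ Finset.Icc 1 n, u⁻¹ x = ∑ x ∈ Finset.Icc 1 n, x := by
    apply Finset.sum_nbij' (i := fun x => u⁻¹ x) (j := fun x => u x)
    · intro a ha
      exact insymm_inv_mem hu ha
    · intro a ha
      by_contra hna
      have h2 : u (u a) = u a := hu _ hna
      have h3 : u a = a := u.injective h2
      rw [h3] at hna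
      exact hna ha
    · intro a _
      exact u.apply_symm_apply a
    · intro a _
      exact u.symm_apply_apply a
    · intro a _
      rfl
  have hall : ∀ x ∈ Finset.Icc 1 n, u⁻¹ x = x := by
    have hle : ∀ x ∈ Finset.Icc 1 n, x ≤ u⁻¹ x := by
      intro x hx
      rw [Finset.mem_Icc] at hx
      exact claimA x hx.1 hx.2
    have := (Finset.sum_eq_sum_iff_of_le hle).1 hsum.symm
    intro x hx
    exact (this x hx).symm
  have hinv : u⁻¹ = 1 := by
    ext x
    by_cases hx : x ∈ Finset.Icc 1 n
    · simpa using hall x hx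
    · simpa using InSymm.inv hu x hx
  rw [← inv_inv u, hinv, inv_one]

lemma exists_descent {n : ℕ} {u : Equiv.Perm ℕ} (hu : InSymm n u) (hne : u ≠ 1) :
    ∃ k, 1 ≤ k ∧ k + 1 ≤ n ∧ u⁻¹ (k + 1) < u⁻¹ k := by
  by_contra h
  push_neg at h
  apply hne
  apply eq_one_of_no_descent hu
  intro k hk1 hkn
  have h1 := h k hk1 hkn
  have h2 : u⁻¹ k ≠ u⁻¹ (k + 1) := fun hh => by
    have := u⁻¹.injective hh; omega
  omega

lemma exists_word {n : ℕ} : ∀ (N : ℕ) (u : Equiv.Perm ℕ), InSymm n u → invA n u ≤ N →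
    ∃ l : List ℕ, l.length = invA n u ∧ (∀ i ∈ l, 1 ≤ i ∧ i + 1 ≤ n) ∧ (l.map sA).prod = u := by
  intro N
  induction N with
  | zero =>
    intro u hu hN
    by_cases h1 : u = 1
    · subst h1
      exact ⟨[], by simp [invA_one], by simp, by simp⟩
    · obtain ⟨k, hk1, hkn, hd⟩ := exists_descent hu h1
      have := invA_toggle' hk1 hkn u hd
      omega
  | succ N ih =>
    intro u hu hN
    by_cases h1 : u = 1
    · subst h1
      exact ⟨[], by simp [invA_one], by simp, by simp⟩
    · obtain ⟨k, hk1, hkn, hd⟩ := exists_descent hu h1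
      have htog := invA_toggle' hk1 hkn u hd
      obtain ⟨l, hl1, hl2, hl3⟩ := ih (sA k * u) (InSymm.mul (InSymm_sA hk1 hkn) hu) (by omega)
      refine ⟨k :: l, ?_, ?_, ?_⟩
      · simp only [List.length_cons, hl1]
        omega
      · intro i hi
        rcases List.mem_cons.1 hi with rfl | hil
        · exact ⟨hk1, hkn⟩
        · exact hl2 i hil
      · rw [List.map_cons, List.prod_cons, hl3, sA_mul_sA]

lemma lengthA_eq_invA {n : ℕ} {u : Equiv.Perm ℕ} (hu : InSymm n u) :
    lengthA n u = invA n u := by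
  obtain ⟨l, hl1, hl2, hl3⟩ := exists_word (invA n u) u hu le_rfl
  have hmem : invA n u ∈ {k | ∃ l : List ℕ, l.length = k ∧ (∀ i ∈ l, 1 ≤ i ∧ i + 1 ≤ n) ∧
      (l.map sA).prod = u} := ⟨l, hl1, hl2, hl3⟩
  apply le_antisymm
  · exact Nat.sInf_le hmem
  · obtain ⟨l', hl1', hl2', hl3'⟩ := Nat.sInf_mem (Set.nonempty_of_mem hmem)
    rw [lengthA, ← hl1', ← hl3']
    exact invA_le_length l' hl2'

lemma descent_length {n k : ℕ} {u : Equiv.Perm ℕ} (hu : InSymm n u)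
    (hk1 : 1 ≤ k) (hkn : k + 1 ≤ n) :
    lengthA n u < lengthA n (sA k * u) ↔ u⁻¹ k < u⁻¹ (k + 1) := by
  rw [lengthA_eq_invA hu, lengthA_eq_invA (InSymm.mul (InSymm_sA hk1 hkn) hu)]
  rcases lt_trichotomy (u⁻¹ k) (u⁻¹ (k + 1)) with h | h | h
  · rw [invA_toggle hk1 hkn u h]
    simpa using h
  · exact absurd (u⁻¹.injective h) (by omega)
  · rw [invA_toggle' hk1 hkn u h]
    constructor
    · omega
    · omega

/-! ### The cycle `s_i s_{i+1} ⋯ s_{i+d}` -/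

/-- the product `s_i s_{i+1} ⋯ s_{i+d}` -/
def cPA (i d : ℕ) : Equiv.Perm ℕ := ((List.range (d + 1)).map fun k => sA (i + k)).prod

lemma cPA_zero (i : ℕ) : cPA i 0 = sA i := by
  rw [cPA, show List.range 1 = [0] from rfl, List.map_cons, List.map_nil, List.prod_cons,
    List.prod_nil, mul_one, Nat.add_zero]

lemma cPA_succ (i d : ℕ) : cPA i (d + 1) = sA i * cPA (i + 1) d := by
  rw [cPA, List.range_succ_eq_map, List.map_cons, List.prod_cons, List.map_map]
  congr 1
  rw [cPA]
  apply congrArg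
  apply List.map_congr_left
  intro k _
  simp only [Function.comp_apply]
  apply congrArg
  omega

lemma cPA_fix {i k : ℕ} (d : ℕ) (h : k < i) : cPA i d k = k := by
  induction d generalizing i with
  | zero =>
    rw [cPA_zero, sA]
    exact Equiv.swap_apply_of_ne_of_ne (by omega) (by omega)
  | succ d ih =>
    rw [cPA_succ, Equiv.Perm.mul_apply, ih (by omega), sA]
    exact Equiv.swap_apply_of_ne_of_ne (by omega) (by omega)

lemma cPA_top (i d : ℕ) : cPA i d (i + d + 1) = i := by
  induction d generalizing i with
  | zero =>
    rw [cPA_zero, sA]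
    exact Equiv.swap_apply_right i (i + 1)
  | succ d ih =>
    rw [cPA_succ, Equiv.Perm.mul_apply, show i + (d + 1) + 1 = (i + 1) + d + 1 by omega,
      ih (i + 1), sA]
    exact Equiv.swap_apply_right i (i + 1)

lemma InSymm_cPA {n i d : ℕ} (h1 : 1 ≤ i) (h2 : i + d + 1 ≤ n) : InSymm n (cPA i d) := by
  induction d generalizing i with
  | zero =>
    rw [cPA_zero]
    exact InSymm_sA h1 (by omega)
  | succ d ih =>
    rw [cPA_succ]
    exact InSymm.mul (InSymm_sA h1 (by omega)) (ih (by omega) (by omega))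

lemma main' (n : ℕ) (star : Equiv.Perm ℕ → Equiv.Perm ℕ → Equiv.Perm ℕ)
    (hassoc : ∀ a b c, star (star a b) c = star a (star b c))
    (hgen : ∀ k, 1 ≤ k → k + 1 ≤ n → ∀ u,
      star (sA k) u = if lengthA n u < lengthA n (sA k * u) then sA k * u else u) :
    ∀ (d i : ℕ) (v : Equiv.Perm ℕ), InSymm n v → 1 ≤ i → i + d + 1 ≤ n →
      star (cPA i d) v = hopA i (LL i (i + d + 1)) (cPA i d * v) := by
  have hstarDA : ∀ k (u : Equiv.Perm ℕ), InSymm n u → 1 ≤ k → k + 1 ≤ n →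
      star (sA k) u = DA k u := by
    intro k u hu hk1 hk2
    rw [hgen k hk1 hk2 u, DA]
    by_cases h : u⁻¹ k < u⁻¹ (k + 1)
    · rw [if_pos ((descent_length hu hk1 hk2).2 h), if_pos h]
    · rw [if_neg (fun hh => h ((descent_length hu hk1 hk2).1 hh)), if_neg h]
  intro d
  induction d with
  | zero =>
    intro i v hv hi hn
    have hLL : LL (i + 1) (i + 1) = [] := by
      simp [LL]
    have hA := lemmaA 0 v i (i + 1) (Nat.lt_succ_self i) (by simp [candA, hLL])
    have h0 : hopA (i + 1) ([] : List ℕ) v = v := rfl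
    rw [hLL, h0] at hA
    rw [cPA_zero, hstarDA i v hv hi hn]
    exact hA.symm
  | succ d ih =>
    intro i v hv hi hn
    have hu' : InSymm n (cPA (i + 1) d) := InSymm_cPA (by omega) (by omega)
    have h1 : star (sA i) (cPA (i + 1) d) = sA i * cPA (i + 1) d := by
      rw [hgen i hi (by omega), if_pos]
      rw [descent_length hu' hi (by omega)]
      have e1 : (cPA (i + 1) d)⁻¹ i = i := by
        have h := cPA_fix (i := i + 1) d (Nat.lt_succ_self i)
        have h2 := congrArg (fun z => (cPA (i + 1) d)⁻¹ z) h
        rw [show ∀ z, (cPA (i + 1) d)⁻¹ (cPA (i + 1) d z) = z from (cPA (i + 1) d).symm_apply_apply] at h2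
        exact h2.symm
      have e2 : (cPA (i + 1) d)⁻¹ (i + 1) = (i + 1) + d + 1 := by
        have h := cPA_top (i + 1) d
        have h2 := congrArg (fun z => (cPA (i + 1) d)⁻¹ z) h
        rw [show ∀ z, (cPA (i + 1) d)⁻¹ (cPA (i + 1) d z) = z from (cPA (i + 1) d).symm_apply_apply] at h2
        exact h2.symm
      rw [e1, e2]
      omega
    have hpeel := cPA_succ i d
    set x := cPA (i + 1) d * v with hx
    have hxs : InSymm n x := InSymm.mul hu' hv
    have hLsub : ∀ q ∈ LL (i + 1) ((i + 1) + d + 1), 1 ≤ q ∧ q ≤ n := by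
      intro q hq
      have := mem_LL hq
      omega
    have hhop : InSymm n (hopA (i + 1) (LL (i + 1) ((i + 1) + d + 1)) x) :=
      InSymm_hopA hLsub (by omega) (by omega) hxs
    calc star (cPA i (d + 1)) v
        = star (star (sA i) (cPA (i + 1) d)) v := by rw [h1, ← hpeel]
      _ = star (sA i) (star (cPA (i + 1) d) v) := hassoc _ _ _
      _ = star (sA i) (hopA (i + 1) (LL (i + 1) ((i + 1) + d + 1)) x) := by
            rw [ih (i + 1) v hv (by omega) (by omega)]
      _ = DA i (hopA (i + 1) (LL (i + 1) ((i + 1) + d + 1)) x) :=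
            hstarDA i _ hhop hi (by omega)
      _ = hopA i (LL i ((i + 1) + d + 1)) (sA i * x) :=
            (lemmaA _ x i ((i + 1) + d + 1) (by omega) le_rfl).symm
      _ = hopA i (LL i (i + (d + 1) + 1)) (cPA i (d + 1) * v) := by
            rw [show (i + 1) + d + 1 = i + (d + 1) + 1 by omega, hpeel, mul_assoc]

end DemHop

/-- `(s_i s_{i+1} ⋯ s_j) ⋆ v = h_{i,[i+1,…,j+1]}(s_i s_{i+1} ⋯ s_j · v)`
for `1 ≤ i ≤ j ≤ n - 1`.  The Demazure product `⋆` is encoded as an arbitrary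
associative product `star` with unit `1` satisfying the defining rule on the
simple generators of `S_n`. -/
theorem demazure_cycle_hop
    (n : ℕ) (v : Equiv.Perm ℕ) (hv : InSymm n v)
    (star : Equiv.Perm ℕ → Equiv.Perm ℕ → Equiv.Perm ℕ)
    (hassoc : ∀ a b c, star (star a b) c = star a (star b c))
    (hunit : ∀ a, star 1 a = a)
    (hgen : ∀ k, 1 ≤ k → k + 1 ≤ n → ∀ u,
      star (sA k) u = if lengthA n u < lengthA n (sA k * u) then sA k * u else u)
    (i j : ℕ) (hi : 1 ≤ i) (hij : i ≤ j) (hj : j + 1 ≤ n) :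
    star (((List.range (j - i + 1)).map fun k => sA (i + k)).prod) v =
      hopA i ((List.range (j - i + 1)).map fun k => i + 1 + k)
        ((((List.range (j - i + 1)).map fun k => sA (i + k)).prod) * v) := by
  obtain ⟨d, rfl⟩ : ∃ d, j = i + d := ⟨j - i, by omega⟩
  have h1 : i + d - i + 1 = d + 1 := by omega
  rw [h1]
  have h2 : (List.range (d + 1)).map (fun k => i + 1 + k) = DemHop.LL i (i + d + 1) := by
    rw [DemHop.LL, show i + d + 1 - i = d + 1 by omega]
  rw [h2]
  exact DemHop.main' n star hassoc hgen d i v hv hi (by omega)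
end

section
/- For any permutations w, v ∈ S_n, the Demazure product equals w ⋆ v = h_{n−1, w↖(n−1)} ∘ ⋯ ∘ h_{2, w↖2} ∘ h_{1, w↖1} (w·v), i.e. the hopping operators h_{1,w↖1}, h_{2,w↖2}, …, h_{n−1,w↖(n−1)} applied in that order to the ordinary product w·v. -/
/-- `w ↖ a`: the ordered list of entries of the one-line notation of `w` that
appear strictly to the left of the entry `a` and are greater than `a`. -/
def leftA (w : Equiv.Perm ℕ) (a : ℕ) : List ℕ :=
  ((List.range (w⁻¹ a - 1)).map fun p => w (p + 1)).filter fun q => decide (a < q)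

namespace HopAux

open Equiv List

lemma perm_inv_apply_self (w : Equiv.Perm ℕ) (k : ℕ) : w⁻¹ (w k) = k :=
  Equiv.Perm.inv_eq_iff_eq.mpr rfl

lemma perm_apply_inv_self (w : Equiv.Perm ℕ) (k : ℕ) : w (w⁻¹ k) = k :=
  (Equiv.eq_symm_apply w).mp rfl

/-- conditional swap: move `t` to `q`'s position if `q` is right of `t`. -/
def cs (t q : ℕ) (x : Equiv.Perm ℕ) : Equiv.Perm ℕ :=
  if x⁻¹ t < x⁻¹ q then Equiv.swap t q * x else x

/-- hopping as a fold of conditional swaps, processing the list from the right. -/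
def hopF (t : ℕ) (L : List ℕ) (x : Equiv.Perm ℕ) : Equiv.Perm ℕ :=
  L.foldr (cs t) x

@[simp] lemma hopF_nil (t : ℕ) (x : Equiv.Perm ℕ) : hopF t [] x = x := rfl

lemma hopF_cons (t q : ℕ) (L : List ℕ) (x : Equiv.Perm ℕ) :
    hopF t (q :: L) x = cs t q (hopF t L x) := rfl

lemma hopF_append (t : ℕ) (L₁ L₂ : List ℕ) (x : Equiv.Perm ℕ) :
    hopF t (L₁ ++ L₂) x = hopF t L₁ (hopF t L₂ x) := List.foldr_append ..

lemma inv_swap_mul (a b : ℕ) (x : Equiv.Perm ℕ) (c : ℕ) :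
    (Equiv.swap a b * x)⁻¹ c = x⁻¹ (Equiv.swap a b c) := by
  simp [mul_inv_rev, Equiv.swap_inv]

lemma cs_conj (σ : Equiv.Perm ℕ) (t q : ℕ) (x : Equiv.Perm ℕ) :
    cs (σ t) (σ q) (σ * x) = σ * cs t q x := by
  unfold cs
  have h1 : (σ * x)⁻¹ (σ t) = x⁻¹ t := by simp [mul_inv_rev]
  have h2 : (σ * x)⁻¹ (σ q) = x⁻¹ q := by simp [mul_inv_rev]
  rw [h1, h2]
  split_ifs with h
  · rw [Equiv.swap_apply_apply]; group
  · rfl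

lemma hopF_conj (σ : Equiv.Perm ℕ) (t : ℕ) (L : List ℕ) (x : Equiv.Perm ℕ) :
    hopF (σ t) (L.map σ) (σ * x) = σ * hopF t L x := by
  induction L with
  | nil => rfl
  | cons q L ih => rw [List.map_cons, hopF_cons, ih, hopF_cons, cs_conj]

lemma cs_swap_mul {t q t' q' : ℕ} (h1 : t ≠ t') (h2 : t ≠ q') (h3 : q ≠ t') (h4 : q ≠ q')
    (x : Equiv.Perm ℕ) :
    cs t q (Equiv.swap t' q' * x) = Equiv.swap t' q' * cs t q x := by
  have := cs_conj (Equiv.swap t' q') t q x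
  rwa [Equiv.swap_apply_of_ne_of_ne h1 h2, Equiv.swap_apply_of_ne_of_ne h3 h4] at this

lemma cs_inv_apply {t q c : ℕ} (h1 : c ≠ t) (h2 : c ≠ q) (x : Equiv.Perm ℕ) :
    (cs t q x)⁻¹ c = x⁻¹ c := by
  unfold cs
  split_ifs
  · rw [inv_swap_mul, Equiv.swap_apply_of_ne_of_ne h1 h2]
  · rfl

lemma cs_comm {t q t' q' : ℕ} (h1 : t ≠ t') (h2 : t ≠ q') (h3 : q ≠ t') (h4 : q ≠ q')
    (x : Equiv.Perm ℕ) :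
    cs t q (cs t' q' x) = cs t' q' (cs t q x) := by
  by_cases hc : x⁻¹ t' < x⁻¹ q'
  · rw [show cs t' q' x = Equiv.swap t' q' * x from if_pos hc, cs_swap_mul h1 h2 h3 h4,
      show cs t' q' (cs t q x) = Equiv.swap t' q' * cs t q x from
        if_pos (by rwa [cs_inv_apply (Ne.symm h1) (Ne.symm h3), cs_inv_apply (Ne.symm h2) (Ne.symm h4)])]
  · rw [show cs t' q' x = x from if_neg hc,
      show cs t' q' (cs t q x) = cs t q x from
        if_neg (by rwa [cs_inv_apply (Ne.symm h1) (Ne.symm h3), cs_inv_apply (Ne.symm h2) (Ne.symm h4)])]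

lemma cs_hopF_comm {t q t' : ℕ} {L' : List ℕ} (h1 : t ≠ t') (h2 : q ≠ t')
    (h3 : t ∉ L') (h4 : q ∉ L') (x : Equiv.Perm ℕ) :
    cs t q (hopF t' L' x) = hopF t' L' (cs t q x) := by
  induction L' with
  | nil => rfl
  | cons q' L' ih =>
    have h3' : t ∉ L' := fun h => h3 (List.mem_cons_of_mem _ h)
    have h4' : q ∉ L' := fun h => h4 (List.mem_cons_of_mem _ h)
    rw [hopF_cons, hopF_cons, cs_comm h1 (fun h => h3 (h ▸ List.mem_cons_self)) h2
      (fun h => h4 (h ▸ List.mem_cons_self)), ih h3' h4']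

lemma hopF_hopF_comm {t t' : ℕ} {L L' : List ℕ}
    (hd : ∀ a ∈ t :: L, ∀ b ∈ t' :: L', a ≠ b) (x : Equiv.Perm ℕ) :
    hopF t L (hopF t' L' x) = hopF t' L' (hopF t L x) := by
  induction L with
  | nil => rfl
  | cons q L ih =>
    have hq : q ∈ t :: q :: L := List.mem_cons_of_mem _ (List.mem_cons_self)
    have ht : t ∈ t :: q :: L := List.mem_cons_self
    have ih' : hopF t L (hopF t' L' x) = hopF t' L' (hopF t L x) := by
      refine ih fun a ha => ?_
      rcases List.mem_cons.1 ha with h | h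
      · exact hd a (h ▸ List.mem_cons_self)
      · exact hd a (List.mem_cons_of_mem _ (List.mem_cons_of_mem _ h))
    rw [hopF_cons, ih', hopF_cons,
      cs_hopF_comm (hd t ht t' (List.mem_cons_self)) (hd q hq t' (List.mem_cons_self))
        (fun h => hd t ht t (List.mem_cons_of_mem _ h) rfl)
        (fun h => hd q hq q (List.mem_cons_of_mem _ h) rfl)]


lemma cs_pos {t q : ℕ} {x : Equiv.Perm ℕ} (h : x⁻¹ t < x⁻¹ q) :
    cs t q x = Equiv.swap t q * x := if_pos h

lemma cs_neg {t q : ℕ} {x : Equiv.Perm ℕ} (h : ¬ x⁻¹ t < x⁻¹ q) :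
    cs t q x = x := if_neg h

lemma map_id' {f : ℕ → ℕ} : ∀ L : List ℕ, (∀ q ∈ L, f q = q) → L.map f = L
  | [], _ => rfl
  | q :: L, h => by
      rw [List.map_cons, h q (List.mem_cons_self),
        map_id' L (fun r hr => h r (List.mem_cons_of_mem _ hr))]

lemma atom (k a : ℕ) (ha1 : a ≠ k) (ha2 : a ≠ k + 1) (x : Equiv.Perm ℕ) :
    cs k (k+1) (cs (k+1) a (cs k a x)) = cs (k+1) a (cs k a (cs k (k+1) x)) := by
  have hik : x⁻¹ k ≠ x⁻¹ (k+1) := fun h => by have := x⁻¹.injective h; omega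
  have hia : x⁻¹ k ≠ x⁻¹ a := fun h => ha1 (x⁻¹.injective h).symm
  have hja : x⁻¹ (k+1) ≠ x⁻¹ a := fun h => ha2 (x⁻¹.injective h).symm
  have swka_k1 : Equiv.swap k a (k+1) = k+1 :=
    Equiv.swap_apply_of_ne_of_ne (by omega) (Ne.symm ha2)
  have swk_a : Equiv.swap k (k+1) a = a := Equiv.swap_apply_of_ne_of_ne ha1 ha2
  have swk1a_k : Equiv.swap (k+1) a k = k :=
    Equiv.swap_apply_of_ne_of_ne (by omega) (Ne.symm ha1)
  have hu1 : ∀ y : Equiv.Perm ℕ, (Equiv.swap k a * y)⁻¹ k = y⁻¹ a := fun y => by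
    rw [inv_swap_mul, Equiv.swap_apply_left]
  have hu2 : ∀ y : Equiv.Perm ℕ, (Equiv.swap k a * y)⁻¹ (k+1) = y⁻¹ (k+1) := fun y => by
    rw [inv_swap_mul, swka_k1]
  have hu3 : ∀ y : Equiv.Perm ℕ, (Equiv.swap k a * y)⁻¹ a = y⁻¹ k := fun y => by
    rw [inv_swap_mul, Equiv.swap_apply_right]
  have hs1 : ∀ y : Equiv.Perm ℕ, (Equiv.swap k (k+1) * y)⁻¹ k = y⁻¹ (k+1) := fun y => by
    rw [inv_swap_mul, Equiv.swap_apply_left]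
  have hs2 : ∀ y : Equiv.Perm ℕ, (Equiv.swap k (k+1) * y)⁻¹ (k+1) = y⁻¹ k := fun y => by
    rw [inv_swap_mul, Equiv.swap_apply_right]
  have hs3 : ∀ y : Equiv.Perm ℕ, (Equiv.swap k (k+1) * y)⁻¹ a = y⁻¹ a := fun y => by
    rw [inv_swap_mul, swk_a]
  have hv1 : ∀ y : Equiv.Perm ℕ, (Equiv.swap (k+1) a * y)⁻¹ k = y⁻¹ k := fun y => by
    rw [inv_swap_mul, swk1a_k]
  have hv2 : ∀ y : Equiv.Perm ℕ, (Equiv.swap (k+1) a * y)⁻¹ (k+1) = y⁻¹ a := fun y => by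
    rw [inv_swap_mul, Equiv.swap_apply_left]
  have hv3 : ∀ y : Equiv.Perm ℕ, (Equiv.swap (k+1) a * y)⁻¹ a = y⁻¹ (k+1) := fun y => by
    rw [inv_swap_mul, Equiv.swap_apply_right]
  have id1 : ∀ y : Equiv.Perm ℕ,
      Equiv.swap (k+1) a * (Equiv.swap k a * (Equiv.swap k (k+1) * y)) = Equiv.swap k a * y := by
    intro y
    rw [← mul_assoc, ← mul_assoc]
    congr 1
    ext c
    simp only [Equiv.Perm.mul_apply, Equiv.swap_apply_def]
    split_ifs <;> omega
  have id2 : ∀ y : Equiv.Perm ℕ,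
      Equiv.swap (k+1) a * (Equiv.swap k (k+1) * y)
        = Equiv.swap k (k+1) * (Equiv.swap k a * y) := by
    intro y
    rw [← mul_assoc, ← mul_assoc]
    congr 1
    ext c
    simp only [Equiv.Perm.mul_apply, Equiv.swap_apply_def]
    split_ifs <;> omega
  by_cases c3 : x⁻¹ k < x⁻¹ (k+1) <;> by_cases c1 : x⁻¹ k < x⁻¹ a <;>
    by_cases c2 : x⁻¹ (k+1) < x⁻¹ a
  · -- i<j<l
    rw [cs_pos (t:=k) (q:=a) (x:=x) c1,
      cs_neg (t:=k+1) (q:=a) (x:=Equiv.swap k a * x) (by rw [hu2, hu3]; omega),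
      cs_neg (t:=k) (q:=k+1) (x:=Equiv.swap k a * x) (by rw [hu1, hu2]; omega),
      cs_pos (t:=k) (q:=k+1) (x:=x) c3,
      cs_pos (t:=k) (q:=a) (x:=Equiv.swap k (k+1) * x) (by rw [hs1, hs3]; omega),
      cs_pos (t:=k+1) (q:=a) (x:=Equiv.swap k a * (Equiv.swap k (k+1) * x))
        (by rw [hu2, hs2, hu3, hs1]; omega)]
    exact (id1 x).symm
  · -- i<l<j
    rw [cs_pos (t:=k) (q:=a) (x:=x) c1,
      cs_neg (t:=k+1) (q:=a) (x:=Equiv.swap k a * x) (by rw [hu2, hu3]; omega),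
      cs_pos (t:=k) (q:=k+1) (x:=Equiv.swap k a * x) (by rw [hu1, hu2]; omega),
      cs_pos (t:=k) (q:=k+1) (x:=x) c3,
      cs_neg (t:=k) (q:=a) (x:=Equiv.swap k (k+1) * x) (by rw [hs1, hs3]; omega),
      cs_pos (t:=k+1) (q:=a) (x:=Equiv.swap k (k+1) * x) (by rw [hs2, hs3]; omega)]
    exact (id2 x).symm
  · exfalso; omega
  · -- l<i<j
    rw [cs_neg (t:=k) (q:=a) (x:=x) c1,
      cs_neg (t:=k+1) (q:=a) (x:=x) c2,
      cs_pos (t:=k) (q:=k+1) (x:=x) c3,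
      cs_neg (t:=k) (q:=a) (x:=Equiv.swap k (k+1) * x) (by rw [hs1, hs3]; omega),
      cs_neg (t:=k+1) (q:=a) (x:=Equiv.swap k (k+1) * x) (by rw [hs2, hs3]; omega)]
  · -- j<i<l
    rw [cs_neg (t:=k) (q:=k+1) (x:=x) c3,
      cs_pos (t:=k) (q:=a) (x:=x) c1,
      cs_pos (t:=k+1) (q:=a) (x:=Equiv.swap k a * x) (by rw [hu2, hu3]; omega),
      cs_neg (t:=k) (q:=k+1) (x:=Equiv.swap (k+1) a * (Equiv.swap k a * x))
        (by rw [hv1, hu1, hv2, hu3]; omega)]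
  · exfalso; omega
  · -- j<l<i
    rw [cs_neg (t:=k) (q:=k+1) (x:=x) c3,
      cs_neg (t:=k) (q:=a) (x:=x) c1,
      cs_pos (t:=k+1) (q:=a) (x:=x) c2,
      cs_neg (t:=k) (q:=k+1) (x:=Equiv.swap (k+1) a * x) (by rw [hv1, hv2]; omega)]
  · -- l<j<i
    rw [cs_neg (t:=k) (q:=a) (x:=x) c1,
      cs_neg (t:=k+1) (q:=a) (x:=x) c2,
      cs_neg (t:=k) (q:=k+1) (x:=x) c3,
      cs_neg (t:=k) (q:=a) (x:=x) c1,
      cs_neg (t:=k+1) (q:=a) (x:=x) c2]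

lemma hopG_dem (k : ℕ) (A : List ℕ) (hnd : A.Nodup) (hgt : ∀ q ∈ A, k + 1 < q)
    (x : Equiv.Perm ℕ) :
    hopF (k+1) A (hopF k A (cs k (k+1) x)) = cs k (k+1) (hopF (k+1) A (hopF k A x)) := by
  induction A generalizing x with
  | nil => rfl
  | cons a A ih =>
    have ha : k + 1 < a := hgt a (List.mem_cons_self)
    have hnA : a ∉ A := (List.nodup_cons.1 hnd).1
    have hndA : A.Nodup := (List.nodup_cons.1 hnd).2
    have hgtA : ∀ q ∈ A, k + 1 < q := fun q hq => hgt q (List.mem_cons_of_mem _ hq)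
    have hkA : k ∉ A := fun h => by have := hgtA k h; omega
    have hform : ∀ y : Equiv.Perm ℕ, hopF (k+1) (a :: A) (hopF k (a :: A) y)
        = cs (k+1) a (cs k a (hopF (k+1) A (hopF k A y))) := by
      intro y
      rw [hopF_cons, hopF_cons]
      congr 1
      exact (cs_hopF_comm (show k ≠ k+1 by omega) (show a ≠ k+1 by omega) hkA hnA _).symm
    rw [hform, hform, ih hndA hgtA]
    exact (atom k a (by omega) (by omega) _).symm

lemma cs_dem_absorb (k : ℕ) (y : Equiv.Perm ℕ) :
    cs k (k+1) (Equiv.swap k (k+1) * y) = cs k (k+1) y := by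
  have hik : y⁻¹ k ≠ y⁻¹ (k+1) := fun h => by have := y⁻¹.injective h; omega
  unfold cs
  rw [inv_swap_mul, inv_swap_mul, Equiv.swap_apply_left, Equiv.swap_apply_right]
  split_ifs with h1 h2 h2
  · exact absurd h2 (by omega)
  · rw [← mul_assoc, Equiv.swap_mul_self, one_mul]
  · rfl
  · exact absurd (show y⁻¹ k = y⁻¹ (k+1) by omega) hik

/-- Lemma B : the middle two hopping stages. -/
lemma lemB (k : ℕ) (A M : List ℕ) (hnd : (A ++ M).Nodup) (hgt : ∀ q ∈ A ++ M, k + 1 < q)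
    (y : Equiv.Perm ℕ) :
    hopF (k+1) A (hopF k (A ++ [k+1] ++ M) (Equiv.swap k (k+1) * y))
      = cs k (k+1) (hopF (k+1) (A ++ M) (hopF k A y)) := by
  have hgtA : ∀ q ∈ A, k + 1 < q := fun q hq => hgt q (List.mem_append_left _ hq)
  have hgtM : ∀ q ∈ M, k + 1 < q := fun q hq => hgt q (List.mem_append_right _ hq)
  have hndA : A.Nodup := (List.nodup_append.1 hnd).1
  have hdisj : List.Disjoint A M := List.disjoint_of_nodup_append hnd
  have hstep2 : hopF k M (Equiv.swap k (k+1) * y) = Equiv.swap k (k+1) * hopF (k+1) M y := by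
    have := hopF_conj (Equiv.swap k (k+1)) (k+1) M y
    rwa [Equiv.swap_apply_right, show M.map (Equiv.swap k (k+1)) = M from
      map_id' M fun q hq => Equiv.swap_apply_of_ne_of_ne
        (by have := hgtM q hq; omega) (by have := hgtM q hq; omega)] at this
  calc hopF (k+1) A (hopF k (A ++ [k+1] ++ M) (Equiv.swap k (k+1) * y))
      = hopF (k+1) A (hopF k A (cs k (k+1) (hopF k M (Equiv.swap k (k+1) * y)))) := by
        rw [hopF_append, hopF_append]; rfl
    _ = hopF (k+1) A (hopF k A (cs k (k+1) (hopF (k+1) M y))) := by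
        rw [hstep2, cs_dem_absorb]
    _ = cs k (k+1) (hopF (k+1) A (hopF k A (hopF (k+1) M y))) := hopG_dem k A hndA hgtA _
    _ = cs k (k+1) (hopF (k+1) (A ++ M) (hopF k A y)) := by
        rw [hopF_append]
        congr 2
        refine hopF_hopF_comm (fun b hb c hc => ?_) y
        rcases List.mem_cons.1 hb with hb | hb <;> rcases List.mem_cons.1 hc with hc | hc
        · omega
        · have := hgtM c hc; omega
        · have := hgtA b hb; omega
        · exact fun h => hdisj hb (h ▸ hc)


/-! ### `hopA` agrees with the fold `hopF` -/

lemma mem_of_getLast?' {α : Type*} {l : List α} {a : α} (h : l.getLast? = some a) : a ∈ l := by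
  induction l with
  | nil => simp at h
  | cons b l ih =>
    cases l with
    | nil =>
      simp only [List.getLast?_singleton, Option.some.injEq] at h
      simp [h]
    | cons c l =>
      rw [List.getLast?_cons_cons] at h
      exact List.mem_cons_of_mem _ (ih h)


lemma iterate_fix {α : Type*} (f : α → α) (m : α → ℕ)
    (hf : ∀ x, f x = x ∨ m (f x) < m x) :
    ∀ N x, m x ≤ N → f (f^[N] x) = f^[N] x := by
  intro N
  induction N with
  | zero =>
    intro x hx
    rcases hf x with h | h
    · simpa using h
    · omega
  | succ N ih =>
    intro x hx
    rw [Function.iterate_succ_apply]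
    rcases hf x with h | h
    · rw [h, Function.iterate_fixed h, h]
    · exact ih (f x) (by omega)

lemma hopStepA_cases (t : ℕ) (L : List ℕ) (x : Equiv.Perm ℕ) :
    hopStepA t L x = x ∨
      ∃ q, (L.filter fun q => decide (t < q ∧ x⁻¹ t < x⁻¹ q)).getLast? = some q ∧
        hopStepA t L x = Equiv.swap t q * x := by
  unfold hopStepA
  rcases h : (L.filter fun q => decide (t < q ∧ x⁻¹ t < x⁻¹ q)).getLast? with _ | q
  · exact Or.inl rfl
  · exact Or.inr ⟨q, rfl, rfl⟩

lemma candSet_decrease (t : ℕ) (L : List ℕ) (x : Equiv.Perm ℕ) :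
    hopStepA t L x = x ∨
      ((L.filter fun q => decide (t < q ∧ (hopStepA t L x)⁻¹ t < (hopStepA t L x)⁻¹ q)).toFinset.card
        < (L.filter fun q => decide (t < q ∧ x⁻¹ t < x⁻¹ q)).toFinset.card) := by
  rcases hopStepA_cases t L x with h | ⟨q, hq, hx⟩
  · exact Or.inl h
  · right
    have hqmem : q ∈ L.filter fun q => decide (t < q ∧ x⁻¹ t < x⁻¹ q) :=
      mem_of_getLast?' hq
    have hqprop : t < q ∧ x⁻¹ t < x⁻¹ q := by
      have := List.of_mem_filter hqmem
      simpa using this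
    have hsub : (L.filter fun r => decide (t < r ∧ (hopStepA t L x)⁻¹ t < (hopStepA t L x)⁻¹ r)).toFinset
        ⊆ (L.filter fun r => decide (t < r ∧ x⁻¹ t < x⁻¹ r)).toFinset.erase q := by
      intro r hr
      rw [List.mem_toFinset, List.mem_filter] at hr
      obtain ⟨hrL, hrp⟩ := hr
      rw [decide_eq_true_eq] at hrp
      obtain ⟨htr, hpos⟩ := hrp
      rw [hx, inv_swap_mul, inv_swap_mul, Equiv.swap_apply_left] at hpos
      have hrq : r ≠ q := by
        intro h
        subst h
        rw [Equiv.swap_apply_right] at hpos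
        omega
      have hrt : r ≠ t := by omega
      rw [Equiv.swap_apply_of_ne_of_ne hrt hrq] at hpos
      rw [Finset.mem_erase, List.mem_toFinset, List.mem_filter, decide_eq_true_eq]
      exact ⟨hrq, hrL, htr, by omega⟩
    calc _ ≤ ((L.filter fun r => decide (t < r ∧ x⁻¹ t < x⁻¹ r)).toFinset.erase q).card :=
          Finset.card_le_card hsub
      _ < _ := Finset.card_erase_lt_of_mem (List.mem_toFinset.2 hqmem)

lemma hopStepA_fix_of_empty (t : ℕ) (L : List ℕ) (x : Equiv.Perm ℕ)
    (h : (L.filter fun q => decide (t < q ∧ x⁻¹ t < x⁻¹ q)).toFinset.card = 0) :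
    hopStepA t L x = x := by
  rcases hopStepA_cases t L x with h' | ⟨q, hq, hx⟩
  · exact h'
  · exfalso
    have hqmem : q ∈ L.filter fun q => decide (t < q ∧ x⁻¹ t < x⁻¹ q) :=
      mem_of_getLast?' hq
    have : q ∈ (L.filter fun q => decide (t < q ∧ x⁻¹ t < x⁻¹ q)).toFinset :=
      List.mem_toFinset.2 hqmem
    rw [Finset.card_eq_zero] at h
    rw [h] at this
    exact absurd this (Finset.notMem_empty q)

lemma hopA_fix (t : ℕ) (L : List ℕ) (x : Equiv.Perm ℕ) :
    hopStepA t L (hopA t L x) = hopA t L x := by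
  unfold hopA
  refine iterate_fix (hopStepA t L)
    (fun y => (L.filter fun q => decide (t < q ∧ y⁻¹ t < y⁻¹ q)).toFinset.card)
    (fun y => ?_) L.length x ?_
  · rcases candSet_decrease t L y with h | h
    · exact Or.inl h
    · exact Or.inr h
  · calc (L.filter fun q => decide (t < q ∧ x⁻¹ t < x⁻¹ q)).toFinset.card
        ≤ L.toFinset.card := Finset.card_le_card (fun r hr => by
          rw [List.mem_toFinset] at *
          exact List.mem_of_mem_filter hr)
      _ ≤ L.length := L.toFinset_card_le

lemma hopStepA_append_noncand (t q : ℕ) (L : List ℕ) (x : Equiv.Perm ℕ)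
    (h : ¬ (t < q ∧ x⁻¹ t < x⁻¹ q)) :
    hopStepA t (L ++ [q]) x = hopStepA t L x := by
  unfold hopStepA
  rw [List.filter_append]
  have : List.filter (fun r => decide (t < r ∧ x⁻¹ t < x⁻¹ r)) [q] = [] := by
    simpa using h
  rw [this, List.append_nil]

lemma noncand_preserved (t q : ℕ) (L : List ℕ) (x : Equiv.Perm ℕ) (htq : t < q)
    (h : ¬ x⁻¹ t < x⁻¹ q) : ¬ (hopStepA t L x)⁻¹ t < (hopStepA t L x)⁻¹ q := by
  rcases hopStepA_cases t L x with h' | ⟨r, hr, hx⟩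
  · rw [h']; exact h
  · have hrmem : r ∈ L.filter fun r => decide (t < r ∧ x⁻¹ t < x⁻¹ r) :=
      mem_of_getLast?' hr
    have hrprop : t < r ∧ x⁻¹ t < x⁻¹ r := by
      have := List.of_mem_filter hrmem
      simpa using this
    have hqr : q ≠ r := fun hh => h (hh ▸ hrprop.2)
    have hqt : q ≠ t := by omega
    rw [hx, inv_swap_mul, inv_swap_mul, Equiv.swap_apply_left,
      Equiv.swap_apply_of_ne_of_ne hqt hqr]
    omega

lemma iterate_step_append (t q : ℕ) (L : List ℕ) (htq : t < q) :
    ∀ (m : ℕ) (x : Equiv.Perm ℕ), ¬ x⁻¹ t < x⁻¹ q →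
      (hopStepA t (L ++ [q]))^[m] x = (hopStepA t L)^[m] x := by
  intro m
  induction m with
  | zero => intro x _; rfl
  | succ m ih =>
    intro x hx
    rw [Function.iterate_succ_apply, Function.iterate_succ_apply,
      hopStepA_append_noncand t q L x (by tauto), ih _ (noncand_preserved t q L x htq hx)]

lemma hopA_eq_hopF (t : ℕ) (L : List ℕ) (hall : ∀ q ∈ L, t < q) (x : Equiv.Perm ℕ) :
    hopA t L x = hopF t L x := by
  induction L using List.reverseRecOn generalizing x with
  | nil => rfl
  | append_singleton L q ih =>
    have htq : t < q := hall q (List.mem_append_right _ (List.mem_cons_self))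
    have hallL : ∀ r ∈ L, t < r := fun r hr => hall r (List.mem_append_left _ hr)
    have hF : hopF t (L ++ [q]) x = hopF t L (cs t q x) := hopF_append ..
    by_cases hc : x⁻¹ t < x⁻¹ q
    · have hstep : hopStepA t (L ++ [q]) x = Equiv.swap t q * x := by
        unfold hopStepA
        rw [List.filter_append, show List.filter (fun r => decide (t < r ∧ x⁻¹ t < x⁻¹ r)) [q]
            = [q] by simpa [htq] using hc, List.getLast?_concat]
      have hnc : ¬ (Equiv.swap t q * x)⁻¹ t < (Equiv.swap t q * x)⁻¹ q := by
        rw [inv_swap_mul, inv_swap_mul, Equiv.swap_apply_left, Equiv.swap_apply_right]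
        omega
      calc hopA t (L ++ [q]) x
          = (hopStepA t (L ++ [q]))^[L.length] (hopStepA t (L ++ [q]) x) := by
            unfold hopA
            rw [List.length_append, List.length_singleton, ← Function.iterate_succ_apply]
        _ = (hopStepA t (L ++ [q]))^[L.length] (Equiv.swap t q * x) := by rw [hstep]
        _ = (hopStepA t L)^[L.length] (Equiv.swap t q * x) :=
            iterate_step_append t q L htq _ _ hnc
        _ = hopF t L (Equiv.swap t q * x) := ih hallL _
        _ = hopF t (L ++ [q]) x := by rw [hF, cs_pos hc]
    · calc hopA t (L ++ [q]) x
          = (hopStepA t (L ++ [q]))^[L.length + 1] x := by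
            unfold hopA
            rw [List.length_append, List.length_singleton]
        _ = (hopStepA t L)^[L.length + 1] x := iterate_step_append t q L htq _ _ hc
        _ = hopStepA t L ((hopStepA t L)^[L.length] x) := Function.iterate_succ_apply' ..
        _ = hopStepA t L (hopA t L x) := rfl
        _ = hopA t L x := hopA_fix t L x
        _ = hopF t L x := ih hallL x
        _ = hopF t (L ++ [q]) x := by rw [hF, cs_neg hc]


/-! ### `InSymm` and `leftA` basics -/

lemma leftA_gt {w : Equiv.Perm ℕ} {a q : ℕ} (h : q ∈ leftA w a) : a < q := by
  unfold leftA at h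
  have := List.of_mem_filter h
  simpa using this

lemma leftA_nodup (w : Equiv.Perm ℕ) (a : ℕ) : (leftA w a).Nodup := by
  apply List.Nodup.filter
  refine List.Nodup.map ?_ (List.nodup_range)
  intro p p' h
  have := w.injective h
  omega

lemma insymm_apply_mem {n : ℕ} {w : Equiv.Perm ℕ} (hw : InSymm n w) {c : ℕ}
    (hc : c ∈ Finset.Icc 1 n) : w c ∈ Finset.Icc 1 n := by
  by_contra h
  have h2 : w (w c) = w c := hw _ h
  have h3 : w c = c := w.injective h2
  rw [h3] at h
  exact h hc

lemma insymm_inv {n : ℕ} {w : Equiv.Perm ℕ} (hw : InSymm n w) : InSymm n w⁻¹ := by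
  intro k hk
  have h := hw k hk
  conv_lhs => rw [← h]
  rw [perm_inv_apply_self]

lemma insymm_inv_mem {n : ℕ} {w : Equiv.Perm ℕ} (hw : InSymm n w) {c : ℕ}
    (hc : c ∈ Finset.Icc 1 n) : w⁻¹ c ∈ Finset.Icc 1 n :=
  insymm_apply_mem (insymm_inv hw) hc

lemma insymm_mul {n : ℕ} {w v : Equiv.Perm ℕ} (hw : InSymm n w) (hv : InSymm n v) :
    InSymm n (w * v) := by
  intro k hk
  rw [Equiv.Perm.mul_apply, hv k hk, hw k hk]

lemma insymm_one {n : ℕ} : InSymm n 1 := fun _ _ => rfl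

lemma insymm_swap {n t q : ℕ} (ht : t ∈ Finset.Icc 1 n) (hq : q ∈ Finset.Icc 1 n) :
    InSymm n (Equiv.swap t q) := fun k hk =>
  Equiv.swap_apply_of_ne_of_ne (fun h => hk (h ▸ ht)) (fun h => hk (h ▸ hq))

lemma insymm_sA {n k : ℕ} (hk1 : 1 ≤ k) (hk2 : k + 1 ≤ n) : InSymm n (sA k) :=
  insymm_swap (Finset.mem_Icc.2 ⟨hk1, by omega⟩) (Finset.mem_Icc.2 ⟨by omega, hk2⟩)

lemma insymm_cs {n t q : ℕ} {x : Equiv.Perm ℕ} (hx : InSymm n x)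
    (ht : t ∈ Finset.Icc 1 n) (hq : q ∈ Finset.Icc 1 n) : InSymm n (cs t q x) := by
  unfold cs
  split_ifs
  · exact insymm_mul (insymm_swap ht hq) hx
  · exact hx

lemma insymm_hopF {n t : ℕ} {L : List ℕ} {x : Equiv.Perm ℕ} (hx : InSymm n x)
    (ht : t ∈ Finset.Icc 1 n) (hL : ∀ q ∈ L, q ∈ Finset.Icc 1 n) :
    InSymm n (hopF t L x) := by
  induction L with
  | nil => exact hx
  | cons q L ih =>
    rw [hopF_cons]
    exact insymm_cs (ih fun r hr => hL r (List.mem_cons_of_mem _ hr)) ht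
      (hL q (List.mem_cons_self))

lemma leftA_mem_Icc {n : ℕ} {w : Equiv.Perm ℕ} (hw : InSymm n w) {a : ℕ}
    (ha1 : 1 ≤ a) (ha2 : a ≤ n) {q : ℕ} (hq : q ∈ leftA w a) : q ∈ Finset.Icc 1 n := by
  unfold leftA at hq
  obtain ⟨p, hp, rfl⟩ := List.mem_map.1 (List.mem_of_mem_filter hq)
  rw [List.mem_range] at hp
  have hinv : w⁻¹ a ∈ Finset.Icc 1 n := insymm_inv_mem hw (Finset.mem_Icc.2 ⟨ha1, ha2⟩)
  rw [Finset.mem_Icc] at hinv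
  exact insymm_apply_mem hw (Finset.mem_Icc.2 ⟨by omega, by omega⟩)

lemma leftA_nil_of_ge {n : ℕ} {w : Equiv.Perm ℕ} (hw : InSymm n w) {a : ℕ}
    (ha1 : 1 ≤ a) (han : n ≤ a) : leftA w a = [] := by
  unfold leftA
  rw [List.filter_eq_nil_iff]
  intro q hq
  obtain ⟨p, hp, rfl⟩ := List.mem_map.1 hq
  rw [List.mem_range] at hp
  simp only [decide_eq_true_eq, not_lt]
  by_cases hmem : (p + 1) ∈ Finset.Icc 1 n
  · have := Finset.mem_Icc.1 (insymm_apply_mem hw hmem)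
    omega
  · rw [hw _ hmem]
    rw [Finset.mem_Icc] at hmem
    by_cases hA : a ∈ Finset.Icc 1 n
    · have := Finset.mem_Icc.1 (insymm_inv_mem hw hA)
      omega
    · have : w⁻¹ a = a := insymm_inv hw a hA
      omega

lemma leftA_one (a : ℕ) : leftA 1 a = [] := by
  unfold leftA
  rw [List.filter_eq_nil_iff]
  intro q hq
  obtain ⟨p, hp, rfl⟩ := List.mem_map.1 hq
  rw [List.mem_range] at hp
  simp only [inv_one, Equiv.Perm.one_apply] at hp
  show ¬ (decide (a < p + 1) = true)
  simp only [decide_eq_true_eq, not_lt]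
  omega

lemma leftA_swap_map (k : ℕ) (w : Equiv.Perm ℕ) (a : ℕ) (ha1 : a ≠ k) (ha2 : a ≠ k + 1) :
    leftA (sA k * w) a = (leftA w a).map (sA k) := by
  unfold leftA
  have hinv : (sA k * w)⁻¹ a = w⁻¹ a := by
    simp [mul_inv_rev, sA, Equiv.swap_inv, Equiv.Perm.mul_apply,
      Equiv.swap_apply_of_ne_of_ne ha1 ha2]
  rw [hinv, show ((List.range (w⁻¹ a - 1)).map fun p => (sA k * w) (p + 1))
      = ((List.range (w⁻¹ a - 1)).map fun p => w (p + 1)).map (sA k) by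
    rw [List.map_map]; rfl, List.filter_map]
  congr 1
  apply List.filter_congr
  intro q _
  show decide (a < sA k q) = decide (a < q)
  apply decide_eq_decide.2
  unfold sA
  rw [Equiv.swap_apply_def]
  split_ifs <;> omega

lemma middle_lists (k : ℕ) (w : Equiv.Perm ℕ) (hp1 : 1 ≤ w⁻¹ (k+1))
    (hdesc : w⁻¹ (k+1) < w⁻¹ k) :
    ∃ A M : List ℕ,
      leftA w (k+1) = A ∧ leftA (sA k * w) k = A ∧ leftA (sA k * w) (k+1) = A ++ M ∧
      leftA w k = (A ++ [k+1]) ++ M ∧ (A ++ M).Nodup ∧ (∀ q ∈ A ++ M, k + 1 < q) := by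
  set p1 := w⁻¹ (k+1) with hp1def
  set p2 := w⁻¹ k with hp2def
  have hkk : (k : ℕ) ≠ k + 1 := by omega
  have hw'k : (sA k * w)⁻¹ k = p1 := by
    simp [mul_inv_rev, sA, Equiv.swap_inv, Equiv.Perm.mul_apply, Equiv.swap_apply_left, hp1def]
  have hw'k1 : (sA k * w)⁻¹ (k+1) = p2 := by
    simp [mul_inv_rev, sA, Equiv.swap_inv, Equiv.Perm.mul_apply, Equiv.swap_apply_right, hp2def]
  have hwp1 : w p1 = k + 1 := perm_apply_inv_self w (k+1)
  have hwp2 : w p2 = k := perm_apply_inv_self w k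
  have hw'p1 : (sA k * w) p1 = k := by
    rw [Equiv.Perm.mul_apply, hwp1]
    exact Equiv.swap_apply_right k (k+1)
  -- entries at positions avoiding p1 p2
  have hval : ∀ p : ℕ, p + 1 ≠ p1 → p + 1 ≠ p2 →
      (sA k * w) (p+1) = w (p+1) ∧ w (p+1) ≠ k ∧ w (p+1) ≠ k + 1 := by
    intro p h1 h2
    have e1 : w (p+1) ≠ k := fun h => h2 (by rw [hp2def, ← h, perm_inv_apply_self])
    have e2 : w (p+1) ≠ k + 1 := fun h => h1 (by rw [hp1def, ← h, perm_inv_apply_self])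
    refine ⟨?_, e1, e2⟩
    rw [Equiv.Perm.mul_apply]
    exact Equiv.swap_apply_of_ne_of_ne e1 e2
  have h11 : p1 - 1 + 1 = p1 := by omega
  have hsplit : List.range (p2 - 1)
      = List.range (p1 - 1) ++ ((p1 - 1) :: List.range' p1 (p2 - 1 - p1)) := by
    have hjoin : List.range' 0 (p1 - 1) ++ List.range' (0 + (p1 - 1)) ((p2 - 1 - p1) + 1)
        = List.range' 0 (p2 - 1) := by
      rw [List.range'_append_1]
      congr 1
      omega
    rw [List.range_eq_range', List.range_eq_range', ← hjoin, Nat.zero_add,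
      List.range'_succ, h11]
  have hmap1 : (List.range (p1 - 1)).map (fun p => (sA k * w) (p + 1))
      = (List.range (p1 - 1)).map (fun p => w (p + 1)) := by
    apply List.map_congr_left
    intro p hp
    rw [List.mem_range] at hp
    exact (hval p (by omega) (by omega)).1
  have hmap2 : (List.range' p1 (p2 - 1 - p1)).map (fun p => (sA k * w) (p + 1))
      = (List.range' p1 (p2 - 1 - p1)).map (fun p => w (p + 1)) := by
    apply List.map_congr_left
    intro p hp
    rw [List.mem_range'] at hp
    obtain ⟨i, hi, rfl⟩ := hp
    exact (hval (p1 + 1 * i) (by omega) (by omega)).1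
  have hfc1 : List.filter (fun q => decide (k < q)) ((List.range (p1 - 1)).map fun p => w (p + 1))
      = List.filter (fun q => decide (k + 1 < q)) ((List.range (p1 - 1)).map fun p => w (p + 1)) := by
    apply List.filter_congr
    intro q hq
    obtain ⟨p, hp, rfl⟩ := List.mem_map.1 hq
    rw [List.mem_range] at hp
    obtain ⟨-, e1, e2⟩ := hval p (by omega) (by omega)
    apply decide_eq_decide.2
    omega
  have hfc2 : List.filter (fun q => decide (k < q)) ((List.range' p1 (p2 - 1 - p1)).map fun p => w (p + 1))
      = List.filter (fun q => decide (k + 1 < q)) ((List.range' p1 (p2 - 1 - p1)).map fun p => w (p + 1)) := by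
    apply List.filter_congr
    intro q hq
    obtain ⟨p, hp, rfl⟩ := List.mem_map.1 hq
    rw [List.mem_range'] at hp
    obtain ⟨i, hi, rfl⟩ := hp
    obtain ⟨-, e1, e2⟩ := hval (p1 + 1 * i) (by omega) (by omega)
    apply decide_eq_decide.2
    omega
  have key2 : leftA (sA k * w) (k+1)
      = ((List.range (p1 - 1)).map fun p => w (p + 1)).filter (fun q => decide (k+1 < q))
        ++ ((List.range' p1 (p2 - 1 - p1)).map fun p => w (p + 1)).filter (fun q => decide (k+1 < q)) := by
    unfold leftA
    rw [hw'k1, hsplit, List.map_append, List.filter_append, hmap1, List.map_cons,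
      show (sA k * w) (p1 - 1 + 1) = k from by rw [h11, hw'p1],
      List.filter_cons_of_neg (by simp), hmap2]
  refine ⟨((List.range (p1 - 1)).map fun p => w (p + 1)).filter (fun q => decide (k+1 < q)),
    ((List.range' p1 (p2 - 1 - p1)).map fun p => w (p + 1)).filter (fun q => decide (k+1 < q)),
    rfl, ?_, key2, ?_, key2 ▸ leftA_nodup (sA k * w) (k+1),
    fun q hq => leftA_gt (w := sA k * w) (a := k+1) (by rw [key2]; exact hq)⟩
  · unfold leftA
    rw [hw'k, hmap1]
    exact hfc1
  · unfold leftA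
    rw [← hp2def, hsplit, List.map_append, List.filter_append, hfc1, List.map_cons,
      show w (p1 - 1 + 1) = k + 1 from by rw [h11, hwp1],
      List.filter_cons_of_pos (by simp), hfc2, List.append_assoc]
    rfl


/-! ### Length equals inversion number -/

noncomputable def invSet (n : ℕ) (u : Equiv.Perm ℕ) : Finset (ℕ × ℕ) :=
  (Finset.Icc 1 n ×ˢ Finset.Icc 1 n).filter fun p => p.1 < p.2 ∧ u p.2 < u p.1

noncomputable def invA (n : ℕ) (u : Equiv.Perm ℕ) : ℕ := (invSet n u).card

lemma invA_one (n : ℕ) : invA n 1 = 0 := by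
  unfold invA invSet
  rw [Finset.card_eq_zero, Finset.filter_eq_empty_iff]
  rintro ⟨i, j⟩ -
  simp only [Equiv.Perm.one_apply]
  omega

lemma swap_lt_iff {k c d : ℕ} (h1 : ¬(c = k ∧ d = k + 1)) (h2 : ¬(c = k + 1 ∧ d = k)) :
    (sA k d < sA k c ↔ d < c) := by
  unfold sA
  rw [Equiv.swap_apply_def, Equiv.swap_apply_def]
  split_ifs <;> omega

lemma invSet_swap_lt {n k : ℕ} {u : Equiv.Perm ℕ} (hk1 : 1 ≤ k) (hk2 : k + 1 ≤ n)
    (hu : InSymm n u) (hlt : u⁻¹ k < u⁻¹ (k + 1)) :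
    invSet n (sA k * u) = insert (u⁻¹ k, u⁻¹ (k + 1)) (invSet n u)
      ∧ (u⁻¹ k, u⁻¹ (k + 1)) ∉ invSet n u := by
  have hi0 : u⁻¹ k ∈ Finset.Icc 1 n := insymm_inv_mem hu (Finset.mem_Icc.2 ⟨hk1, by omega⟩)
  have hj0 : u⁻¹ (k + 1) ∈ Finset.Icc 1 n := insymm_inv_mem hu (Finset.mem_Icc.2 ⟨by omega, hk2⟩)
  constructor
  · apply Finset.ext
    rintro ⟨i, j⟩
    simp only [invSet, Finset.mem_filter, Finset.mem_product, Finset.mem_insert, Prod.mk.injEq]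
    simp only [Equiv.Perm.mul_apply]
    constructor
    · rintro ⟨⟨hi, hj⟩, hij, hswap⟩
      by_cases hc : i = u⁻¹ k ∧ j = u⁻¹ (k + 1)
      · exact Or.inl hc
      · refine Or.inr ⟨⟨hi, hj⟩, hij, ?_⟩
        have e1 : ¬(u i = k ∧ u j = k + 1) := by
          rintro ⟨ha, hb⟩
          exact hc ⟨by rw [← ha, perm_inv_apply_self], by rw [← hb, perm_inv_apply_self]⟩
        have e2 : ¬(u i = k + 1 ∧ u j = k) := by
          rintro ⟨ha, hb⟩
          have : i = u⁻¹ (k + 1) := by rw [← ha, perm_inv_apply_self]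
          have : j = u⁻¹ k := by rw [← hb, perm_inv_apply_self]
          omega
        exact (swap_lt_iff e1 e2).1 hswap
    · rintro (⟨hi, hj⟩ | ⟨⟨hi, hj⟩, hij, hinv⟩)
      · subst hi; subst hj
        refine ⟨⟨hi0, hj0⟩, hlt, ?_⟩
        rw [perm_apply_inv_self, perm_apply_inv_self]
        unfold sA
        rw [Equiv.swap_apply_left, Equiv.swap_apply_right]
        omega
      · refine ⟨⟨hi, hj⟩, hij, ?_⟩
        have e1 : ¬(u i = k ∧ u j = k + 1) := by
          rintro ⟨ha, hb⟩
          rw [ha, hb] at hinv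
          omega
        have e2 : ¬(u i = k + 1 ∧ u j = k) := by
          rintro ⟨ha, hb⟩
          have hii : i = u⁻¹ (k + 1) := by rw [← ha, perm_inv_apply_self]
          have hjj : j = u⁻¹ k := by rw [← hb, perm_inv_apply_self]
          omega
        exact (swap_lt_iff e1 e2).2 hinv
  · simp only [invSet, Finset.mem_filter, Finset.mem_product]
    rintro ⟨-, -, hbad⟩
    rw [perm_apply_inv_self, perm_apply_inv_self] at hbad
    omega

lemma invA_swap_lt {n k : ℕ} {u : Equiv.Perm ℕ} (hk1 : 1 ≤ k) (hk2 : k + 1 ≤ n)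
    (hu : InSymm n u) (hlt : u⁻¹ k < u⁻¹ (k + 1)) :
    invA n (sA k * u) = invA n u + 1 := by
  obtain ⟨he, hn⟩ := invSet_swap_lt hk1 hk2 hu hlt
  unfold invA
  rw [he, Finset.card_insert_of_notMem hn]

lemma sA_inv_apply (k c : ℕ) (u : Equiv.Perm ℕ) : (sA k * u)⁻¹ c = u⁻¹ (sA k c) := by
  unfold sA
  exact inv_swap_mul k (k+1) u c

lemma sA_mul_sA_mul (k : ℕ) (u : Equiv.Perm ℕ) : sA k * (sA k * u) = u := by
  unfold sA
  rw [← mul_assoc, Equiv.swap_mul_self, one_mul]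

lemma invA_swap_gt {n k : ℕ} {u : Equiv.Perm ℕ} (hk1 : 1 ≤ k) (hk2 : k + 1 ≤ n)
    (hu : InSymm n u) (hgt : u⁻¹ (k + 1) < u⁻¹ k) :
    invA n u = invA n (sA k * u) + 1 := by
  have hu' : InSymm n (sA k * u) := insymm_mul (insymm_sA hk1 hk2) hu
  have h1 : (sA k * u)⁻¹ k = u⁻¹ (k + 1) := by
    rw [sA_inv_apply]
    unfold sA
    rw [Equiv.swap_apply_left]
  have h2 : (sA k * u)⁻¹ (k + 1) = u⁻¹ k := by
    rw [sA_inv_apply]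
    unfold sA
    rw [Equiv.swap_apply_right]
  have := invA_swap_lt hk1 hk2 hu' (by rw [h1, h2]; exact hgt)
  rwa [sA_mul_sA_mul] at this

lemma insymm_word {n : ℕ} (l : List ℕ) (hl : ∀ i ∈ l, 1 ≤ i ∧ i + 1 ≤ n) :
    InSymm n (l.map sA).prod := by
  induction l with
  | nil => exact insymm_one
  | cons i l ih =>
    rw [List.map_cons, List.prod_cons]
    obtain ⟨h1, h2⟩ := hl i (List.mem_cons_self)
    exact insymm_mul (insymm_sA h1 h2) (ih fun j hj => hl j (List.mem_cons_of_mem _ hj))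

lemma invA_le_word {n : ℕ} (l : List ℕ) (hl : ∀ i ∈ l, 1 ≤ i ∧ i + 1 ≤ n) :
    invA n (l.map sA).prod ≤ l.length := by
  induction l with
  | nil =>
    rw [List.map_nil, List.prod_nil, invA_one]
    simp
  | cons i l ih =>
    rw [List.map_cons, List.prod_cons]
    obtain ⟨h1, h2⟩ := hl i (List.mem_cons_self)
    have hrest := insymm_word l (fun j hj => hl j (List.mem_cons_of_mem _ hj))
    have ihl := ih fun j hj => hl j (List.mem_cons_of_mem _ hj)
    set r := (l.map sA).prod
    rcases lt_trichotomy (r⁻¹ i) (r⁻¹ (i + 1)) with h | h | h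
    · rw [invA_swap_lt h1 h2 hrest h]
      simpa using ihl
    · exact absurd (r⁻¹.injective h) (by omega)
    · have := invA_swap_gt h1 h2 hrest h
      simp only [List.length_cons]
      omega

lemma no_descent_eq_one {n : ℕ} {u : Equiv.Perm ℕ} (hu : InSymm n u)
    (h : ∀ k, 1 ≤ k → k + 1 ≤ n → u⁻¹ k < u⁻¹ (k + 1)) : u = 1 := by
  have hui : InSymm n u⁻¹ := insymm_inv hu
  have hup : ∀ j, 1 ≤ j → j ≤ n → j ≤ u⁻¹ j := by
    intro j
    induction j with
    | zero => omega
    | succ j ih =>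
      intro _ hj
      rcases Nat.eq_zero_or_pos j with hj0 | hj0
      · have := Finset.mem_Icc.1 (insymm_inv_mem hu
          (Finset.mem_Icc.2 (⟨by omega, hj⟩ : 1 ≤ j + 1 ∧ j + 1 ≤ n)))
        omega
      · have h1 := ih (by omega) (by omega)
        have h2 := h j (by omega) (by omega)
        omega
  have hdown : ∀ d j, 1 ≤ j → j ≤ n → n - j = d → u⁻¹ j ≤ j := by
    intro d
    induction d with
    | zero =>
      intro j h1 h2 h3
      have hjn : j = n := by omega
      subst hjn
      exact (Finset.mem_Icc.1 (insymm_inv_mem hu (Finset.mem_Icc.2 ⟨h1, by omega⟩))).2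
    | succ d ih =>
      intro j h1 h2 h3
      have h4 := ih (j + 1) (by omega) (by omega) (by omega)
      have h5 := h j h1 (by omega)
      omega
  have : u⁻¹ = 1 := by
    apply Equiv.ext
    intro c
    by_cases hc : c ∈ Finset.Icc 1 n
    · rw [Finset.mem_Icc] at hc
      have := hup c hc.1 hc.2
      have := hdown (n - c) c hc.1 hc.2 rfl
      simp only [Equiv.Perm.one_apply]
      omega
    · rw [hui c hc]
      rfl
  rw [← inv_inv u, this, inv_one]

lemma exists_word {n : ℕ} : ∀ (m : ℕ) (u : Equiv.Perm ℕ), InSymm n u → invA n u = m →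
    ∃ l : List ℕ, l.length = m ∧ (∀ i ∈ l, 1 ≤ i ∧ i + 1 ≤ n) ∧ (l.map sA).prod = u := by
  intro m
  induction m using Nat.strong_induction_on with
  | _ m ih =>
    intro u hu hm
    by_cases hd : ∃ k, 1 ≤ k ∧ k + 1 ≤ n ∧ u⁻¹ (k + 1) < u⁻¹ k
    · obtain ⟨k, hk1, hk2, hk⟩ := hd
      have hstep := invA_swap_gt hk1 hk2 hu hk
      have hu' : InSymm n (sA k * u) := insymm_mul (insymm_sA hk1 hk2) hu
      obtain ⟨l, hlen, hvalid, hprod⟩ := ih (invA n (sA k * u)) (by omega) (sA k * u) hu' rfl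
      refine ⟨k :: l, ?_, ?_, ?_⟩
      · simp only [List.length_cons]
        omega
      · intro i hi
        rcases List.mem_cons.1 hi with h | h
        · subst h; exact ⟨hk1, hk2⟩
        · exact hvalid i h
      · rw [List.map_cons, List.prod_cons, hprod, sA_mul_sA_mul]
    · push_neg at hd
      have : u = 1 := by
        apply no_descent_eq_one hu
        intro k h1 h2
        have h3 := hd k h1 h2
        have h4 : u⁻¹ k ≠ u⁻¹ (k + 1) := fun h => by have := u⁻¹.injective h; omega
        omega
      subst this
      refine ⟨[], ?_, by simp, by simp⟩
      rw [invA_one] at hm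
      simp [← hm]

lemma lengthA_eq_invA {n : ℕ} {u : Equiv.Perm ℕ} (hu : InSymm n u) :
    lengthA n u = invA n u := by
  unfold lengthA
  apply _root_.le_antisymm
  · obtain ⟨l, hlen, hvalid, hprod⟩ := exists_word (invA n u) u hu rfl
    exact Nat.sInf_le ⟨l, hlen, hvalid, hprod⟩
  · apply le_csInf
    · obtain ⟨l, hlen, hvalid, hprod⟩ := exists_word (invA n u) u hu rfl
      exact ⟨invA n u, l, hlen, hvalid, hprod⟩
    · rintro b ⟨l, hlen, hvalid, hprod⟩
      rw [← hprod, ← hlen]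
      exact invA_le_word l hvalid

lemma length_lt_iff {n k : ℕ} {u : Equiv.Perm ℕ} (hk1 : 1 ≤ k) (hk2 : k + 1 ≤ n)
    (hu : InSymm n u) :
    (lengthA n u < lengthA n (sA k * u)) ↔ u⁻¹ k < u⁻¹ (k + 1) := by
  have hu' : InSymm n (sA k * u) := insymm_mul (insymm_sA hk1 hk2) hu
  rw [lengthA_eq_invA hu, lengthA_eq_invA hu']
  rcases lt_trichotomy (u⁻¹ k) (u⁻¹ (k + 1)) with h | h | h
  · rw [invA_swap_lt hk1 hk2 hu h]
    simpa using h
  · exact absurd (u⁻¹.injective h) (by omega)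
  · have := invA_swap_gt hk1 hk2 hu h
    constructor
    · intro hh; omega
    · intro hh; omega


/-! ### Fold assembly and the main theorem -/

lemma foldl_id {α β : Type*} {g : α → β → α} :
    ∀ (l : List β) (x : α), (∀ t ∈ l, ∀ y, g y t = y) → l.foldl g x = x
  | [], x, _ => rfl
  | t :: l, x, h => by
    rw [List.foldl_cons, h t (List.mem_cons_self) x,
      foldl_id l x fun r hr y => h r (List.mem_cons_of_mem _ hr) y]

lemma fold_insymm {n : ℕ} {w : Equiv.Perm ℕ} (hw : InSymm n w) :
    ∀ (l : List ℕ), (∀ t ∈ l, t + 1 ≤ n) → ∀ {x : Equiv.Perm ℕ}, InSymm n x →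
      InSymm n (l.foldl (fun u t => hopF (t+1) (leftA w (t+1)) u) x) := by
  intro l
  induction l with
  | nil => intro _ x hx; exact hx
  | cons t l ih =>
    intro hl x hx
    rw [List.foldl_cons]
    refine ih (fun r hr => hl r (List.mem_cons_of_mem _ hr)) ?_
    have ht : t + 1 ≤ n := hl t (List.mem_cons_self)
    exact insymm_hopF hx (Finset.mem_Icc.2 ⟨by omega, ht⟩)
      (fun q hq => leftA_mem_Icc hw (by omega) ht hq)

lemma foldA (n k : ℕ) (w : Equiv.Perm ℕ) (hw : InSymm n w) (hk1 : 1 ≤ k) (hk2 : k + 1 ≤ n)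
    (hdesc : w⁻¹ (k+1) < w⁻¹ k) (x : Equiv.Perm ℕ) :
    (List.range n).foldl (fun u t => hopF (t+1) (leftA w (t+1)) u) (sA k * x)
      = cs k (k+1) ((List.range n).foldl (fun u t => hopF (t+1) (leftA (sA k * w) (t+1)) u) x) := by
  have hp1 : 1 ≤ w⁻¹ (k+1) :=
    (Finset.mem_Icc.1 (insymm_inv_mem hw (Finset.mem_Icc.2 ⟨by omega, hk2⟩))).1
  obtain ⟨A, M, hA1, hA2, hA3, hA4, hnd, hgt⟩ := middle_lists k w hp1 hdesc
  have hfront : ∀ a, a ≠ k → a ≠ k + 1 → leftA w a = (leftA (sA k * w) a).map (sA k) := by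
    intro a h1 h2
    have := leftA_swap_map k (sA k * w) a h1 h2
    rwa [sA_mul_sA_mul] at this
  -- range decomposition
  have hk' : k - 1 + 1 = k := by omega
  have e2 : List.range' (k-1) 2 = [k-1, k] := by
    show List.range' (k-1) (1+1) = _
    rw [List.range'_succ, hk']
    rfl
  have hj1 : List.range' 0 (k+1) ++ List.range' (0+(k+1)) (n - (k+1)) = List.range' 0 n := by
    rw [List.range'_append_1]
    congr 1
    omega
  have hj2 : List.range' 0 (k-1) ++ List.range' (0+(k-1)) 2 = List.range' 0 (k+1) := by
    rw [List.range'_append_1]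
    congr 1
    omega
  rw [Nat.zero_add] at hj1 hj2
  have hrange : List.range n
      = (List.range' 0 (k-1) ++ [k-1, k]) ++ List.range' (k+1) (n - (k+1)) := by
    rw [List.range_eq_range', ← hj1, ← hj2, e2]
  -- front stages
  have hfold1 : ∀ (l : List ℕ), (∀ t ∈ l, t + 1 ≠ k ∧ t + 1 ≠ k + 1) → ∀ y : Equiv.Perm ℕ,
      l.foldl (fun u t => hopF (t+1) (leftA w (t+1)) u) (sA k * y)
        = sA k * l.foldl (fun u t => hopF (t+1) (leftA (sA k * w) (t+1)) u) y := by
    intro l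
    induction l with
    | nil => intro _ y; rfl
    | cons t l ih =>
      intro hl y
      rw [List.foldl_cons, List.foldl_cons]
      obtain ⟨h1, h2⟩ := hl t (List.mem_cons_self)
      have hstage : hopF (t+1) (leftA w (t+1)) (sA k * y)
          = sA k * hopF (t+1) (leftA (sA k * w) (t+1)) y := by
        rw [hfront (t+1) h1 h2]
        have := hopF_conj (sA k) (t+1) (leftA (sA k * w) (t+1)) y
        rwa [show sA k (t+1) = t+1 from Equiv.swap_apply_of_ne_of_ne h1 h2] at this
      rw [hstage, ih (fun r hr => hl r (List.mem_cons_of_mem _ hr))]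
  -- back stages
  have hback : ∀ (l : List ℕ), (∀ t ∈ l, k + 1 < t + 1) → ∀ y : Equiv.Perm ℕ,
      l.foldl (fun u t => hopF (t+1) (leftA w (t+1)) u) (cs k (k+1) y)
        = cs k (k+1) (l.foldl (fun u t => hopF (t+1) (leftA (sA k * w) (t+1)) u) y) := by
    intro l
    induction l with
    | nil => intro _ y; rfl
    | cons t l ih =>
      intro hl y
      rw [List.foldl_cons, List.foldl_cons]
      have ht := hl t (List.mem_cons_self)
      have hLeq : leftA w (t+1) = leftA (sA k * w) (t+1) := by
        rw [hfront (t+1) (by omega) (by omega)]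
        apply map_id'
        intro q hq
        have := leftA_gt hq
        exact Equiv.swap_apply_of_ne_of_ne (by omega) (by omega)
      have hstage : hopF (t+1) (leftA w (t+1)) (cs k (k+1) y)
          = cs k (k+1) (hopF (t+1) (leftA (sA k * w) (t+1)) y) := by
        rw [hLeq]
        exact (cs_hopF_comm (by omega) (by omega)
          (fun h => by have := leftA_gt h; omega)
          (fun h => by have := leftA_gt h; omega) y).symm
      rw [hstage, ih (fun r hr => hl r (List.mem_cons_of_mem _ hr))]
  -- middle stages
  have hmid : ∀ z : Equiv.Perm ℕ,
      hopF (k+1) (leftA w (k+1)) (hopF k (leftA w k) (sA k * z))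
        = cs k (k+1) (hopF (k+1) (leftA (sA k * w) (k+1)) (hopF k (leftA (sA k * w) k) z)) := by
    intro z
    rw [hA1, hA4, hA2, hA3]
    exact lemB k A M hnd hgt z
  rw [hrange, List.foldl_append, List.foldl_append, List.foldl_append, List.foldl_append,
    hfold1 (List.range' 0 (k-1)) (fun t ht => by
      rw [List.mem_range'] at ht
      obtain ⟨i, hi, rfl⟩ := ht
      omega) x]
  simp only [List.foldl_cons, List.foldl_nil]
  rw [hk', hmid]
  exact hback (List.range' (k+1) (n - (k+1))) (fun t ht => by
    rw [List.mem_range'] at ht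
    obtain ⟨i, hi, rfl⟩ := ht
    omega) _

theorem key (n : ℕ) (star : Equiv.Perm ℕ → Equiv.Perm ℕ → Equiv.Perm ℕ)
    (hassoc : ∀ a b c, star (star a b) c = star a (star b c))
    (hunit : ∀ a, star 1 a = a)
    (hgen : ∀ k, 1 ≤ k → k + 1 ≤ n → ∀ u,
      star (sA k) u = if lengthA n u < lengthA n (sA k * u) then sA k * u else u) :
    ∀ (m : ℕ) (w v : Equiv.Perm ℕ), InSymm n w → InSymm n v → invA n w = m →
      star w v = (List.range n).foldl (fun u t => hopF (t+1) (leftA w (t+1)) u) (w * v) := by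
  intro m
  induction m using Nat.strong_induction_on with
  | _ m ih =>
    intro w v hw hv hm
    by_cases hd : ∃ k, 1 ≤ k ∧ k + 1 ≤ n ∧ w⁻¹ (k+1) < w⁻¹ k
    · obtain ⟨k, hk1, hk2, hdesc⟩ := hd
      have hw' : InSymm n (sA k * w) := insymm_mul (insymm_sA hk1 hk2) hw
      have hinv : invA n w = invA n (sA k * w) + 1 := invA_swap_gt hk1 hk2 hw hdesc
      have hIH := ih (invA n (sA k * w)) (by omega) (sA k * w) v hw' hv rfl
      have hlen1 : lengthA n (sA k * w) < lengthA n (sA k * (sA k * w)) := by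
        rw [sA_mul_sA_mul, lengthA_eq_invA hw', lengthA_eq_invA hw]
        omega
      have hstar1 : star (sA k) (sA k * w) = w := by
        rw [hgen k hk1 hk2 (sA k * w), if_pos hlen1, sA_mul_sA_mul]
      have hu : InSymm n (star (sA k * w) v) := by
        rw [hIH]
        exact fold_insymm hw' (List.range n) (fun t ht => by
          rw [List.mem_range] at ht; omega) (insymm_mul hw' hv)
      have hgoal1 : star w v = star (sA k) (star (sA k * w) v) := by
        conv_lhs => rw [← hstar1]
        rw [hassoc]
      have hiff := length_lt_iff hk1 hk2 hu
      have hwv : w * v = sA k * (sA k * w * v) := by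
        rw [← mul_assoc, sA_mul_sA_mul]
      rw [hgoal1, hgen k hk1 hk2 (star (sA k * w) v), hwv,
        foldA n k w hw hk1 hk2 hdesc (sA k * w * v), ← hIH]
      set u := star (sA k * w) v
      unfold cs
      by_cases h : u⁻¹ k < u⁻¹ (k+1)
      · rw [if_pos (hiff.2 h), if_pos h]
        rfl
      · rw [if_neg (fun hh => h (hiff.1 hh)), if_neg h]
    · push_neg at hd
      have hone : w = 1 := by
        apply no_descent_eq_one hw
        intro k h1 h2
        have h3 := hd k h1 h2
        have h4 : w⁻¹ k ≠ w⁻¹ (k+1) := fun h => by have := w⁻¹.injective h; omega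
        omega
      subst hone
      rw [hunit, one_mul]
      symm
      apply foldl_id
      intro t _ y
      rw [leftA_one]
      rfl

end HopAux

/-- for all `w, v ∈ S_n`,
`w ⋆ v = h_{n-1, w↖(n-1)} ∘ ⋯ ∘ h_{2, w↖2} ∘ h_{1, w↖1} (w · v)`,
the hopping operators being applied in the order `h_{1,w↖1}, …, h_{n-1,w↖(n-1)}`
to the ordinary product `w * v`.  The Demazure product `⋆` is encoded as an
arbitrary associative product `star` with unit `1` satisfying the defining
rule on the simple generators of `S_n`. -/
theorem demazure_eq_hopping
    (n : ℕ) (w v : Equiv.Perm ℕ) (hw : InSymm n w) (hv : InSymm n v)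
    (star : Equiv.Perm ℕ → Equiv.Perm ℕ → Equiv.Perm ℕ)
    (hassoc : ∀ a b c, star (star a b) c = star a (star b c))
    (hunit : ∀ a, star 1 a = a)
    (hgen : ∀ k, 1 ≤ k → k + 1 ≤ n → ∀ u,
      star (sA k) u = if lengthA n u < lengthA n (sA k * u) then sA k * u else u) :
    star w v = (List.range (n - 1)).foldl (fun u t => hopA (t + 1) (leftA w (t + 1)) u) (w * v)     := by
  have hkey := HopAux.key n star hassoc hunit hgen (HopAux.invA n w) w v hw hv rfl
  have hfun : (fun (u : Equiv.Perm ℕ) (t : ℕ) => hopA (t + 1) (leftA w (t + 1)) u)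
      = (fun (u : Equiv.Perm ℕ) (t : ℕ) => HopAux.hopF (t + 1) (leftA w (t + 1)) u) := by
    funext u t
    exact HopAux.hopA_eq_hopF (t+1) (leftA w (t+1)) (fun q hq => HopAux.leftA_gt hq) u
  rw [hfun]
  cases n with
  | zero => exact hkey
  | succ m =>
    rw [hkey, List.range_succ, List.foldl_append]
    simp only [List.foldl_cons, List.foldl_nil]
    rw [HopAux.leftA_nil_of_ge hw (by omega) (le_refl (m+1))]
    rfl
end

section
/- For any signed permutations w, v ∈ B_n, the Demazure product in B_n satisfies w ⋆_B v = fold(unfold(w) ⋆_A unfold(v)), where ⋆_A is the Demazure product of the symmetric group S_{2n} and unfold : B_n → S_{2n} is the standard embedding of signed permutations; in particular unfold(w) ⋆_A unfold(v) lies in the image of unfold. -/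
/-!
We model the group `B_n` of signed permutations as the permutations `w` of `ℤ`
satisfying `w (-i) = -(w i)` that fix every point outside
`±[n] = {1, …, n, -1, …, -n}`.  The unfolding of `w` is the sequence
`w 1, …, w n, -(w n), …, -(w 1)`, indexed by positions `1, …, 2n`; identifying
the position/symbol `n + k` with `-(n + 1 - k)`, the entry of the unfolding at
position `m` is `w (valB n m)`, and the entry `x` sits at position
`posB n w x`.  The total order `1 < 2 < ⋯ < n < -n < ⋯ < -2 < -1` on `±[n]`
is comparison of `ordVal`.
-/

/-- `w` is a signed permutation in `B_n`. -/
def IsSignedPerm (n : ℕ) (w : Equiv.Perm ℤ) : Prop :=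
  (∀ i : ℤ, w (-i) = -(w i)) ∧ ∀ i : ℤ, (n : ℤ) < |i| → w i = i

/-- `x` is an element of `±[n]`. -/
def IsPM (n : ℕ) (x : ℤ) : Prop := x ≠ 0 ∧ |x| ≤ (n : ℤ)

/-- The element of `±[n]` denoted by the symbol `m ∈ {1, …, 2n}`:
`m` itself if `m ≤ n`, and `-(2n + 1 - m)` otherwise. -/
def valB (n : ℕ) (m : ℕ) : ℤ :=
  if (m : ℤ) ≤ (n : ℤ) then (m : ℤ) else (m : ℤ) - (2 * n + 1)

/-- The rank of `x ∈ ±[n]` in the total order `1 < ⋯ < n < -n < ⋯ < -1`. -/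
def ordVal (n : ℕ) (x : ℤ) : ℤ := if 0 < x then x else 2 * n + 1 + x

/-- The simple generators of `B_n`: `s_i` swaps `i ↔ i+1` and `-i ↔ -(i+1)`
for `1 ≤ i < n`, and `s_n` swaps `n ↔ -n`; for `n < i` we use the convention
`s_{n+j} = s_{n-j}`. -/
def sB (n i : ℕ) : Equiv.Perm ℤ :=
  let j := if i ≤ n then i else 2 * n - i
  if j = n then Equiv.swap (n : ℤ) (-(n : ℤ))
  else Equiv.swap (j : ℤ) ((j : ℤ) + 1) * Equiv.swap (-(j : ℤ)) (-((j : ℤ) + 1))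

/-- Swap the values `t ↔ q` and simultaneously `-t ↔ -q` (unless `t = -q`). -/
def bswap (t q : ℤ) : Equiv.Perm ℤ :=
  if t = -q then Equiv.swap t q else Equiv.swap t q * Equiv.swap (-t) (-q)

/-- The position of the entry `x` in the unfolding of `w`. -/
def posB (n : ℕ) (w : Equiv.Perm ℤ) (x : ℤ) : ℤ := ordVal n (w⁻¹ x)

/-- One step of the type `B` hopping algorithm: among the entries `q` of the
ordered list `L` that are greater than `t` in the order on `±[n]` and appear
strictly to the right of `t` in the unfolding of `w`, pick the one occurring
furthest to the right in `L` (the last one in `L`), swap it with `t` and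
simultaneously swap `-q` with `-t`; if there is no such entry, do nothing. -/
def hopStepB (n : ℕ) (t : ℤ) (L : List ℤ) (w : Equiv.Perm ℤ) : Equiv.Perm ℤ :=
  match (L.filter fun q =>
      decide (ordVal n t < ordVal n q ∧ posB n w t < posB n w q)).getLast? with
  | none => w
  | some q => bswap t q * w

/-- The type `B` hopping operator `h^B_{t,L}`: iterate the hopping step until
the process stops, i.e. until no entry of `L` greater than `t` appears to the
right of `t`.  Each effective step moves `t` strictly to the right among the
`2n` positions of the unfolding, so `2n` iterations always suffice, after
which the step acts as the identity. -/
def hopB (n : ℕ) (t : ℤ) (L : List ℤ) (w : Equiv.Perm ℤ) : Equiv.Perm ℤ :=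
  (hopStepB n t L)^[2 * n] w

/-- The product `c^B_{a,b} = s_a s_{a+1} ⋯ s_{a+b-1}` (the identity when
`b = 0`), using the convention `s_{n+j} = s_{n-j}`. -/
def cB (n a b : ℕ) : Equiv.Perm ℤ := ((List.range b).map fun k => sB n (a + k)).prod

/-- The Coxeter length of an element of `B_n`: the least length of a word in
the simple generators `s_1, …, s_n` expressing it. -/
noncomputable def lengthB (n : ℕ) (w : Equiv.Perm ℤ) : ℕ :=
  sInf {k | ∃ l : List ℕ, l.length = k ∧ (∀ i ∈ l, 1 ≤ i ∧ i ≤ n) ∧ (l.map (sB n)).prod = w}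

/-!
Under the identification `-i ↔ 2n + 1 - i` of `±[n]` with `{1, …, 2n}`, the
unfolding embedding `B_n ↪ S_{2n}` is simply the inclusion of the signed
permutations of `±[n]` into all permutations of `±[n]` (and `fold` is its
inverse on its image).  So `S_{2n}` is modelled as the permutations of `ℤ`
fixing everything outside `±[n]`, with simple transpositions
`s'_k = (valB n k, valB n (k+1))` for `1 ≤ k ≤ 2n - 1`, and both `unfold` and
`fold` become the identity map.
-/

/-- The simple transpositions of `S_{2n}` acting on `±[n]`: `s'_k` swaps the
symbols `k` and `k + 1`. -/
def sA2 (n k : ℕ) : Equiv.Perm ℤ := Equiv.swap (valB n k) (valB n (k + 1))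

/-- The Coxeter length on `S_{2n}`: the least length of a word in the simple
transpositions `s'_1, …, s'_{2n-1}` expressing the given permutation. -/
noncomputable def lengthA2 (n : ℕ) (w : Equiv.Perm ℤ) : ℕ :=
  sInf {k | ∃ l : List ℕ, l.length = k ∧ (∀ i ∈ l, 1 ≤ i ∧ i + 1 ≤ 2 * n) ∧
    (l.map (sA2 n)).prod = w}



set_option maxHeartbeats 1000000

namespace DemAux

/-- the finset of elements of `±[n]` -/
noncomputable def Pn (n : ℕ) : Finset ℤ := (Finset.Icc (-(n:ℤ)) (n:ℤ)).erase 0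

lemma mem_Pn {n : ℕ} {x : ℤ} : x ∈ Pn n ↔ x ≠ 0 ∧ -(n:ℤ) ≤ x ∧ x ≤ (n:ℤ) := by
  unfold Pn
  rw [Finset.mem_erase, Finset.mem_Icc]

lemma mem_Pn_iff_isPM {n : ℕ} {x : ℤ} : x ∈ Pn n ↔ IsPM n x := by
  rw [mem_Pn]
  constructor
  · rintro ⟨a, b, c⟩; exact ⟨a, abs_le.2 ⟨b, c⟩⟩
  · rintro ⟨a, b⟩; rw [abs_le] at b; exact ⟨a, b.1, b.2⟩

lemma neg_mem_Pn {n : ℕ} {x : ℤ} (h : x ∈ Pn n) : -x ∈ Pn n := by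
  rw [mem_Pn] at h ⊢; omega

lemma valB_mem {n m : ℕ} (h1 : 1 ≤ m) (h2 : m ≤ 2*n) : valB n m ∈ Pn n := by
  rw [mem_Pn]; unfold valB; split <;> refine ⟨by omega, by omega, by omega⟩

lemma ordVal_valB {n m : ℕ} (h1 : 1 ≤ m) (h2 : m ≤ 2*n) : ordVal n (valB n m) = m := by
  unfold valB ordVal; split <;> split <;> omega

lemma ordVal_mem {n : ℕ} {x : ℤ} (h : x ∈ Pn n) : 1 ≤ ordVal n x ∧ ordVal n x ≤ 2*n := by
  rw [mem_Pn] at h; unfold ordVal; split <;> omega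

lemma ordVal_inj {n : ℕ} {x y : ℤ} (hx : x ∈ Pn n) (hy : y ∈ Pn n)
    (h : ordVal n x = ordVal n y) : x = y := by
  rw [mem_Pn] at hx hy; unfold ordVal at h; split_ifs at h <;> omega

lemma valB_ordVal {n : ℕ} {x : ℤ} (h : x ∈ Pn n) : valB n (ordVal n x).toNat = x := by
  rw [mem_Pn] at h; unfold valB ordVal; split_ifs <;> omega

lemma ordVal_neg {n : ℕ} {x : ℤ} (h : x ∈ Pn n) : ordVal n (-x) = 2*n+1 - ordVal n x := by
  rw [mem_Pn] at h; unfold ordVal; split_ifs <;> omega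

lemma valB_mirror {n k : ℕ} (h1 : 1 ≤ k) (h2 : k ≤ 2*n) :
    valB n (2*n+1-k) = -valB n k := by
  unfold valB; split_ifs <;> omega

/-- `u` is a permutation of `±[n]` -/
def IsA (n : ℕ) (u : Equiv.Perm ℤ) : Prop := ∀ i : ℤ, i ∉ Pn n → u i = i

lemma IsA.one {n : ℕ} : IsA n 1 := fun _ _ => rfl

lemma IsA.mul {n : ℕ} {u v : Equiv.Perm ℤ} (hu : IsA n u) (hv : IsA n v) :
    IsA n (u * v) := fun i hi => by
  simp only [Equiv.Perm.mul_apply]; rw [hv i hi, hu i hi]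

lemma IsA.mem {n : ℕ} {u : Equiv.Perm ℤ} (hu : IsA n u) {x : ℤ} (hx : x ∈ Pn n) :
    u x ∈ Pn n := by
  by_contra h
  have h2 : u x = x := u.injective (hu _ h)
  rw [h2] at h; exact h hx

lemma IsA.inv {n : ℕ} {u : Equiv.Perm ℤ} (hu : IsA n u) : IsA n u⁻¹ := by
  intro i hi
  have := hu i hi
  exact u.injective (by rw [Equiv.Perm.coe_inv, Equiv.apply_symm_apply, this])

lemma IsA.swap {n : ℕ} {a b : ℤ} (ha : a ∈ Pn n) (hb : b ∈ Pn n) :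
    IsA n (Equiv.swap a b) := by
  intro i hi
  exact Equiv.swap_apply_of_ne_of_ne (fun h => hi (h ▸ ha)) (fun h => hi (h ▸ hb))

lemma _root_.IsSignedPerm.invP {n : ℕ} {w : Equiv.Perm ℤ} (hw : IsSignedPerm n w) :
    IsSignedPerm n w⁻¹ := by
  constructor
  · intro i
    apply w.injective
    rw [Equiv.Perm.coe_inv, Equiv.apply_symm_apply, hw.1, Equiv.apply_symm_apply]
  · intro i hi
    apply w.injective
    rw [Equiv.Perm.coe_inv, Equiv.apply_symm_apply, hw.2 i hi]

lemma _root_.IsSignedPerm.isA {n : ℕ} {w : Equiv.Perm ℤ} (hw : IsSignedPerm n w) : IsA n w := by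
  intro i hi
  rw [mem_Pn] at hi
  by_cases h0 : i = 0
  · subst h0
    have := hw.1 0
    simp only [neg_zero] at this
    omega
  · exact hw.2 i (by rw [lt_abs]; omega)

lemma _root_.IsSignedPerm.mul {n : ℕ} {w v : Equiv.Perm ℤ} (hw : IsSignedPerm n w)
    (hv : IsSignedPerm n v) : IsSignedPerm n (w * v) := by
  refine ⟨fun i => ?_, fun i hi => ?_⟩
  · simp only [Equiv.Perm.mul_apply, hv.1, hw.1]
  · simp only [Equiv.Perm.mul_apply, hv.2 i hi, hw.2 i hi]

lemma posB_mem {n : ℕ} {u : Equiv.Perm ℤ} (hu : IsA n u) {x : ℤ} (hx : x ∈ Pn n) :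
    1 ≤ posB n u x ∧ posB n u x ≤ 2*n := ordVal_mem (hu.inv.mem hx)

lemma posB_inj {n : ℕ} {u : Equiv.Perm ℤ} (hu : IsA n u) {x y : ℤ} (hx : x ∈ Pn n)
    (hy : y ∈ Pn n) (h : posB n u x = posB n u y) : x = y := by
  have := ordVal_inj (hu.inv.mem hx) (hu.inv.mem hy) h
  exact u⁻¹.injective this

lemma posB_mul {n : ℕ} (σ u : Equiv.Perm ℤ) (x : ℤ) :
    posB n (σ * u) x = posB n u (σ⁻¹ x) := by
  simp [posB, Equiv.Perm.mul_apply]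

lemma posB_neg {n : ℕ} {w : Equiv.Perm ℤ} (hw : IsSignedPerm n w) {x : ℤ}
    (hx : x ∈ Pn n) : posB n w (-x) = 2*n+1 - posB n w x := by
  unfold posB
  rw [hw.invP.1, ordVal_neg (hw.isA.inv.mem hx)]

lemma posB_one {n : ℕ} (x : ℤ) : posB n 1 x = ordVal n x := by simp [posB]

end DemAux


namespace DemAux

-- ### generator structure

def sA2' (n : ℕ) (k : ℕ) : Equiv.Perm ℤ := Equiv.swap (valB n k) (valB n (k + 1))

lemma sA2'_isA {n k : ℕ} (h1 : 1 ≤ k) (h2 : k + 1 ≤ 2*n) : IsA n (sA2' n k) :=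
  IsA.swap (valB_mem h1 (by omega)) (valB_mem (by omega) h2)

lemma sA2'_sq {n k : ℕ} : sA2' n k * sA2' n k = 1 := Equiv.swap_mul_self _ _

lemma sA2'_inv {n k : ℕ} : (sA2' n k)⁻¹ = sA2' n k := Equiv.swap_inv _ _

lemma valB_ne {n : ℕ} {k m : ℕ} (hk : 1 ≤ k) (hk2 : k ≤ 2*n) (hm : 1 ≤ m)
    (hm2 : m ≤ 2*n) (h : k ≠ m) : valB n k ≠ valB n m := by
  intro he
  have := ordVal_valB hk hk2
  rw [he, ordVal_valB hm hm2] at this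
  omega

/-- apply of the generator on the swapped values -/
lemma sA2'_apply_val {n k : ℕ} : sA2' n k (valB n k) = valB n (k+1) ∧
    sA2' n k (valB n (k+1)) = valB n k := by
  constructor
  · exact Equiv.swap_apply_left _ _
  · exact Equiv.swap_apply_right _ _

lemma sA2'_apply_other {n k : ℕ} {x : ℤ} (h1 : x ≠ valB n k) (h2 : x ≠ valB n (k+1)) :
    sA2' n k x = x := Equiv.swap_apply_of_ne_of_ne h1 h2

-- ### inversion counting for the symmetric group side

noncomputable def TA (n : ℕ) (u : Equiv.Perm ℤ) : Finset (ℤ × ℤ) :=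
  ((Pn n) ×ˢ (Pn n)).filter fun p =>
    ordVal n p.1 < ordVal n p.2 ∧ posB n u p.2 < posB n u p.1

noncomputable def invA (n : ℕ) (u : Equiv.Perm ℤ) : ℕ := (TA n u).card

lemma mem_TA {n : ℕ} {u : Equiv.Perm ℤ} {p : ℤ × ℤ} :
    p ∈ TA n u ↔ p.1 ∈ Pn n ∧ p.2 ∈ Pn n ∧ ordVal n p.1 < ordVal n p.2 ∧
      posB n u p.2 < posB n u p.1 := by
  unfold TA
  rw [Finset.mem_filter, Finset.mem_product]
  tauto

lemma invA_one {n : ℕ} : invA n 1 = 0 := by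
  unfold invA
  rw [Finset.card_eq_zero]
  ext p
  simp only [Finset.notMem_empty, iff_false]
  intro hp
  rw [mem_TA] at hp
  rw [posB_one, posB_one] at hp
  omega

/-- order-preservation of the value swap on non-special pairs -/
lemma ord_swap_lt {n k : ℕ} (h1 : 1 ≤ k) (h2 : k + 1 ≤ 2*n) {x y : ℤ}
    (hx : x ∈ Pn n) (hy : y ∈ Pn n) (hxy : ordVal n x < ordVal n y)
    (hne : (x, y) ≠ (valB n k, valB n (k+1))) :
    ordVal n (sA2' n k x) < ordVal n (sA2' n k y) := by
  set a := valB n k with ha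
  set b := valB n (k+1) with hb
  have hak : ordVal n a = k := ordVal_valB h1 (by omega)
  have hbk : ordVal n b = k + 1 := by
    rw [hb]; rw [ordVal_valB (by omega) h2]; push_cast; ring
  by_cases hxa : x = a
  · -- x = a, so y ≠ b, y ≠ a
    have hyb : y ≠ b := fun h => hne (by rw [hxa, h])
    have hyo : ordVal n y ≠ k + 1 := fun h =>
      hyb (ordVal_inj hy (valB_mem (by omega) h2) (by rw [h, hbk]))
    rw [hxa]
    rw [sA2'_apply_val.1]
    have hya : y ≠ a := fun h => by rw [hxa, h] at hxy; omega
    rw [sA2'_apply_other hya hyb]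
    rw [hbk]
    rw [hxa, hak] at hxy
    omega
  · by_cases hxb : x = b
    · -- x = b : ord x = k+1 < ord y, y ∉ {a,b}
      have hya : y ≠ a := by
        intro h; rw [hxb, h, hbk, hak] at hxy; omega
      have hyb : y ≠ b := by
        intro h; rw [hxb, h] at hxy; omega
      rw [hxb, sA2'_apply_val.2, sA2'_apply_other hya hyb, hak]
      rw [hxb, hbk] at hxy
      omega
    · by_cases hya : y = a
      · -- y = a: ord x < k, x ∉ {a,b}
        rw [hya, sA2'_apply_val.1, sA2'_apply_other hxa hxb, hbk]
        rw [hya, hak] at hxy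
        have hxo : ordVal n x ≠ k + 1 := fun h =>
          hxb (ordVal_inj hx (valB_mem (by omega) h2) (by rw [h, hbk]))
        omega
      · by_cases hyb : y = b
        · rw [hyb, sA2'_apply_val.2, sA2'_apply_other hxa hxb, hak]
          rw [hyb, hbk] at hxy
          have hxo : ordVal n x ≠ k := fun h =>
            hxa (ordVal_inj hx (valB_mem h1 (by omega)) (by rw [h, hak]))
          omega
        · rw [sA2'_apply_other hxa hxb, sA2'_apply_other hya hyb]
          exact hxy

lemma sA2'_mem {n k : ℕ} (h1 : 1 ≤ k) (h2 : k + 1 ≤ 2*n) {x : ℤ} (hx : x ∈ Pn n) :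
    sA2' n k x ∈ Pn n := (sA2'_isA h1 h2).mem hx

/-- THE key counting lemma: effect of a left multiplication by an adjacent
value swap on the inversion number. -/
lemma invA_step {n k : ℕ} {u : Equiv.Perm ℤ} (hu : IsA n u) (h1 : 1 ≤ k)
    (h2 : k + 1 ≤ 2*n) :
    (posB n u (valB n k) < posB n u (valB n (k+1)) →
      invA n (sA2' n k * u) = invA n u + 1) ∧
    (posB n u (valB n (k+1)) < posB n u (valB n k) →
      invA n u = invA n (sA2' n k * u) + 1) := by
  set a := valB n k with ha
  set b := valB n (k+1) with hb
  have hamem : a ∈ Pn n := valB_mem h1 (by omega)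
  have hbmem : b ∈ Pn n := valB_mem (by omega) h2
  have hak : ordVal n a = k := ordVal_valB h1 (by omega)
  have hbk : ordVal n b = k + 1 := by
    rw [hb, ordVal_valB (by omega) h2]; push_cast; ring
  set σ := sA2' n k with hσ
  have hpos : ∀ x, posB n (σ * u) x = posB n u (σ x) := by
    intro x
    rw [posB_mul]
    rw [hσ, sA2'_inv]
  have hσσ : ∀ x, σ (σ x) = x := by
    intro x
    have : (σ * σ) x = (1 : Equiv.Perm ℤ) x := by rw [sA2'_sq]
    simpa using this
  -- membership transfer
  have key : ∀ p : ℤ × ℤ, p ≠ (a, b) → p ≠ (b, a) →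
      (p ∈ TA n (σ * u) ↔ (σ p.1, σ p.2) ∈ TA n u) := by
    rintro ⟨x, y⟩ hne hne'
    rw [mem_TA, mem_TA]
    constructor
    · rintro ⟨hx, hy, ho, hp⟩
      refine ⟨sA2'_mem h1 h2 hx, sA2'_mem h1 h2 hy, ord_swap_lt h1 h2 hx hy ho hne, ?_⟩
      rw [hpos, hpos] at hp
      exact hp
    · rintro ⟨hx, hy, ho, hp⟩
      have hx' : x ∈ Pn n := by
        have := sA2'_mem h1 h2 hx; rwa [hσσ] at this
      have hy' : y ∈ Pn n := by
        have := sA2'_mem h1 h2 hy; rwa [hσσ] at this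
      have hne2 : ((σ x, σ y) : ℤ × ℤ) ≠ (a, b) := by
        intro h
        apply hne'
        have h1' : σ x = a := congrArg Prod.fst h
        have h2' : σ y = b := congrArg Prod.snd h
        have hxx : x = σ a := by rw [← h1', hσσ]
        have hxb : x = b := by rw [hxx, hσ]; exact sA2'_apply_val.1
        have hyy : y = σ b := by rw [← h2', hσσ]
        have hya : y = a := by rw [hyy, hσ]; exact sA2'_apply_val.2
        rw [hxb, hya]
      have ho' := ord_swap_lt h1 h2 hx hy ho hne2
      rw [hσσ, hσσ] at ho'
      refine ⟨hx', hy', ho', ?_⟩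
      rw [hpos, hpos]
      exact hp
  have pair_ne : ∀ v : Equiv.Perm ℤ, ∀ p : ℤ × ℤ, p ∈ TA n v → p ≠ (b, a) := by
    intro v p hp h
    rw [mem_TA, h, hbk, hak] at hp
    omega
  -- the erased sets biject
  have hcard : ((TA n (σ * u)).erase (a, b)).card = ((TA n u).erase (a, b)).card := by
    apply Finset.card_nbij' (fun p => (σ p.1, σ p.2)) (fun p => (σ p.1, σ p.2))
    · intro p hp
      rw [Finset.mem_coe, Finset.mem_erase] at hp ⊢
      obtain ⟨hne, hp⟩ := hp
      refine ⟨?_, (key p hne (pair_ne _ p hp)).1 hp⟩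
      intro h
      apply hne
      have h1' : σ p.1 = a := congrArg Prod.fst h
      have h2' : σ p.2 = b := congrArg Prod.snd h
      have hp1 : p.1 = σ a := by rw [← h1', hσσ]
      have hp2 : p.2 = σ b := by rw [← h2', hσσ]
      rw [hσ, sA2'_apply_val.1] at hp1
      rw [hσ, sA2'_apply_val.2] at hp2
      -- p = (b, a), but ord p.1 < ord p.2 fails
      rw [mem_TA] at hp
      rw [hp1, hp2, hbk, hak] at hp
      omega
    · intro p hp
      rw [Finset.mem_coe, Finset.mem_erase] at hp ⊢
      obtain ⟨hne, hp⟩ := hp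
      have hne2 : ((σ p.1, σ p.2) : ℤ × ℤ) ≠ (a, b) := by
        intro h
        have h1' : σ p.1 = a := congrArg Prod.fst h
        have h2' : σ p.2 = b := congrArg Prod.snd h
        have hp1 : p.1 = σ a := by rw [← h1', hσσ]
        have hp2 : p.2 = σ b := by rw [← h2', hσσ]
        rw [hσ, sA2'_apply_val.1] at hp1
        rw [hσ, sA2'_apply_val.2] at hp2
        rw [mem_TA] at hp
        rw [hp1, hp2, hbk, hak] at hp
        omega
      have hne3 : ((σ p.1, σ p.2) : ℤ × ℤ) ≠ (b, a) := by
        intro h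
        have h1' : σ p.1 = b := congrArg Prod.fst h
        have h2' : σ p.2 = a := congrArg Prod.snd h
        have hp1 : p.1 = σ b := by rw [← h1', hσσ]
        have hp2 : p.2 = σ a := by rw [← h2', hσσ]
        rw [hσ, sA2'_apply_val.2] at hp1
        rw [hσ, sA2'_apply_val.1] at hp2
        exact hne (Prod.ext hp1 hp2)
      refine ⟨hne2, ?_⟩
      rw [key _ hne2 hne3]
      rw [hσσ, hσσ]
      exact hp
    · intro p _; beta_reduce; rw [hσσ, hσσ]
    · intro p _; beta_reduce; rw [hσσ, hσσ]
  have hne_pos : posB n u a ≠ posB n u b := by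
    intro h
    have := posB_inj hu hamem hbmem h
    rw [this, hbk] at hak
    omega
  have hmemσ : (a, b) ∈ TA n (σ * u) ↔ posB n u a < posB n u b := by
    rw [mem_TA]
    simp only [hak, hbk]
    rw [hpos, hpos]
    rw [hσ, sA2'_apply_val.1, sA2'_apply_val.2]
    constructor
    · rintro ⟨_, _, _, h⟩; exact h
    · intro h; exact ⟨hamem, hbmem, by omega, h⟩
  have hmemu : (a, b) ∈ TA n u ↔ posB n u b < posB n u a := by
    rw [mem_TA]
    simp only [hak, hbk]
    constructor
    · rintro ⟨_, _, _, h⟩; exact h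
    · intro h; exact ⟨hamem, hbmem, by omega, h⟩
  constructor
  · intro hasc
    have h1' : (a, b) ∈ TA n (σ * u) := hmemσ.2 hasc
    have h2' : (a, b) ∉ TA n u := fun h => by have := hmemu.1 h; omega
    unfold invA
    rw [← Finset.insert_erase h1', Finset.card_insert_of_notMem (Finset.notMem_erase _ _),
      hcard, Finset.erase_eq_of_notMem h2']
  · intro hdesc
    have h1' : (a, b) ∉ TA n (σ * u) := fun h => by have := hmemσ.1 h; omega
    have h2' : (a, b) ∈ TA n u := hmemu.2 hdesc
    unfold invA
    rw [← Finset.insert_erase h2', Finset.card_insert_of_notMem (Finset.notMem_erase _ _),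
      ← hcard, Finset.erase_eq_of_notMem h1']

end DemAux


namespace DemAux

lemma sA2_eq {n k : ℕ} : sA2 n k = sA2' n k := rfl

/-- if every adjacent pair is an ascent, `u` is the identity -/
lemma allAsc_eq_one {n : ℕ} {u : Equiv.Perm ℤ} (hu : IsA n u)
    (H : ∀ k : ℕ, 1 ≤ k → k + 1 ≤ 2*n →
      posB n u (valB n k) < posB n u (valB n (k+1))) : u = 1 := by
  set f : ℕ → ℤ := fun m => posB n u (valB n m) with hf
  have fmem : ∀ m, 1 ≤ m → m ≤ 2*n → 1 ≤ f m ∧ f m ≤ 2*n := by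
    intro m hm1 hm2
    exact posB_mem hu (valB_mem hm1 hm2)
  have claim1 : ∀ m, 1 ≤ m → m ≤ 2*n → (m : ℤ) ≤ f m := by
    intro m
    induction m with
    | zero => omega
    | succ m ih =>
      intro _ hm2
      by_cases hm : 1 ≤ m
      · have h1 := ih hm (by omega)
        have h2' : f m < f (m+1) := H m hm (by omega)
        push_cast
        omega
      · have := (fmem (m+1) (by omega) hm2).1
        omega
  have claim2 : ∀ j m, 1 ≤ m → m + j ≤ 2*n → f m + j ≤ f (m + j) := by
    intro j
    induction j with
    | zero => intro m _ _; simp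
    | succ j ih =>
      intro m hm1 hm2
      have h1 := ih m hm1 (by omega)
      have h2 : f (m + j) < f (m + j + 1) := H (m + j) (by omega) (by omega)
      push_cast at *
      have he : m + (j + 1) = m + j + 1 := by omega
      rw [he]
      omega
  have fix : ∀ m, 1 ≤ m → m ≤ 2*n → f m = m := by
    intro m hm1 hm2
    have h1 := claim1 m hm1 hm2
    by_cases h0 : n = 0
    · omega
    · have h2 := claim2 (2*n - m) m hm1 (by omega)
      have he : m + (2*n - m) = 2*n := by omega
      rw [he] at h2
      have h3 := (fmem (2*n) (by omega) (le_refl _)).2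
      push_cast at h2
      omega
  have fixval : ∀ x ∈ Pn n, u⁻¹ x = x := by
    intro x hx
    have h1 := ordVal_mem hx
    have h2 := valB_ordVal hx
    set m := (ordVal n x).toNat with hm
    have hm1 : 1 ≤ m := by omega
    have hm2 : m ≤ 2*n := by omega
    have := fix m hm1 hm2
    rw [hf] at this
    simp only at this
    rw [h2] at this
    -- this : posB n u x = m
    have : ordVal n (u⁻¹ x) = ordVal n x := by
      unfold posB at this
      omega
    exact ordVal_inj (hu.inv.mem hx) hx this
  have hinv : u⁻¹ = 1 := by
    ext x
    by_cases hx : x ∈ Pn n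
    · simpa using fixval x hx
    · simpa using hu.inv x hx
  rw [← inv_inv u, hinv, inv_one]

lemma exists_descent {n : ℕ} {u : Equiv.Perm ℤ} (hu : IsA n u) (hne : u ≠ 1) :
    ∃ k : ℕ, 1 ≤ k ∧ k + 1 ≤ 2*n ∧
      posB n u (valB n (k+1)) < posB n u (valB n k) := by
  by_contra h
  push_neg at h
  apply hne
  apply allAsc_eq_one hu
  intro k hk1 hk2
  have h1 := h k hk1 hk2
  have h2 : posB n u (valB n k) ≠ posB n u (valB n (k+1)) := by
    intro he
    have := posB_inj hu (valB_mem hk1 (by omega)) (valB_mem (by omega) hk2) he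
    exact valB_ne hk1 (by omega) (by omega) hk2 (by omega) this
  omega

lemma invA_zero_eq_one {n : ℕ} {u : Equiv.Perm ℤ} (hu : IsA n u)
    (h : invA n u = 0) : u = 1 := by
  by_contra hne
  obtain ⟨k, hk1, hk2, hdesc⟩ := exists_descent hu hne
  have hmem : ((valB n k, valB n (k+1)) : ℤ × ℤ) ∈ TA n u := by
    rw [mem_TA]
    refine ⟨valB_mem hk1 (by omega), valB_mem (by omega) hk2, ?_, hdesc⟩
    rw [ordVal_valB hk1 (by omega), ordVal_valB (by omega) hk2]
    push_cast
    omega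
  unfold invA at h
  rw [Finset.card_eq_zero] at h
  rw [h] at hmem
  exact absurd hmem (Finset.notMem_empty _)

/-- lower bound: any valid word has length at least `invA` of its product -/
lemma invA_le_words {n : ℕ} : ∀ l : List ℕ, (∀ i ∈ l, 1 ≤ i ∧ i + 1 ≤ 2*n) →
    IsA n ((l.map (sA2 n)).prod) ∧ invA n ((l.map (sA2 n)).prod) ≤ l.length := by
  intro l
  induction l with
  | nil =>
    intro _
    simp only [List.map_nil, List.prod_nil, List.length_nil]
    exact ⟨IsA.one, by rw [invA_one]⟩
  | cons i tl ih =>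
    intro hval
    have hi := hval i (List.mem_cons_self)
    have htl := ih (fun j hj => hval j (List.mem_cons_of_mem i hj))
    simp only [List.map_cons, List.prod_cons, List.length_cons]
    set r := (tl.map (sA2 n)).prod with hr
    have hIsA : IsA n (sA2 n i * r) := by
      rw [sA2_eq]; exact (sA2'_isA hi.1 hi.2).mul htl.1
    refine ⟨hIsA, ?_⟩
    have hstep := invA_step htl.1 hi.1 hi.2
    have hne : posB n r (valB n i) ≠ posB n r (valB n (i+1)) := by
      intro he
      have := posB_inj htl.1 (valB_mem hi.1 (by omega)) (valB_mem (by omega) hi.2) he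
      exact valB_ne hi.1 (by omega) (by omega) hi.2 (by omega) this
    rw [sA2_eq]
    rcases lt_or_gt_of_ne hne with hc | hc
    · have := hstep.1 hc
      omega
    · have := hstep.2 hc
      omega

/-- upper bound: a word of length exactly `invA` -/
lemma words_of_invA {n : ℕ} : ∀ c : ℕ, ∀ u : Equiv.Perm ℤ, IsA n u → invA n u = c →
    ∃ l : List ℕ, l.length = c ∧ (∀ i ∈ l, 1 ≤ i ∧ i + 1 ≤ 2*n) ∧
      (l.map (sA2 n)).prod = u := by
  intro c
  induction c using Nat.strong_induction_on with
  | _ c ih =>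
    intro u hu hc
    rcases Nat.eq_zero_or_pos c with h0 | hpos
    · subst h0
      have := invA_zero_eq_one hu hc
      exact ⟨[], rfl, by simp, by simp [this]⟩
    · have hne : u ≠ 1 := by
        intro h
        rw [h, invA_one] at hc
        omega
      obtain ⟨k, hk1, hk2, hdesc⟩ := exists_descent hu hne
      set u' := sA2' n k * u with hu'
      have hu'IsA : IsA n u' := (sA2'_isA hk1 hk2).mul hu
      have hstep := (invA_step hu hk1 hk2).2 hdesc
      rw [← hu'] at hstep
      -- invA u = invA u' + 1
      have hval : invA n u' = c - 1 := by omega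
      obtain ⟨l, hl1, hl2, hl3⟩ := ih (c-1) (by omega) u' hu'IsA hval
      refine ⟨k :: l, by simp [hl1]; omega, ?_, ?_⟩
      · intro i hi
        rcases List.mem_cons.1 hi with h | h
        · subst h; exact ⟨hk1, hk2⟩
        · exact hl2 i h
      · simp only [List.map_cons, List.prod_cons, hl3]
        rw [sA2_eq, hu', ← mul_assoc, sA2'_sq, one_mul]

lemma lengthA2_eq_invA {n : ℕ} {u : Equiv.Perm ℤ} (hu : IsA n u) :
    lengthA2 n u = invA n u := by
  obtain ⟨l, hl1, hl2, hl3⟩ := words_of_invA (invA n u) u hu rfl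
  have hmem : invA n u ∈ {k | ∃ l : List ℕ, l.length = k ∧
      (∀ i ∈ l, 1 ≤ i ∧ i + 1 ≤ 2 * n) ∧ (l.map (sA2 n)).prod = u} := ⟨l, hl1, hl2, hl3⟩
  have h1 : lengthA2 n u ≤ invA n u := Nat.sInf_le hmem
  have h2 : invA n u ≤ lengthA2 n u := by
    have hne : {k | ∃ l : List ℕ, l.length = k ∧
        (∀ i ∈ l, 1 ≤ i ∧ i + 1 ≤ 2 * n) ∧ (l.map (sA2 n)).prod = u}.Nonempty :=
      ⟨invA n u, hmem⟩
    obtain ⟨l', hl1', hl2', hl3'⟩ := Nat.sInf_mem hne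
    have := (invA_le_words l' hl2').2
    rw [hl3'] at this
    unfold lengthA2
    rw [← hl1']
    exact this
  omega

/-- the `A`-side descent criterion -/
lemma lengthA2_lt_iff {n k : ℕ} {u : Equiv.Perm ℤ} (hu : IsA n u) (hk1 : 1 ≤ k)
    (hk2 : k + 1 ≤ 2*n) :
    lengthA2 n u < lengthA2 n (sA2 n k * u) ↔
      posB n u (valB n k) < posB n u (valB n (k+1)) := by
  have hIsA : IsA n (sA2 n k * u) := by rw [sA2_eq]; exact (sA2'_isA hk1 hk2).mul hu
  rw [lengthA2_eq_invA hu, lengthA2_eq_invA hIsA]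
  have hstep := invA_step hu hk1 hk2
  have hne : posB n u (valB n k) ≠ posB n u (valB n (k+1)) := by
    intro he
    have := posB_inj hu (valB_mem hk1 (by omega)) (valB_mem (by omega) hk2) he
    exact valB_ne hk1 (by omega) (by omega) hk2 (by omega) this
  rw [sA2_eq]
  constructor
  · intro h
    rcases lt_or_gt_of_ne hne with hc | hc
    · exact hc
    · have := hstep.2 hc; omega
  · intro hc
    have := hstep.1 hc; omega

end DemAux


namespace DemAux

lemma valB_small {n m : ℕ} (h : m ≤ n) : valB n m = (m : ℤ) := by
  unfold valB; rw [if_pos (by exact_mod_cast h)]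

lemma valB_big {n m : ℕ} (h : n < m) : valB n m = (m : ℤ) - (2*n+1) := by
  unfold valB; rw [if_neg (by push_cast; omega)]

lemma sB_lt {n i : ℕ} (h1 : 1 ≤ i) (h2 : i < n) :
    sB n i = Equiv.swap (i : ℤ) ((i : ℤ)+1) * Equiv.swap (-(i:ℤ)) (-((i:ℤ)+1)) := by
  unfold sB
  simp only [if_pos (by omega : i ≤ n), if_neg (by omega : ¬ i = n)]

lemma sB_n {n : ℕ} : sB n n = Equiv.swap (n : ℤ) (-(n:ℤ)) := by
  unfold sB
  simp only [le_refl, if_pos, if_true]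

lemma sB_n_eq_sA2 {n : ℕ} (h : 1 ≤ n) : sB n n = sA2 n n := by
  rw [sB_n, sA2, valB_small (le_refl n), valB_big (by omega : n < n+1)]
  congr 1
  push_cast
  ring

lemma sB_decomp {n i : ℕ} (h1 : 1 ≤ i) (h2 : i < n) :
    sB n i = sA2 n i * sA2 n (2*n - i) := by
  rw [sB_lt h1 h2]
  unfold sA2
  rw [valB_small (by omega : i ≤ n), valB_small (by omega : i+1 ≤ n),
    valB_big (by omega : n < 2*n - i), valB_big (by omega : n < 2*n - i + 1)]
  have e0 : ((i+1:ℕ):ℤ) = (i:ℤ)+1 := by push_cast; ring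
  have e1 : ((2*n-i:ℕ):ℤ) - (2*(n:ℤ)+1) = -((i:ℤ)+1) := by omega
  have e2 : ((2*n-i+1:ℕ):ℤ) - (2*(n:ℤ)+1) = -(i:ℤ) := by omega
  rw [e0, e1, e2, Equiv.swap_comm (-((i:ℤ)+1)) (-(i:ℤ))]

lemma sB_signed {n i : ℕ} (h1 : 1 ≤ i) (h2 : i ≤ n) : IsSignedPerm n (sB n i) := by
  rcases eq_or_lt_of_le h2 with he | hlt
  · subst he
    rw [sB_n]
    constructor
    · intro x
      simp only [Equiv.swap_apply_def]
      split_ifs <;> omega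
    · intro x hx
      rw [lt_abs] at hx
      exact Equiv.swap_apply_of_ne_of_ne (by omega) (by omega)
  · rw [sB_lt h1 hlt]
    constructor
    · intro x
      simp only [Equiv.Perm.mul_apply, Equiv.swap_apply_def]
      split_ifs <;> omega
    · intro x hx
      rw [lt_abs] at hx
      simp only [Equiv.Perm.mul_apply, Equiv.swap_apply_def]
      split_ifs <;> omega

lemma sB_sq {n i : ℕ} (h1 : 1 ≤ i) (h2 : i ≤ n) : sB n i * sB n i = 1 := by
  rcases eq_or_lt_of_le h2 with he | hlt
  · subst he; rw [sB_n]; exact Equiv.swap_mul_self _ _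
  · rw [sB_lt h1 hlt]
    ext x
    simp only [Equiv.Perm.mul_apply, Equiv.swap_apply_def, Equiv.Perm.one_apply]
    split_ifs <;> omega

lemma sB_inv {n i : ℕ} (h1 : 1 ≤ i) (h2 : i ≤ n) : (sB n i)⁻¹ = sB n i :=
  inv_eq_of_mul_eq_one_left (sB_sq h1 h2)

lemma sB_apply_val {n i : ℕ} (h1 : 1 ≤ i) (h2 : i ≤ n) :
    sB n i (valB n i) = valB n (i+1) ∧ sB n i (valB n (i+1)) = valB n i := by
  rcases eq_or_lt_of_le h2 with he | hlt
  · subst he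
    rw [sB_n, valB_small (le_refl _), valB_big (by omega)]
    have he2 : ((i+1:ℕ):ℤ) - (2*(i:ℤ)+1) = -(i:ℤ) := by push_cast; ring
    rw [he2]
    exact ⟨Equiv.swap_apply_left _ _, Equiv.swap_apply_right _ _⟩
  · rw [sB_lt h1 hlt, valB_small (by omega : i ≤ n), valB_small (by omega : i+1 ≤ n)]
    have e0 : ((i+1:ℕ):ℤ) = (i:ℤ)+1 := by push_cast; ring
    rw [e0]
    constructor
    · simp only [Equiv.Perm.mul_apply]
      rw [Equiv.swap_apply_of_ne_of_ne (a := -(i:ℤ)) (by omega) (by omega),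
        Equiv.swap_apply_left]
    · simp only [Equiv.Perm.mul_apply]
      rw [Equiv.swap_apply_of_ne_of_ne (a := -(i:ℤ)) (by omega) (by omega),
        Equiv.swap_apply_right]

/-- mirror symmetry of ascents for signed permutations -/
lemma mirror {n k : ℕ} {w : Equiv.Perm ℤ} (hw : IsSignedPerm n w) (hk1 : 1 ≤ k)
    (hk2 : k + 1 ≤ 2*n) :
    (posB n w (valB n k) < posB n w (valB n (k+1)) ↔
      posB n w (valB n (2*n-k)) < posB n w (valB n (2*n-k+1))) := by
  have e1 : valB n (2*n-k) = -valB n (k+1) := by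
    have : 2*n-k = 2*n+1-(k+1) := by omega
    rw [this]
    exact valB_mirror (by omega) hk2
  have e2 : valB n (2*n-k+1) = -valB n k := by
    have : 2*n-k+1 = 2*n+1-k := by omega
    rw [this]
    exact valB_mirror hk1 (by omega)
  rw [e1, e2, posB_neg hw (valB_mem (by omega) hk2), posB_neg hw (valB_mem hk1 (by omega))]
  omega

noncomputable def bcount (n : ℕ) (w : Equiv.Perm ℤ) : ℕ :=
  ((Finset.Icc (1:ℤ) (n:ℤ)).filter fun x => w⁻¹ x < 0).card

lemma bcount_one {n : ℕ} : bcount n 1 = 0 := by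
  unfold bcount
  rw [Finset.card_eq_zero]
  ext x
  simp only [Finset.mem_filter, Finset.mem_Icc, Finset.notMem_empty, iff_false]
  rintro ⟨⟨h1, _⟩, h2⟩
  simp only [Equiv.Perm.one_apply, inv_one] at h2
  omega

/-- `sB n i` for `i < n` maps `[1, n]` to itself -/
lemma sB_maps_pos {n i : ℕ} (h1 : 1 ≤ i) (h2 : i < n) {x : ℤ} (hx : 1 ≤ x ∧ x ≤ n) :
    1 ≤ sB n i x ∧ sB n i x ≤ n := by
  rw [sB_lt h1 h2]
  simp only [Equiv.Perm.mul_apply, Equiv.swap_apply_def]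
  split_ifs <;> omega

lemma bcount_sB_lt {n i : ℕ} (h1 : 1 ≤ i) (h2 : i < n) (w : Equiv.Perm ℤ) :
    bcount n (sB n i * w) = bcount n w := by
  have hinv : ∀ x : ℤ, (sB n i * w)⁻¹ x = w⁻¹ (sB n i x) := by
    intro x
    rw [mul_inv_rev, Equiv.Perm.mul_apply, sB_inv h1 (by omega)]
  have hss : ∀ x : ℤ, sB n i (sB n i x) = x := by
    intro x
    have : (sB n i * sB n i) x = (1 : Equiv.Perm ℤ) x := by rw [sB_sq h1 (by omega)]
    simpa using this
  unfold bcount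
  apply Finset.card_nbij' (fun x => sB n i x) (fun x => sB n i x)
  · intro x hx
    rw [Finset.mem_coe, Finset.mem_filter, Finset.mem_Icc] at hx ⊢
    obtain ⟨hx1, hx2⟩ := hx
    rw [hinv] at hx2
    have hm := sB_maps_pos h1 h2 (x := x) ⟨hx1.1, hx1.2⟩
    exact ⟨⟨hm.1, hm.2⟩, hx2⟩
  · intro x hx
    rw [Finset.mem_coe, Finset.mem_filter, Finset.mem_Icc] at hx ⊢
    obtain ⟨hx1, hx2⟩ := hx
    have hm := sB_maps_pos h1 h2 (x := x) ⟨hx1.1, hx1.2⟩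
    refine ⟨⟨hm.1, hm.2⟩, ?_⟩
    rw [hinv, hss]
    exact hx2
  · intro x _; exact hss x
  · intro x _; exact hss x

lemma bcount_sB_n {n : ℕ} {w : Equiv.Perm ℤ} (hn : 1 ≤ n) (hw : IsSignedPerm n w) :
    (0 < w⁻¹ (n:ℤ) → bcount n (sB n n * w) = bcount n w + 1) ∧
    (w⁻¹ (n:ℤ) < 0 → bcount n w = bcount n (sB n n * w) + 1) := by
  unfold bcount
  have happ : ∀ x : ℤ, (sB n n * w)⁻¹ x = w⁻¹ (sB n n x) := by
    intro x
    rw [mul_inv_rev, Equiv.Perm.mul_apply, sB_inv hn (le_refl n)]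
  have hother : ∀ x : ℤ, x ≠ (n:ℤ) → x ≠ -(n:ℤ) → sB n n x = x := by
    intro x hx1 hx2
    rw [sB_n]
    exact Equiv.swap_apply_of_ne_of_ne hx1 hx2
  have herase : ((Finset.Icc (1:ℤ) (n:ℤ)).filter fun x => (sB n n * w)⁻¹ x < 0).erase (n:ℤ)
      = ((Finset.Icc (1:ℤ) (n:ℤ)).filter fun x => w⁻¹ x < 0).erase (n:ℤ) := by
    ext x
    simp only [Finset.mem_erase, Finset.mem_filter, Finset.mem_Icc]
    constructor
    · rintro ⟨hne, ⟨ha, hb⟩, hc⟩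
      rw [happ, hother x hne (by omega)] at hc
      exact ⟨hne, ⟨ha, hb⟩, hc⟩
    · rintro ⟨hne, ⟨ha, hb⟩, hc⟩
      refine ⟨hne, ⟨ha, hb⟩, ?_⟩
      rw [happ, hother x hne (by omega)]
      exact hc
  have hnmem : (n:ℤ) ∈ Finset.Icc (1:ℤ) (n:ℤ) := by
    rw [Finset.mem_Icc]; omega
  have hval : (sB n n * w)⁻¹ (n:ℤ) = - (w⁻¹ (n:ℤ)) := by
    rw [happ, sB_n, Equiv.swap_apply_left, hw.invP.1]
  constructor
  · intro hpos
    have m1 : (n:ℤ) ∈ (Finset.Icc (1:ℤ) (n:ℤ)).filter fun x => (sB n n * w)⁻¹ x < 0 := by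
      rw [Finset.mem_filter]
      exact ⟨hnmem, by rw [hval]; omega⟩
    have m2 : (n:ℤ) ∉ (Finset.Icc (1:ℤ) (n:ℤ)).filter fun x => w⁻¹ x < 0 := by
      rw [Finset.mem_filter]
      rintro ⟨_, h⟩; omega
    rw [← Finset.insert_erase m1, Finset.card_insert_of_notMem (Finset.notMem_erase _ _),
      herase, Finset.erase_eq_of_notMem m2]
  · intro hneg
    have m1 : (n:ℤ) ∉ (Finset.Icc (1:ℤ) (n:ℤ)).filter fun x => (sB n n * w)⁻¹ x < 0 := by
      rw [Finset.mem_filter]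
      rintro ⟨_, h⟩
      rw [hval] at h; omega
    have m2 : (n:ℤ) ∈ (Finset.Icc (1:ℤ) (n:ℤ)).filter fun x => w⁻¹ x < 0 := by
      rw [Finset.mem_filter]
      exact ⟨hnmem, hneg⟩
    rw [← Finset.insert_erase m2, Finset.card_insert_of_notMem (Finset.notMem_erase _ _),
      ← herase, Finset.erase_eq_of_notMem m1]

end DemAux


namespace DemAux

lemma posB_valB_ne {n : ℕ} {u : Equiv.Perm ℤ} (hu : IsA n u) {k m : ℕ} (hk1 : 1 ≤ k)
    (hk2 : k ≤ 2*n) (hm1 : 1 ≤ m) (hm2 : m ≤ 2*n) (h : k ≠ m) :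
    posB n u (valB n k) ≠ posB n u (valB n m) := by
  intro he
  have := posB_inj hu (valB_mem hk1 hk2) (valB_mem hm1 hm2) he
  exact valB_ne hk1 hk2 hm1 hm2 h this

lemma ascent_n_iff {n : ℕ} {w : Equiv.Perm ℤ} (hw : IsSignedPerm n w) (hn : 1 ≤ n) :
    (posB n w (valB n n) < posB n w (valB n (n+1)) ↔ 0 < w⁻¹ (n:ℤ)) := by
  have hmem : (n:ℤ) ∈ Pn n := by rw [mem_Pn]; omega
  have e1 : valB n (n+1) = -(n:ℤ) := by
    rw [valB_big (by omega)]; push_cast; ring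
  rw [valB_small (le_refl n), e1, posB_neg hw hmem]
  unfold posB
  have hz : w⁻¹ (n:ℤ) ∈ Pn n := hw.isA.inv.mem hmem
  rw [mem_Pn] at hz
  unfold ordVal
  split_ifs <;> omega

lemma DB_step {n i : ℕ} {w : Equiv.Perm ℤ} (hw : IsSignedPerm n w) (h1 : 1 ≤ i)
    (h2 : i ≤ n) :
    (posB n w (valB n i) < posB n w (valB n (i+1)) →
      invA n (sB n i * w) + bcount n (sB n i * w) = invA n w + bcount n w + 2) ∧
    (posB n w (valB n (i+1)) < posB n w (valB n i) →
      invA n w + bcount n w = invA n (sB n i * w) + bcount n (sB n i * w) + 2) := by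
  rcases eq_or_lt_of_le h2 with he | hlt
  · -- i = n
    subst he
    have hn : 1 ≤ i := h1
    have hsb : sB i i = sA2' i i := by rw [sB_n_eq_sA2 hn, sA2_eq]
    have hstep := invA_step hw.isA hn (by omega : i + 1 ≤ 2*i)
    have hbc := bcount_sB_n hn hw
    have hasc := ascent_n_iff hw hn
    have hzne : w⁻¹ (i:ℤ) ≠ 0 := by
      have : w⁻¹ (i:ℤ) ∈ Pn i := hw.isA.inv.mem (by rw [mem_Pn]; omega)
      rw [mem_Pn] at this
      exact this.1
    constructor
    · intro hc
      have hpos : 0 < w⁻¹ (i:ℤ) := hasc.1 hc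
      rw [hsb]
      rw [hstep.1 hc]
      have := hbc.1 hpos
      rw [hsb] at this
      omega
    · intro hc
      have hneg : w⁻¹ (i:ℤ) < 0 := by
        rcases lt_trichotomy (w⁻¹ (i:ℤ)) 0 with h | h | h
        · exact h
        · exact absurd h hzne
        · have := hasc.2 h; omega
      rw [hsb]
      rw [hstep.2 hc]
      have := hbc.2 hneg
      rw [hsb] at this
      omega
  · -- i < n
    have hk2a : 1 ≤ 2*n - i := by omega
    have hk2b : (2*n - i) + 1 ≤ 2*n := by omega
    have hmir := mirror hw h1 (by omega : i + 1 ≤ 2*n)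
    have hstep1 := invA_step hw.isA hk2a hk2b
    set w₁ := sA2' n (2*n-i) * w with hw₁
    have hw₁IsA : IsA n w₁ := (sA2'_isA hk2a hk2b).mul hw.isA
    -- positions of valB i, valB (i+1) unchanged in w₁
    have hfix : ∀ m : ℕ, 1 ≤ m → m ≤ n → sA2' n (2*n-i) (valB n m) = valB n m := by
      intro m hm1 hm2
      apply sA2'_apply_other
      · rw [valB_small hm2, valB_big (by omega : n < 2*n-i)]
        omega
      · rw [valB_small hm2, valB_big (by omega : n < 2*n-i+1)]
        omega
    have hp1 : posB n w₁ (valB n i) = posB n w (valB n i) := by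
      rw [hw₁, posB_mul, sA2'_inv, hfix i h1 (by omega)]
    have hp2 : posB n w₁ (valB n (i+1)) = posB n w (valB n (i+1)) := by
      rw [hw₁, posB_mul, sA2'_inv, hfix (i+1) (by omega) (by omega)]
    have hstep2 := invA_step hw₁IsA h1 (by omega : i + 1 ≤ 2*n)
    have hprod : sA2' n i * w₁ = sB n i * w := by
      rw [hw₁, ← mul_assoc, ← sA2_eq, ← sA2_eq, ← sB_decomp h1 hlt]
    have hbc : bcount n (sB n i * w) = bcount n w := bcount_sB_lt h1 hlt w
    have hmir2 : 2*n - i + 1 = 2*n - i + 1 := rfl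
    constructor
    · intro hc
      have hc2 : posB n w (valB n (2*n-i)) < posB n w (valB n (2*n-i+1)) := hmir.1 hc
      have e1 : invA n w₁ = invA n w + 1 := hstep1.1 hc2
      have hc3 : posB n w₁ (valB n i) < posB n w₁ (valB n (i+1)) := by
        rw [hp1, hp2]; exact hc
      have e2 : invA n (sA2' n i * w₁) = invA n w₁ + 1 := hstep2.1 hc3
      rw [hprod] at e2
      rw [hbc]
      omega
    · intro hc
      have hc2 : posB n w (valB n (2*n-i+1)) < posB n w (valB n (2*n-i)) := by
        have hne1 := posB_valB_ne hw.isA hk2a (by omega) (by omega) hk2b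
          (by omega : 2*n-i ≠ 2*n-i+1)
        have : ¬ (posB n w (valB n i) < posB n w (valB n (i+1))) := by omega
        have := (not_iff_not.2 hmir).1 this
        omega
      have e1 : invA n w = invA n w₁ + 1 := hstep1.2 hc2
      have hc3 : posB n w₁ (valB n (i+1)) < posB n w₁ (valB n i) := by
        rw [hp1, hp2]; exact hc
      have e2 : invA n w₁ = invA n (sA2' n i * w₁) + 1 := hstep2.2 hc3
      rw [hprod] at e2
      rw [hbc]
      omega

lemma signed_descent_exists {n : ℕ} {w : Equiv.Perm ℤ} (hw : IsSignedPerm n w)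
    (hne : w ≠ 1) : ∃ i : ℕ, 1 ≤ i ∧ i ≤ n ∧
      posB n w (valB n (i+1)) < posB n w (valB n i) := by
  obtain ⟨k, hk1, hk2, hdesc⟩ := exists_descent hw.isA hne
  by_cases hkn : k ≤ n
  · exact ⟨k, hk1, hkn, hdesc⟩
  · refine ⟨2*n - k, by omega, by omega, ?_⟩
    have hmir := mirror hw (by omega : 1 ≤ 2*n-k) (by omega : (2*n-k) + 1 ≤ 2*n)
    have he : 2*n - (2*n - k) = k := by omega
    rw [he] at hmir
    have hne1 := posB_valB_ne hw.isA (by omega : 1 ≤ 2*n-k) (by omega) (by omega)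
      (by omega : 2*n-k+1 ≤ 2*n) (by omega : 2*n-k ≠ 2*n-k+1)
    have : ¬ (posB n w (valB n (2*n-k)) < posB n w (valB n (2*n-k+1))) := by
      intro h
      have := hmir.1 h
      omega
    omega

lemma one_signed {n : ℕ} : IsSignedPerm n 1 := ⟨fun i => rfl, fun i _ => rfl⟩

lemma words_B {n : ℕ} : ∀ l : List ℕ, (∀ i ∈ l, 1 ≤ i ∧ i ≤ n) →
    IsSignedPerm n ((l.map (sB n)).prod) ∧
    invA n ((l.map (sB n)).prod) + bcount n ((l.map (sB n)).prod) ≤ 2 * l.length := by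
  intro l
  induction l with
  | nil =>
    intro _
    simp only [List.map_nil, List.prod_nil, List.length_nil]
    exact ⟨one_signed, by rw [invA_one, bcount_one]⟩
  | cons i tl ih =>
    intro hval
    have hi := hval i (List.mem_cons_self)
    have htl := ih (fun j hj => hval j (List.mem_cons_of_mem i hj))
    simp only [List.map_cons, List.prod_cons, List.length_cons]
    set r := (tl.map (sB n)).prod with hr
    refine ⟨(sB_signed hi.1 hi.2).mul htl.1, ?_⟩
    have hstep := DB_step htl.1 hi.1 hi.2
    have hne : posB n r (valB n i) ≠ posB n r (valB n (i+1)) :=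
      posB_valB_ne htl.1.isA hi.1 (by omega) (by omega) (by omega) (by omega)
    rcases lt_or_gt_of_ne hne with hc | hc
    · have := hstep.1 hc; omega
    · have := hstep.2 hc; omega

lemma words_of_DB {n : ℕ} : ∀ c : ℕ, ∀ w : Equiv.Perm ℤ, IsSignedPerm n w →
    invA n w + bcount n w = c →
    ∃ l : List ℕ, 2 * l.length = c ∧ (∀ i ∈ l, 1 ≤ i ∧ i ≤ n) ∧
      (l.map (sB n)).prod = w := by
  intro c
  induction c using Nat.strong_induction_on with
  | _ c ih =>
    intro w hw hc
    rcases Nat.eq_zero_or_pos c with h0 | hpos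
    · subst h0
      have h1 : invA n w = 0 := by omega
      have := invA_zero_eq_one hw.isA h1
      exact ⟨[], rfl, by simp, by simp [this]⟩
    · have hne : w ≠ 1 := by
        intro h
        rw [h, invA_one, bcount_one] at hc
        omega
      obtain ⟨i, hi1, hi2, hdesc⟩ := signed_descent_exists hw hne
      have hstep := (DB_step hw hi1 hi2).2 hdesc
      set w' := sB n i * w with hw'
      have hw'S : IsSignedPerm n w' := (sB_signed hi1 hi2).mul hw
      obtain ⟨l, hl1, hl2, hl3⟩ := ih (c - 2) (by omega) w' hw'S (by omega)
      refine ⟨i :: l, by simp; omega, ?_, ?_⟩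
      · intro j hj
        rcases List.mem_cons.1 hj with h | h
        · subst h; exact ⟨hi1, hi2⟩
        · exact hl2 j h
      · simp only [List.map_cons, List.prod_cons, hl3]
        rw [hw', ← mul_assoc, sB_sq hi1 hi2, one_mul]

lemma lengthB_char {n : ℕ} {w : Equiv.Perm ℤ} (hw : IsSignedPerm n w) :
    2 * lengthB n w = invA n w + bcount n w := by
  obtain ⟨l, hl1, hl2, hl3⟩ := words_of_DB (invA n w + bcount n w) w hw rfl
  have hmem : l.length ∈ {k | ∃ l : List ℕ, l.length = k ∧
      (∀ i ∈ l, 1 ≤ i ∧ i ≤ n) ∧ (l.map (sB n)).prod = w} := ⟨l, rfl, hl2, hl3⟩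
  have h1 : lengthB n w ≤ l.length := Nat.sInf_le hmem
  have h2 : invA n w + bcount n w ≤ 2 * lengthB n w := by
    obtain ⟨l', hl1', hl2', hl3'⟩ := Nat.sInf_mem (⟨l.length, hmem⟩ : Set.Nonempty _)
    have := (words_B l' hl2').2
    rw [hl3'] at this
    unfold lengthB
    rw [← hl1']
    exact this
  omega

/-- the `B`-side descent criterion -/
lemma lengthB_lt_iff {n i : ℕ} {u : Equiv.Perm ℤ} (hu : IsSignedPerm n u) (h1 : 1 ≤ i)
    (h2 : i ≤ n) :
    lengthB n u < lengthB n (sB n i * u) ↔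
      posB n u (valB n i) < posB n u (valB n (i+1)) := by
  have hS : IsSignedPerm n (sB n i * u) := (sB_signed h1 h2).mul hu
  have e1 := lengthB_char hu
  have e2 := lengthB_char hS
  have hstep := DB_step hu h1 h2
  have hne : posB n u (valB n i) ≠ posB n u (valB n (i+1)) :=
    posB_valB_ne hu.isA h1 (by omega) (by omega) (by omega) (by omega)
  constructor
  · intro h
    rcases lt_or_gt_of_ne hne with hc | hc
    · exact hc
    · have := hstep.2 hc; omega
  · intro hc
    have := hstep.1 hc; omega

end DemAux


namespace DemAux

lemma fix_small {n i m : ℕ} (hi : i < n) (hm1 : 1 ≤ m) (hm2 : m ≤ n) :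
    sA2' n (2*n-i) (valB n m) = valB n m := by
  apply sA2'_apply_other
  · rw [valB_small hm2, valB_big (by omega : n < 2*n-i)]
    omega
  · rw [valB_small hm2, valB_big (by omega : n < 2*n-i+1)]
    omega

end DemAux


open DemAux

/-- for signed permutations `w, v ∈ B_n`,
`w ⋆_B v = fold (unfold w ⋆_A unfold v)`; in particular
`unfold w ⋆_A unfold v` lies in the image of `unfold`, i.e. is again a signed
permutation.  Here `⋆_B` (resp. `⋆_A`) is the Demazure product of `B_n`
(resp. of `S_{2n}`), each encoded as an arbitrary associative product with
unit `1` satisfying the defining rule on the respective simple generators. -/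
theorem demazure_fold_unfold
    (n : ℕ) (w v : Equiv.Perm ℤ) (hw : IsSignedPerm n w) (hv : IsSignedPerm n v)
    (starB : Equiv.Perm ℤ → Equiv.Perm ℤ → Equiv.Perm ℤ)
    (hassocB : ∀ a b c, starB (starB a b) c = starB a (starB b c))
    (hunitB : ∀ a, starB 1 a = a)
    (hgenB : ∀ i, 1 ≤ i → i ≤ n → ∀ u,
      starB (sB n i) u = if lengthB n u < lengthB n (sB n i * u) then sB n i * u else u)
    (starA : Equiv.Perm ℤ → Equiv.Perm ℤ → Equiv.Perm ℤ)
    (hassocA : ∀ a b c, starA (starA a b) c = starA a (starA b c))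
    (hunitA : ∀ a, starA 1 a = a)
    (hgenA : ∀ k, 1 ≤ k → k + 1 ≤ 2 * n → ∀ u,
      starA (sA2 n k) u = if lengthA2 n u < lengthA2 n (sA2 n k * u) then sA2 n k * u else u) :
    starB w v = starA w v ∧ IsSignedPerm n (starA w v) := by
  suffices H : ∀ c : ℕ, ∀ w : Equiv.Perm ℤ, IsSignedPerm n w →
      invA n w + bcount n w = c →
      starB w v = starA w v ∧ IsSignedPerm n (starA w v) from H _ w hw rfl
  intro c
  induction c using Nat.strong_induction_on with
  | _ c ih =>
  intro w hw hc
  by_cases hne : w = 1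
  · subst hne
    rw [hunitB, hunitA]
    exact ⟨rfl, hv⟩
  · obtain ⟨i, hi1, hi2, hdesc⟩ := signed_descent_exists hw hne
    have hstep := (DB_step hw hi1 hi2).2 hdesc
    set w' := sB n i * w with hww
    have hw'S : IsSignedPerm n w' := (sB_signed hi1 hi2).mul hw
    have hsbv := sB_apply_val hi1 hi2
    have hp1 : posB n w' (valB n i) = posB n w (valB n (i+1)) := by
      rw [hww, posB_mul, sB_inv hi1 hi2, hsbv.1]
    have hp2 : posB n w' (valB n (i+1)) = posB n w (valB n i) := by
      rw [hww, posB_mul, sB_inv hi1 hi2, hsbv.2]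
    have haw' : posB n w' (valB n i) < posB n w' (valB n (i+1)) := by
      rw [hp1, hp2]; exact hdesc
    have hwrec : sB n i * w' = w := by
      rw [hww, ← mul_assoc, sB_sq hi1 hi2, one_mul]
    have hlenB : lengthB n w' < lengthB n (sB n i * w') :=
      (lengthB_lt_iff hw'S hi1 hi2).2 haw'
    have hstarB1 : starB (sB n i) w' = w := by
      rw [hgenB i hi1 hi2 w', if_pos hlenB, hwrec]
    have hBassoc : starB w v = starB (sB n i) (starB w' v) := by
      rw [← hstarB1, hassocB]
    obtain ⟨hIH1, hIH2⟩ := ih (c-2) (by omega) w' hw'S (by omega)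
    obtain ⟨u, hu⟩ : ∃ u, starA w' v = u := ⟨_, rfl⟩
    rw [hu] at hIH1 hIH2
    have huS : IsSignedPerm n u := hIH2
    rw [hIH1] at hBassoc
    by_cases hin : i = n
    · -- i = n
      have hn1 : 1 ≤ n := hin ▸ hi1
      have hb : i + 1 ≤ 2*n := by omega
      have hsA : sB n i = sA2 n i := by rw [hin]; exact sB_n_eq_sA2 hn1
      have hlenA : lengthA2 n w' < lengthA2 n (sA2 n i * w') :=
        (lengthA2_lt_iff hw'S.isA hi1 hb).2 haw'
      have hstarA1 : starA (sA2 n i) w' = w := by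
        rw [hgenA i hi1 hb w', if_pos hlenA, ← hsA, hwrec]
      have hAassoc : starA w v = starA (sA2 n i) u := by
        rw [← hstarA1, hassocA, hu]
      rw [hBassoc, hAassoc]
      by_cases hcu : posB n u (valB n i) < posB n u (valB n (i+1))
      · have hBgen : starB (sB n i) u = sB n i * u := by
          rw [hgenB i hi1 hi2 u, if_pos ((lengthB_lt_iff huS hi1 hi2).2 hcu)]
        have hAgen : starA (sA2 n i) u = sA2 n i * u := by
          rw [hgenA i hi1 hb u, if_pos ((lengthA2_lt_iff huS.isA hi1 hb).2 hcu)]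
        rw [hBgen, hAgen, ← hsA]
        exact ⟨rfl, (sB_signed hi1 hi2).mul huS⟩
      · have hBgen : starB (sB n i) u = u := by
          rw [hgenB i hi1 hi2 u, if_neg (fun hlt =>
            hcu ((lengthB_lt_iff huS hi1 hi2).1 hlt))]
        have hAgen : starA (sA2 n i) u = u := by
          rw [hgenA i hi1 hb u, if_neg (fun hlt =>
            hcu ((lengthA2_lt_iff huS.isA hi1 hb).1 hlt))]
        rw [hBgen, hAgen]
        exact ⟨rfl, huS⟩
    · -- i < n
      have hlt : i < n := lt_of_le_of_ne hi2 hin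
      have hk2a : 1 ≤ 2*n - i := by omega
      have hk2b : (2*n - i) + 1 ≤ 2*n := by omega
      have hasc2 : posB n w' (valB n (2*n-i)) < posB n w' (valB n (2*n-i+1)) :=
        (mirror hw'S hi1 (by omega)).1 haw'
      have hstarA1 : starA (sA2 n (2*n-i)) w' = sA2 n (2*n-i) * w' := by
        rw [hgenA (2*n-i) hk2a hk2b w',
          if_pos ((lengthA2_lt_iff hw'S.isA hk2a hk2b).2 hasc2)]
      have hw₁IsA : IsA n (sA2 n (2*n-i) * w') := by
        rw [sA2_eq]; exact (sA2'_isA hk2a hk2b).mul hw'S.isA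
      have hq1 : posB n (sA2 n (2*n-i) * w') (valB n i) = posB n w' (valB n i) := by
        rw [sA2_eq, posB_mul, sA2'_inv, fix_small hlt (by omega) (by omega)]
      have hq2 : posB n (sA2 n (2*n-i) * w') (valB n (i+1)) = posB n w' (valB n (i+1)) := by
        rw [sA2_eq, posB_mul, sA2'_inv, fix_small hlt (by omega) (by omega)]
      have hasc3 : posB n (sA2 n (2*n-i) * w') (valB n i) <
          posB n (sA2 n (2*n-i) * w') (valB n (i+1)) := by
        rw [hq1, hq2]; exact haw'
      have hprod : sA2 n i * (sA2 n (2*n-i) * w') = w := by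
        rw [← mul_assoc, ← sB_decomp hi1 hlt, hwrec]
      have hstarA2 : starA (sA2 n i) (sA2 n (2*n-i) * w') = w := by
        rw [hgenA i hi1 (by omega) _,
          if_pos ((lengthA2_lt_iff hw₁IsA hi1 (by omega)).2 hasc3), hprod]
      have hAassoc : starA w v = starA (sA2 n i) (starA (sA2 n (2*n-i)) u) := by
        rw [← hstarA2, hassocA, ← hstarA1, hassocA, hu]
      rw [hBassoc, hAassoc]
      by_cases hcu : posB n u (valB n i) < posB n u (valB n (i+1))
      · have hcu2 : posB n u (valB n (2*n-i)) < posB n u (valB n (2*n-i+1)) :=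
          (mirror huS hi1 (by omega)).1 hcu
        have hA1 : starA (sA2 n (2*n-i)) u = sA2 n (2*n-i) * u := by
          rw [hgenA (2*n-i) hk2a hk2b u,
            if_pos ((lengthA2_lt_iff huS.isA hk2a hk2b).2 hcu2)]
        have hu₁IsA : IsA n (sA2 n (2*n-i) * u) := by
          rw [sA2_eq]; exact (sA2'_isA hk2a hk2b).mul huS.isA
        have hr1 : posB n (sA2 n (2*n-i) * u) (valB n i) = posB n u (valB n i) := by
          rw [sA2_eq, posB_mul, sA2'_inv, fix_small hlt (by omega) (by omega)]
        have hr2 : posB n (sA2 n (2*n-i) * u) (valB n (i+1)) = posB n u (valB n (i+1)) := by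
          rw [sA2_eq, posB_mul, sA2'_inv, fix_small hlt (by omega) (by omega)]
        have hcu3 : posB n (sA2 n (2*n-i) * u) (valB n i) <
            posB n (sA2 n (2*n-i) * u) (valB n (i+1)) := by
          rw [hr1, hr2]; exact hcu
        have hA2 : starA (sA2 n i) (sA2 n (2*n-i) * u) = sB n i * u := by
          rw [hgenA i hi1 (by omega) _,
            if_pos ((lengthA2_lt_iff hu₁IsA hi1 (by omega)).2 hcu3),
            ← mul_assoc, ← sB_decomp hi1 hlt]
        have hB1 : starB (sB n i) u = sB n i * u := by
          rw [hgenB i hi1 hi2 u, if_pos ((lengthB_lt_iff huS hi1 hi2).2 hcu)]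
        rw [hA1, hA2, hB1]
        exact ⟨rfl, (sB_signed hi1 hi2).mul huS⟩
      · have hcu2 : ¬ posB n u (valB n (2*n-i)) < posB n u (valB n (2*n-i+1)) :=
          fun h => hcu ((mirror huS hi1 (by omega)).2 h)
        have hA1 : starA (sA2 n (2*n-i)) u = u := by
          rw [hgenA (2*n-i) hk2a hk2b u, if_neg (fun hlt =>
            hcu2 ((lengthA2_lt_iff huS.isA hk2a hk2b).1 hlt))]
        have hA2 : starA (sA2 n i) u = u := by
          rw [hgenA i hi1 (by omega) u, if_neg (fun hlt =>
            hcu ((lengthA2_lt_iff huS.isA hi1 (by omega)).1 hlt))]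
        have hB1 : starB (sB n i) u = u := by
          rw [hgenB i hi1 hi2 u, if_neg (fun hlt =>
            hcu ((lengthB_lt_iff huS hi1 hi2).1 hlt))]
        rw [hA1, hA2, hB1]
        exact ⟨rfl, huS⟩
end
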